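/- arXiv:1101.5830 — 6 statements merged into one kernel-verified Lean document; each statement's English description precedes it below -/
import Mathlib

section
/- For all integers r ≥ 2 and l ≥ 1 there is an integer n₀ = n₀(r,l) such that every r-graph H on n > n₀ vertices with at least n^(r − 1/l^(r−1)) edges contains a K^(r)(l), i.e., there exist pairwise disjoint l-element vertex sets V₁, …, V_r such that every r-element set containing exactly one vertex from each Vᵢ is an edge of H. -/
open Finset

lemma castSubLe (m n : ℕ) : (m:ℝ) - n ≤ ((m - n : ℕ):ℝ) := by
  rcases le_total n m with h | h
  · rw [Nat.cast_sub h]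
  · rw [Nat.sub_eq_zero_of_le h]
    simpa using sub_nonpos.mpr ((Nat.cast_le (α := ℝ)).mpr h)

lemma natLeNineteenTenthsPow (l : ℕ) : (l:ℝ) ≤ (19/10)^l := by
  have key : ∀ k : ℕ, 1 ≤ k → (k:ℝ) + 1 ≤ (19/10)^(k+1) := by
    intro k hk
    induction k, hk using Nat.le_induction with
    | base => norm_num
    | succ m hm ih =>
      have h1 : (1:ℝ) ≤ (m:ℝ) := by exact_mod_cast hm
      push_cast
      calc (m:ℝ) + 1 + 1 ≤ (19/10) * ((m:ℝ) + 1) := by linarith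
        _ ≤ (19/10) * (19/10)^(m+1) := by nlinarith [ih]
        _ = (19/10)^(m+1+1) := by ring
  match l with
  | 0 => norm_num
  | 1 => norm_num
  | (k+1) =>
    push_cast
    rcases Nat.eq_zero_or_pos k with rfl | hk
    · norm_num
    · exact key k hk

def Erd (l R : ℕ) : Prop :=
  ∃ n₀ : ℕ, ∀ n : ℕ, n₀ < n →
    ∀ (V : Type) (_ : Fintype V) (_ : DecidableEq V), Fintype.card V = n →
    ∀ H : Finset (Finset V), (∀ e ∈ H, e.card = R) →
    (if R = 1 then (l:ℝ) else (n : ℝ) ^ ((R : ℝ) - 1 / (l : ℝ) ^ (R - 1))) ≤ (H.card : ℝ) →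
    ∃ f : Fin R → Finset V, (∀ i, (f i).card = l) ∧
      (Pairwise fun i j => Disjoint (f i) (f j)) ∧
      ∀ e : Finset V, e.card = R → (∀ i, (e ∩ f i).card = 1) → e ∈ H

lemma erd_base (l : ℕ) (hl : 1 ≤ l) : Erd l 1 := by
  refine ⟨0, fun n hn V _ _ hcard H hunif hm => ?_⟩
  rw [if_pos rfl] at hm
  have hlH : l ≤ H.card := by exact_mod_cast hm
  classical
  set W : Finset V := univ.filter (fun v => {v} ∈ H) with hW
  have hHW : H ⊆ W.image (fun v => {v}) := by
    intro e he
    obtain ⟨v, rfl⟩ := Finset.card_eq_one.mp (hunif e he)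
    exact Finset.mem_image.mpr ⟨v, by simp [hW, he], rfl⟩
  have hWcard : l ≤ W.card :=
    le_trans hlH (le_trans (Finset.card_le_card hHW) (Finset.card_image_le))
  obtain ⟨V₁, hV₁W, hV₁card⟩ := Finset.exists_subset_card_eq hWcard
  refine ⟨fun _ => V₁, fun _ => hV₁card, ?_, ?_⟩
  · intro i j hij
    exact absurd (Subsingleton.elim i j) hij
  · intro e he hcap
    obtain ⟨v, rfl⟩ := Finset.card_eq_one.mp he
    have h1 := hcap 0
    have hv : v ∈ V₁ := by
      obtain ⟨w, hw⟩ := Finset.card_eq_one.mp h1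
      have : w ∈ {v} ∩ V₁ := hw ▸ Finset.mem_singleton_self w
      rw [Finset.mem_inter, Finset.mem_singleton] at this
      exact this.1 ▸ this.2
    have := hV₁W hv
    rw [hW, Finset.mem_filter] at this
    exact this.2

set_option maxHeartbeats 2000000 in
lemma erd_step (l r : ℕ) (hl : 1 ≤ l) (hr : 1 ≤ r) (IH : Erd l r) : Erd l (r+1) := by
  classical
  obtain ⟨n₁, hIH⟩ := IH
  refine ⟨max n₁ (100*l^2 + r + l + 2), fun n hn V instF instD hcard H hunif hm => ?_⟩
  have hn1 : n₁ < n := lt_of_le_of_lt (le_max_left _ _) hn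
  have hnbig : 100*l^2 + r + l + 2 ≤ n := le_of_lt (lt_of_le_of_lt (le_max_right _ _) hn)
  rw [if_neg (by omega)] at hm
  set lk : Finset V → Finset V := fun S => univ.filter (fun v => v ∉ S ∧ insert v S ∈ H) with hlk
  set 𝒮 : Finset (Finset V) := powersetCard r (univ : Finset V) with h𝒮
  set ℒ : Finset (Finset V) := powersetCard l (univ : Finset V) with hℒ
  set c : Finset V → ℕ := fun L => (𝒮.filter (fun S => L ⊆ lk S)).card with hc
  -- counting fact 1 : degree sum
  have F1 : ∑ S ∈ 𝒮, (lk S).card = (r+1) * H.card := by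
    have hv : ∀ v : V, (𝒮.filter (fun S => v ∉ S ∧ insert v S ∈ H)).card
        = (H.filter (fun e => v ∈ e)).card := by
      intro v
      refine Finset.card_bij' (fun S _ => insert v S) (fun e _ => e.erase v)
        ?_ ?_ ?_ ?_
      · intro S hS
        rw [Finset.mem_filter] at hS ⊢
        exact ⟨hS.2.2, Finset.mem_insert_self v S⟩
      · intro e he
        rw [Finset.mem_filter] at he ⊢
        refine ⟨?_, Finset.notMem_erase v e, ?_⟩
        · rw [h𝒮, Finset.mem_powersetCard]
          refine ⟨Finset.subset_univ _, ?_⟩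
          rw [Finset.card_erase_of_mem he.2, hunif e he.1]
          omega
        · rw [Finset.insert_erase he.2]; exact he.1
      · intro S hS
        rw [Finset.mem_filter] at hS
        exact Finset.erase_insert hS.2.1
      · intro e he
        rw [Finset.mem_filter] at he
        exact Finset.insert_erase he.2
    calc ∑ S ∈ 𝒮, (lk S).card
        = ∑ S ∈ 𝒮, ∑ v ∈ univ, (if v ∉ S ∧ insert v S ∈ H then 1 else 0) := by
          refine Finset.sum_congr rfl fun S _ => ?_
          rw [hlk]; exact Finset.card_filter _ _
      _ = ∑ v ∈ univ, ∑ S ∈ 𝒮, (if v ∉ S ∧ insert v S ∈ H then 1 else 0) := Finset.sum_comm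
      _ = ∑ v ∈ univ, (H.filter (fun e => v ∈ e)).card := by
          refine Finset.sum_congr rfl fun v _ => ?_
          rw [← hv v]; exact (Finset.card_filter _ _).symm
      _ = ∑ v ∈ univ, ∑ e ∈ H, (if v ∈ e then 1 else 0) := by
          refine Finset.sum_congr rfl fun v _ => ?_
          exact Finset.card_filter _ _
      _ = ∑ e ∈ H, ∑ v ∈ univ, (if v ∈ e then 1 else 0) := Finset.sum_comm
      _ = ∑ e ∈ H, e.card := by
          refine Finset.sum_congr rfl fun e _ => ?_
          rw [Finset.sum_ite_mem, Finset.univ_inter, Finset.sum_const, smul_eq_mul, mul_one]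
      _ = (r+1) * H.card := by
          rw [Finset.sum_congr rfl (fun e he => hunif e he), Finset.sum_const, smul_eq_mul,
            mul_comm]
  -- counting fact 2 : double count of (S, L) incidences
  have F2 : ∑ L ∈ ℒ, c L = ∑ S ∈ 𝒮, ((lk S).card).choose l := by
    have h1 : ∀ L, c L = ∑ S ∈ 𝒮, (if L ⊆ lk S then 1 else 0) := fun L => Finset.card_filter _ _
    rw [Finset.sum_congr rfl (fun L _ => h1 L), Finset.sum_comm]
    refine Finset.sum_congr rfl fun S _ => ?_
    rw [← Finset.card_filter]
    rw [show ℒ.filter (fun L => L ⊆ lk S) = powersetCard l (lk S) by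
      ext L
      simp only [hℒ, Finset.mem_filter, Finset.mem_powersetCard, Finset.subset_univ, true_and]
      tauto]
    rw [Finset.card_powersetCard]
  -- pigeonhole
  have hLne : ℒ.Nonempty := by
    rw [hℒ, Finset.powersetCard_nonempty, Finset.card_univ, hcard]; omega
  obtain ⟨L₀, hL₀, hmax⟩ := Finset.exists_max_image ℒ c hLne
  have F3 : ∑ L ∈ ℒ, c L ≤ n.choose l * c L₀ := by
    have h2 := Finset.sum_le_card_nsmul ℒ c (c L₀) (fun L hL => hmax L hL)
    rw [hℒ, Finset.card_powersetCard, Finset.card_univ, hcard, smul_eq_mul] at h2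
    exact h2
  -- the analytic heart : c L₀ is large
  have hth : (if r = 1 then (l:ℝ) else (n:ℝ) ^ ((r:ℝ) - 1/(l:ℝ)^(r-1))) ≤ (c L₀ : ℝ) := by
    have hNdef : 𝒮.card = n.choose r := by
      rw [h𝒮, Finset.card_powersetCard, Finset.card_univ, hcard]
    set N : ℕ := 𝒮.card with hN
    have hn0 : 0 < n := by omega
    have hx1 : (1:ℝ) ≤ (n:ℝ) := by exact_mod_cast hn0
    have hx0 : (0:ℝ) < (n:ℝ) := by linarith
    have hl1 : (1:ℝ) ≤ (l:ℝ) := by exact_mod_cast hl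
    set ε : ℝ := 1/(l:ℝ)^r with hε
    have hε0 : 0 < ε := by rw [hε]; positivity
    have hε1 : ε ≤ 1 := by
      rw [hε]
      rw [div_le_one (by positivity)]
      exact one_le_pow₀ hl1
    set u : ℝ := (n:ℝ) ^ ((r:ℝ) + 1 - ε) with hu
    have hm' : u ≤ (H.card : ℝ) := by
      rw [hu, hε]
      have h1 : r + 1 - 1 = r := by omega
      rw [h1] at hm
      have h2 : ((r+1:ℕ):ℝ) = (r:ℝ) + 1 := by push_cast; ring
      rw [h2] at hm
      exact hm
    have hu0 : 0 < u := Real.rpow_pos_of_pos hx0 _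
    have hA : 2*u ≤ (((r+1) * H.card : ℕ) : ℝ) := by
      push_cast
      have h2 : (2:ℝ) ≤ (r:ℝ)+1 := by
        have : (1:ℝ) ≤ (r:ℝ) := by exact_mod_cast hr
        linarith
      nlinarith [hm', hu0, Nat.cast_nonneg (α := ℝ) H.card]
    have hNnn : (0:ℝ) ≤ (N:ℝ) := Nat.cast_nonneg N
    have hNx : (N:ℝ) ≤ (n:ℝ)^(r:ℕ) := by
      rw [hNdef]
      exact_mod_cast Nat.choose_le_pow n r
    have h1ε : 10*((l:ℝ)-1) ≤ (n:ℝ)^((1:ℝ)-ε) := by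
      rcases eq_or_lt_of_le hl with h1 | h2
      · have hps : (l:ℝ) = 1 := by exact_mod_cast h1.symm
        rw [hps]
        simpa using (Real.rpow_pos_of_pos hx0 ((1:ℝ)-ε)).le
      · have hl2 : 2 ≤ l := h2
        have hl2' : (2:ℝ) ≤ (l:ℝ) := by exact_mod_cast hl2
        have hεhalf : ε ≤ 1/2 := by
          rw [hε]
          have hp2 : (2:ℝ) ≤ (l:ℝ)^r :=
            le_trans hl2' (le_self_pow₀ (by linarith) (by omega))
          exact one_div_le_one_div_of_le (by norm_num) hp2
        have hsq : 10*(l:ℝ) ≤ (n:ℝ)^((1:ℝ)/2) := by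
          have h100 : (10*(l:ℝ))^2 ≤ (n:ℝ) := by
            have hn' : (100*l^2 : ℕ) ≤ n := by omega
            have hn'' := (Nat.cast_le (α := ℝ)).mpr hn'
            push_cast at hn''
            nlinarith [hn'']
          have hsq' := (Real.le_sqrt (by positivity) hx0.le).mpr h100
          rwa [Real.sqrt_eq_rpow] at hsq'
        calc 10*((l:ℝ)-1) ≤ 10*(l:ℝ) := by linarith
          _ ≤ (n:ℝ)^((1:ℝ)/2) := hsq
          _ ≤ (n:ℝ)^((1:ℝ)-ε) := Real.rpow_le_rpow_of_exponent_le hx1 (by linarith)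
    have h10 : 10*((l:ℝ)-1) * (N:ℝ) ≤ u := by
      have step : 10*((l:ℝ)-1) * (N:ℝ) ≤ (n:ℝ)^((1:ℝ)-ε) * (n:ℝ)^(r:ℕ) :=
        mul_le_mul h1ε hNx hNnn (Real.rpow_nonneg hx0.le _)
      refine le_trans step (le_of_eq ?_)
      rw [hu, ← Real.rpow_natCast (n:ℝ) r, ← Real.rpow_add hx0]
      congr 1
      ring
    set g : Finset V → ℕ := fun S => (lk S).card - (l-1) with hg
    have hsumg : (19:ℝ)/10 * u ≤ ∑ S ∈ 𝒮, (g S : ℝ) := by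
      have hcast : ((l-1:ℕ):ℝ) = (l:ℝ)-1 := by
        rw [Nat.cast_sub hl]; norm_num
      have hlow : ∀ S ∈ 𝒮, ((lk S).card : ℝ) - ((l:ℝ)-1) ≤ (g S : ℝ) := by
        intro S _
        have h1 := castSubLe (lk S).card (l-1)
        rw [hcast] at h1
        exact h1
      have hsum1 : ∑ S ∈ 𝒮, (((lk S).card : ℝ) - ((l:ℝ)-1)) ≤ ∑ S ∈ 𝒮, (g S:ℝ) :=
        Finset.sum_le_sum hlow
      rw [Finset.sum_sub_distrib, Finset.sum_const, nsmul_eq_mul] at hsum1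
      have hsc : ∑ S ∈ 𝒮, ((lk S).card : ℝ) = (((r+1) * H.card : ℕ) : ℝ) := by
        exact_mod_cast congrArg (Nat.cast (R := ℝ)) F1
      rw [hsc, ← hN] at hsum1
      linarith [hA, h10, hsum1]
    have hgnn : ∀ S ∈ 𝒮, (0:ℝ) ≤ (g S:ℝ) := fun S _ => Nat.cast_nonneg _
    have hl' : l - 1 + 1 = l := Nat.succ_pred_eq_of_pos hl
    have hpm := pow_sum_le_card_mul_sum_pow (s := 𝒮) (f := fun S => (g S:ℝ)) hgnn (l-1)
    rw [hl'] at hpm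
    have hpc : ∀ S ∈ 𝒮, (g S:ℝ)^l ≤ ((l.factorial * ((lk S).card).choose l : ℕ):ℝ) := by
      intro S _
      have h2 := Nat.pow_sub_le_descFactorial (lk S).card l
      rw [Nat.descFactorial_eq_factorial_mul_choose] at h2
      have h3 : (lk S).card + 1 - l = (lk S).card - (l-1) := by omega
      rw [h3] at h2
      exact_mod_cast h2
    have hsum2 : ∑ S ∈ 𝒮, (g S:ℝ)^l
        ≤ (l.factorial : ℝ) * ∑ S ∈ 𝒮, (((lk S).card).choose l : ℝ) := by
      calc ∑ S ∈ 𝒮, (g S:ℝ)^l ≤ ∑ S ∈ 𝒮, ((l.factorial * ((lk S).card).choose l : ℕ):ℝ) :=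
            Finset.sum_le_sum hpc
        _ = _ := by push_cast; rw [Finset.mul_sum]
    have hsum3 : ∑ S ∈ 𝒮, (((lk S).card).choose l : ℝ) ≤ (n.choose l : ℝ) * (c L₀ : ℝ) := by
      rw [F2] at F3
      exact_mod_cast F3
    have hdesc : (l.factorial : ℝ) * (n.choose l : ℝ) ≤ (n:ℝ)^(l:ℕ) := by
      have hd := Nat.descFactorial_le_pow n l
      rw [Nat.descFactorial_eq_factorial_mul_choose] at hd
      exact_mod_cast hd
    have hcnn : (0:ℝ) ≤ (c L₀ : ℝ) := Nat.cast_nonneg _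
    have hchain : ((19:ℝ)/10 * u)^l ≤ (n:ℝ)^(r*(l-1)) * ((n:ℝ)^(l:ℕ) * (c L₀:ℝ)) := by
      calc ((19:ℝ)/10 * u)^l ≤ (∑ S ∈ 𝒮, (g S:ℝ))^l := by
            apply pow_le_pow_left₀ (by positivity) hsumg
        _ ≤ (N:ℝ)^(l-1) * ∑ S ∈ 𝒮, (g S:ℝ)^l := hpm
        _ ≤ (N:ℝ)^(l-1) * ((l.factorial : ℝ) * ((n.choose l:ℝ) * (c L₀:ℝ))) := by
            apply mul_le_mul_of_nonneg_left ?_ (pow_nonneg hNnn _)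
            calc ∑ S ∈ 𝒮, (g S:ℝ)^l
                ≤ (l.factorial : ℝ) * ∑ S ∈ 𝒮, (((lk S).card).choose l : ℝ) := hsum2
              _ ≤ (l.factorial : ℝ) * ((n.choose l:ℝ) * (c L₀:ℝ)) :=
                  mul_le_mul_of_nonneg_left hsum3 (by positivity)
        _ ≤ ((n:ℝ)^(r:ℕ))^(l-1) * ((n:ℝ)^(l:ℕ) * (c L₀:ℝ)) := by
            apply mul_le_mul (pow_le_pow_left₀ hNnn hNx _) ?_ (by positivity) (by positivity)
            rw [← mul_assoc]
            exact mul_le_mul_of_nonneg_right hdesc hcnn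
        _ = (n:ℝ)^(r*(l-1)) * ((n:ℝ)^(l:ℕ) * (c L₀:ℝ)) := by rw [← pow_mul]
    set δ : ℝ := (r:ℝ) - 1/(l:ℝ)^(r-1) with hδ
    have hth1 : (if r = 1 then (l:ℝ) else (n:ℝ)^δ) ≤ (19/10:ℝ)^l * (n:ℝ)^δ := by
      have h19 : (1:ℝ) ≤ (19/10:ℝ)^l := one_le_pow₀ (by norm_num)
      by_cases h : r = 1
      · rw [if_pos h]
        have hδ0 : δ = 0 := by rw [hδ, h]; norm_num
        rw [hδ0, Real.rpow_zero, mul_one]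
        exact natLeNineteenTenthsPow l
      · rw [if_neg h]
        have hrpnn : (0:ℝ) ≤ (n:ℝ)^δ := Real.rpow_nonneg hx0.le δ
        nlinarith [hrpnn, h19]
    have hid : (19/10:ℝ)^l * (n:ℝ)^δ * ((n:ℝ)^(r*(l-1)) * (n:ℝ)^(l:ℕ)) = ((19:ℝ)/10 * u)^l := by
      rw [mul_pow, hu]
      rw [← Real.rpow_natCast ((n:ℝ)^((r:ℝ)+1-ε)) l, ← Real.rpow_mul hx0.le]
      rw [← Real.rpow_natCast (n:ℝ) (r*(l-1)), ← Real.rpow_natCast (n:ℝ) l,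
        ← Real.rpow_add hx0]
      rw [mul_assoc, ← Real.rpow_add hx0]
      congr 1
      congr 1
      rw [hδ, hε]
      have hc1 : ((r*(l-1):ℕ):ℝ) = (r:ℝ)*((l:ℝ)-1) := by
        push_cast [Nat.cast_sub hl]; ring
      rw [hc1]
      have hlr : (l:ℝ)^r = (l:ℝ)^(r-1) * l := by
        rw [← pow_succ]
        congr 1
        omega
      have hl0 : (l:ℝ)^(r-1) ≠ 0 := by positivity
      have hl0' : (l:ℝ) ≠ 0 := by positivity
      have hkey : (1/(l:ℝ)^r) * (l:ℝ) = 1/(l:ℝ)^(r-1) := by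
        rw [hlr]
        field_simp
      linear_combination hkey
    have hpos : (0:ℝ) < (n:ℝ)^(r*(l-1)) * (n:ℝ)^(l:ℕ) := by positivity
    have hfin : (if r = 1 then (l:ℝ) else (n:ℝ)^δ) * ((n:ℝ)^(r*(l-1)) * (n:ℝ)^(l:ℕ))
        ≤ (c L₀:ℝ) * ((n:ℝ)^(r*(l-1)) * (n:ℝ)^(l:ℕ)) := by
      calc (if r = 1 then (l:ℝ) else (n:ℝ)^δ) * ((n:ℝ)^(r*(l-1)) * (n:ℝ)^(l:ℕ))
          ≤ (19/10:ℝ)^l * (n:ℝ)^δ * ((n:ℝ)^(r*(l-1)) * (n:ℝ)^(l:ℕ)) :=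
            mul_le_mul_of_nonneg_right hth1 hpos.le
        _ = ((19:ℝ)/10 * u)^l := hid
        _ ≤ (n:ℝ)^(r*(l-1)) * ((n:ℝ)^(l:ℕ) * (c L₀:ℝ)) := hchain
        _ = (c L₀:ℝ) * ((n:ℝ)^(r*(l-1)) * (n:ℝ)^(l:ℕ)) := by ring
    exact le_of_mul_le_mul_right hfin hpos
  -- apply the induction hypothesis
  set H'' : Finset (Finset V) := 𝒮.filter (fun S => L₀ ⊆ lk S) with hH''
  have hH''unif : ∀ e ∈ H'', e.card = r := by
    intro e he
    rw [hH'', Finset.mem_filter, h𝒮, Finset.mem_powersetCard] at he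
    exact he.1.2
  obtain ⟨gg, hgc, hgd, hgcomp⟩ := hIH n hn1 V instF instD hcard H'' hH''unif hth
  -- all classes avoid L₀
  have hdisjL : ∀ i : Fin r, Disjoint (gg i) L₀ := by
    intro i
    rw [Finset.disjoint_left]
    intro u hu huL
    have hne : ∀ j : Fin r, (gg j).Nonempty := by
      intro j; rw [← Finset.card_pos, hgc j]; omega
    set pk : Fin r → V := fun j => if j = i then u else (hne j).choose with hpk
    have hpkmem : ∀ j, pk j ∈ gg j := by
      intro j
      show (if j = i then u else (hne j).choose) ∈ gg j
      by_cases h : j = i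
      · rw [if_pos h, h]; exact hu
      · rw [if_neg h]; exact (hne j).choose_spec
    have hinj : Function.Injective pk := by
      intro a b hab
      by_contra hne'
      exact Finset.disjoint_left.mp (hgd hne') (hpkmem a) (hab ▸ hpkmem b)
    set e : Finset V := univ.image pk with he
    have hecard : e.card = r := by
      rw [he, Finset.card_image_of_injective _ hinj, Finset.card_univ, Fintype.card_fin]
    have hint : ∀ j : Fin r, e ∩ gg j = {pk j} := by
      intro j
      ext w
      simp only [he, Finset.mem_inter, Finset.mem_image, Finset.mem_univ, true_and,
        Finset.mem_singleton]
      constructor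
      · rintro ⟨⟨a, rfl⟩, hw⟩
        by_contra hne'
        have : a ≠ j := fun h => hne' (by rw [h])
        exact Finset.disjoint_left.mp (hgd this) (hpkmem a) hw
      · rintro rfl
        exact ⟨⟨j, rfl⟩, hpkmem j⟩
    have hmem : e ∈ H'' := hgcomp e hecard (fun j => by rw [hint j, Finset.card_singleton])
    rw [hH'', Finset.mem_filter] at hmem
    have hulk : u ∈ lk e := hmem.2 huL
    rw [hlk, Finset.mem_filter] at hulk
    exact hulk.2.1 (Finset.mem_image.mpr ⟨i, Finset.mem_univ i, if_pos rfl⟩)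
  -- assemble
  have hL₀card : L₀.card = l := by
    rw [hℒ, Finset.mem_powersetCard] at hL₀
    exact hL₀.2
  refine ⟨Fin.snoc gg L₀, ?_, ?_, ?_⟩
  · intro i
    refine Fin.lastCases ?_ ?_ i
    · rw [Fin.snoc_last]; exact hL₀card
    · intro j; rw [Fin.snoc_castSucc]; exact hgc j
  · intro i j
    refine Fin.lastCases ?_ (fun i' => ?_) i <;> refine Fin.lastCases ?_ (fun j' => ?_) j <;>
      intro hij
    · exact absurd rfl hij
    · rw [Fin.snoc_last, Fin.snoc_castSucc]
      exact (hdisjL j').symm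
    · rw [Fin.snoc_last, Fin.snoc_castSucc]
      exact hdisjL i'
    · rw [Fin.snoc_castSucc, Fin.snoc_castSucc]
      exact hgd (fun h => hij (congrArg Fin.castSucc h))
  · intro e he hcap
    have hlast := hcap (Fin.last r)
    rw [Fin.snoc_last] at hlast
    obtain ⟨v, hv⟩ := Finset.card_eq_one.mp hlast
    have hve : v ∈ e ∧ v ∈ L₀ :=
      Finset.mem_inter.mp (hv ▸ Finset.mem_singleton_self v)
    have he'card : (e.erase v).card = r := by
      rw [Finset.card_erase_of_mem hve.1, he]
      omega
    have hint' : ∀ j : Fin r, ((e.erase v) ∩ gg j).card = 1 := by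
      intro j
      have h := hcap (Fin.castSucc j)
      rw [Fin.snoc_castSucc] at h
      have hveq : (e.erase v) ∩ gg j = e ∩ gg j := by
        ext w
        simp only [Finset.mem_inter, Finset.mem_erase]
        constructor
        · rintro ⟨⟨-, hw⟩, hw2⟩; exact ⟨hw, hw2⟩
        · rintro ⟨hw, hw2⟩
          refine ⟨⟨fun hwv => ?_, hw⟩, hw2⟩
          exact Finset.disjoint_left.mp (hdisjL j) hw2 (hwv ▸ hve.2)
      rw [hveq]; exact h
    have hmem := hgcomp (e.erase v) he'card hint'
    rw [hH'', Finset.mem_filter] at hmem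
    have hvlk : v ∈ lk (e.erase v) := hmem.2 hve.2
    rw [hlk, Finset.mem_filter] at hvlk
    have hins : insert v (e.erase v) = e := Finset.insert_erase hve.1
    rw [← hins]
    exact hvlk.2.2

lemma erd_all (l : ℕ) (hl : 1 ≤ l) : ∀ r : ℕ, 1 ≤ r → Erd l r := by
  intro r hr
  induction r with
  | zero => omega
  | succ k ih =>
    rcases Nat.eq_zero_or_pos k with rfl | hk
    · exact erd_base l hl
    · exact erd_step l k hl hk (ih hk)

/-- Erdős' theorem: for all `r ≥ 2` and `l ≥ 1` there is `n₀` such that every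
`r`-graph on `n > n₀` vertices with at least `n^(r − 1/l^(r−1))` edges contains a
complete balanced `r`-partite `r`-graph `K^(r)(l)`. -/
theorem stmt5 (r l : ℕ) (hr : 2 ≤ r) (hl : 1 ≤ l) :
    ∃ n₀ : ℕ, ∀ n : ℕ, n₀ < n →
    ∀ (V : Type) [Fintype V] [DecidableEq V], Fintype.card V = n →
    ∀ H : Finset (Finset V), (∀ e ∈ H, e.card = r) →
    (n : ℝ) ^ ((r : ℝ) - 1 / (l : ℝ) ^ (r - 1)) ≤ (H.card : ℝ) →
    ∃ f : Fin r → Finset V, (∀ i, (f i).card = l) ∧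
      (Pairwise fun i j => Disjoint (f i) (f j)) ∧
      ∀ e : Finset V, e.card = r → (∀ i, (e ∩ f i).card = 1) → e ∈ H := by
  obtain ⟨n₀, h⟩ := erd_all l hl r (by omega)
  refine ⟨n₀, fun n hn V instF instD hcard H hunif hm => ?_⟩
  exact h n hn V instF instD hcard H hunif (by rw [if_neg (by omega)]; exact hm)
end

section
/- There exists η₀ > 0 such that for every η ∈ (0, η₀) there exists n₀ = n₀(η) with the following property: every 3-graph H on n > n₀ vertices with at least η·C(n,3) edges contains a K^(3)(t) with t = ⌊η·√(log₂ n)⌋, i.e., there exist pairwise disjoint t-element vertex sets V₁, V₂, V₃ such that every triple with one vertex in each Vᵢ is an edge of H. -/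
open Finset

lemma nat_pows (t : ℕ) : 4 * t + 4 ≤ 32 ^ (t + 1) := by
  induction t with
  | zero => norm_num
  | succ k ih =>
    have h32 : (32:ℕ) ^ (k+1) ≥ 32 := Nat.le_self_pow (by omega) 32
    calc 4 * (k+1) + 4 = (4 * k + 4) + 4 := by ring
    _ ≤ 32 ^ (k+1) + 4 := by omega
    _ ≤ 32 * 32 ^ (k+1) := by omega
    _ = 32 ^ (k+2) := by ring

variable {V : Type} [Fintype V] [DecidableEq V]

/-- Double counting / pigeonhole: some `t`-set is contained in many of the `f i`. -/
lemma lemA {ι : Type} (P : Finset ι) (f : ι → Finset V) (t D : ℕ)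
    (hD : ∀ i ∈ P, D ≤ (f i).card) (htn : t ≤ Fintype.card V) :
    ∃ T : Finset V, T.card = t ∧
      P.card * D.choose t ≤
        (Fintype.card V).choose t * (P.filter (fun i => T ⊆ f i)).card := by
  classical
  set s : Finset (Finset V) := Finset.univ.powersetCard t with hs
  have hsne : s.Nonempty := by
    rw [hs, powersetCard_nonempty]
    simpa using htn
  have hkey : ∑ i ∈ P, ((f i).card.choose t) =
      ∑ T ∈ s, (P.filter (fun i => T ⊆ f i)).card := by
    have h1 : ∀ i ∈ P, ((f i).card.choose t)
        = ∑ T ∈ s, (if T ⊆ f i then 1 else 0) := by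
      intro i _
      rw [← Finset.card_powersetCard t (f i)]
      have : (f i).powersetCard t = s.filter (fun T => T ⊆ f i) := by
        ext T
        simp [hs, Finset.mem_powersetCard, and_comm]
      rw [this, Finset.card_filter]
    rw [Finset.sum_congr rfl h1, Finset.sum_comm]
    refine Finset.sum_congr rfl fun T _ => ?_
    rw [Finset.card_filter]
  have hlow : P.card * D.choose t ≤ ∑ i ∈ P, ((f i).card.choose t) := by
    calc P.card * D.choose t = ∑ _i ∈ P, D.choose t := by rw [Finset.sum_const, smul_eq_mul]
    _ ≤ _ := Finset.sum_le_sum fun i hi => Nat.choose_le_choose t (hD i hi)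
  obtain ⟨T, hTs, hTmax⟩ := s.exists_max_image (fun T => (P.filter (fun i => T ⊆ f i)).card) hsne
  refine ⟨T, (Finset.mem_powersetCard.mp hTs).2, ?_⟩
  have hup : ∑ T' ∈ s, (P.filter (fun i => T' ⊆ f i)).card ≤
      s.card * (P.filter (fun i => T ⊆ f i)).card := by
    calc ∑ T' ∈ s, (P.filter (fun i => T' ⊆ f i)).card
        ≤ ∑ _T' ∈ s, (P.filter (fun i => T ⊆ f i)).card :=
          Finset.sum_le_sum fun T' hT' => hTmax T' hT'
    _ = s.card * _ := by rw [Finset.sum_const, smul_eq_mul]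
  have hscard : s.card = (Fintype.card V).choose t := by
    rw [hs, Finset.card_powersetCard, Finset.card_univ]
  calc P.card * D.choose t ≤ ∑ i ∈ P, ((f i).card.choose t) := hlow
  _ = _ := hkey
  _ ≤ s.card * _ := hup
  _ = _ := by rw [hscard]

/-- Degree sum over (r)-sets for an (r+1)-uniform hypergraph. -/
lemma degsum (r : ℕ) (G : Finset (Finset V)) (hr : ∀ e ∈ G, e.card = r + 1) :
    ∑ p ∈ Finset.univ.powersetCard r,
      (Finset.univ.filter (fun z => z ∉ p ∧ insert z p ∈ G)).card = (r + 1) * G.card := by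
  classical
  have h1 : ∀ p ∈ Finset.univ.powersetCard r,
      (Finset.univ.filter (fun z => z ∉ p ∧ insert z p ∈ G)).card
      = ∑ z : V, (if z ∉ p ∧ insert z p ∈ G then 1 else 0) := by
    intro p _; rw [Finset.card_filter]
  rw [Finset.sum_congr rfl h1, Finset.sum_comm]
  have h2 : ∀ z : V, ∑ p ∈ Finset.univ.powersetCard r,
      (if z ∉ p ∧ insert z p ∈ G then 1 else 0) = (G.filter (fun e => z ∈ e)).card := by
    intro z
    rw [← Finset.card_filter]
    refine Finset.card_bij' (fun p _ => insert z p) (fun e _ => e.erase z) ?_ ?_ ?_ ?_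
    · intro p hp
      simp only [Finset.mem_filter, Finset.mem_powersetCard] at hp
      simp [Finset.mem_filter, hp.2.2]
    · intro e he
      simp only [Finset.mem_filter] at he
      simp only [Finset.mem_filter, Finset.mem_powersetCard]
      refine ⟨⟨Finset.subset_univ _, ?_⟩, Finset.notMem_erase _ _, ?_⟩
      · rw [Finset.card_erase_of_mem he.2, hr e he.1]; omega
      · rw [Finset.insert_erase he.2]; exact he.1
    · intro p hp
      simp only [Finset.mem_filter] at hp
      exact Finset.erase_insert hp.2.1
    · intro e he
      simp only [Finset.mem_filter] at he
      exact Finset.insert_erase he.2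
  rw [Finset.sum_congr rfl fun z _ => h2 z]
  have h3 : ∀ z : V, (G.filter (fun e => z ∈ e)).card = ∑ e ∈ G, (if z ∈ e then 1 else 0) := by
    intro z; rw [Finset.card_filter]
  rw [Finset.sum_congr rfl fun z _ => h3 z, Finset.sum_comm]
  have h4 : ∀ e ∈ G, (∑ z : V, if z ∈ e then 1 else 0) = r + 1 := by
    intro e he
    rw [← Finset.card_filter]
    have : Finset.univ.filter (fun z => z ∈ e) = e := by ext z; simp
    rw [this, hr e he]
  rw [Finset.sum_congr rfl h4, Finset.sum_const, smul_eq_mul, mul_comm]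

lemma thresh {ι : Type} (s : Finset ι) (g : ι → ℕ) (M c : ℕ) (hM : ∀ i ∈ s, g i ≤ M) :
    ∑ i ∈ s, g i ≤ (s.filter (fun i => c ≤ g i)).card * M + s.card * c := by
  classical
  have h := Finset.sum_filter_add_sum_filter_not s (fun i => c ≤ g i) g
  have h1 : ∑ i ∈ s.filter (fun i => c ≤ g i), g i ≤ (s.filter (fun i => c ≤ g i)).card * M := by
    have := Finset.sum_le_card_nsmul (s.filter (fun i => c ≤ g i)) g M
      (fun i hi => hM i (Finset.mem_filter.mp hi).1)
    simpa [smul_eq_mul] using this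
  have h2 : ∑ i ∈ s.filter (fun i => ¬ c ≤ g i), g i ≤ s.card * c := by
    have hb := Finset.sum_le_card_nsmul (s.filter (fun i => ¬ c ≤ g i)) g c
      (fun i hi => le_of_lt (by have := (Finset.mem_filter.mp hi).2; omega))
    have hc : (s.filter (fun i => ¬ c ≤ g i)).card ≤ s.card := Finset.card_filter_le _ _
    calc ∑ i ∈ s.filter (fun i => ¬ c ≤ g i), g i
        ≤ (s.filter (fun i => ¬ c ≤ g i)).card * c := by simpa [smul_eq_mul] using hb
    _ ≤ s.card * c := Nat.mul_le_mul_right c hc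
  omega

set_option maxHeartbeats 3000000 in
lemma key (η : ℝ) (hη : 0 < η) (hη1 : η ≤ 1) (t : ℕ) (V : Type) [Fintype V] [DecidableEq V]
    (H : Finset (Finset V)) (h3 : ∀ e ∈ H, e.card = 3)
    (hE : η * ((Fintype.card V).choose 3 : ℝ) ≤ (H.card : ℝ))
    (hbig : (32 / η) ^ ((t + 1) * (2 * t + 1)) * 32 ^ (t + 1) ≤ (Fintype.card V : ℝ)) :
    ∃ V₁ V₂ V₃ : Finset V, V₁.card = t ∧ V₂.card = t ∧ V₃.card = t ∧
      Disjoint V₁ V₂ ∧ Disjoint V₁ V₃ ∧ Disjoint V₂ V₃ ∧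
      ∀ x ∈ V₁, ∀ y ∈ V₂, ∀ z ∈ V₃, ({x, y, z} : Finset V) ∈ H := by
  classical
  set n := Fintype.card V with hn
  set nR : ℝ := (n : ℝ) with hnR
  set E := (t + 1) * (2 * t + 1) with hEdef
  set c : ℝ := (η / 16) ^ (t + 1) with hc
  -- basic positivity facts
  have hbase : (1:ℝ) ≤ 32 / η := by
    rw [le_div_iff₀ hη]; linarith
  have hP2 : (4 * t + 4 : ℝ) ≤ 32 ^ (t + 1) := by
    calc (4 * t + 4 : ℝ) = ((4 * t + 4 : ℕ) : ℝ) := by push_cast; ring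
    _ ≤ ((32 ^ (t+1) : ℕ) : ℝ) := by exact_mod_cast Nat.cast_le.mpr (nat_pows t)
    _ = _ := by push_cast; ring
  have h32pow : (32:ℝ) ≤ 32 ^ (t + 1) := by
    calc (32:ℝ) = 32 ^ 1 := by norm_num
    _ ≤ 32 ^ (t+1) := by apply pow_le_pow_right₀ (by norm_num); omega
  have hP1 : (32:ℝ) ^ (t + 1) ≤ (η / 32) ^ E * nR := by
    have h1 : (η / 32) ^ E * ((32 / η) ^ E * 32 ^ (t+1)) = 32 ^ (t+1) := by
      rw [← mul_assoc, ← mul_pow]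
      have : η / 32 * (32 / η) = 1 := by field_simp
      rw [this, one_pow, one_mul]
    calc (32:ℝ) ^ (t+1) = (η / 32) ^ E * ((32 / η) ^ E * 32 ^ (t+1)) := h1.symm
    _ ≤ (η / 32) ^ E * nR := by
        apply mul_le_mul_of_nonneg_left hbig (by positivity)
  have hfrac1 : (η / 32 : ℝ) ≤ 1 := by linarith
  have hfrac0 : (0:ℝ) < η / 32 := by positivity
  have hc16 : (0:ℝ) < η / 16 := by positivity
  have hc16' : (η / 16 : ℝ) ≤ 1 := by linarith
  have hc0 : 0 < c := by positivity
  have hc1 : c ≤ 1 := by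
    rw [hc]; exact pow_le_one₀ (le_of_lt hc16) hc16'
  have hE1 : t + 1 ≤ E := by rw [hEdef]; nlinarith [t.zero_le]
  have hcE : (η / 32) ^ E ≤ c := by
    rw [hc]
    calc (η / 32) ^ E ≤ (η / 32) ^ (t + 1) :=
      pow_le_pow_of_le_one (le_of_lt hfrac0) hfrac1 hE1
    _ ≤ (η / 16) ^ (t + 1) := by
        apply pow_le_pow_left₀ (le_of_lt hfrac0)
        apply div_le_div_of_nonneg_left (le_of_lt hη) (by norm_num) (by norm_num)
  -- P3 : 32^(t+1) ≤ c * n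
  have hP3 : (32:ℝ) ^ (t + 1) ≤ c * nR := by
    calc (32:ℝ)^(t+1) ≤ (η/32)^E * nR := hP1
    _ ≤ c * nR := by
        apply mul_le_mul_of_nonneg_right hcE (by positivity)
  have hnn : (0:ℝ) ≤ nR := by rw [hnR]; positivity
  have hcn_le : c * nR ≤ nR := by
    have h := mul_le_mul_of_nonneg_right hc1 hnn
    linarith only [h]
  have hnRpos : (0:ℝ) < nR :=
    lt_of_lt_of_le (lt_of_lt_of_le (by positivity) (le_trans h32pow hP3)) hcn_le
  have hn32 : (32:ℝ) ≤ nR := le_trans h32pow (le_trans hP3 hcn_le)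
  -- P4 : 32^(t+1) ≤ (c/2)^(2t+1) * n
  have hP4 : (32:ℝ) ^ (t + 1) ≤ (c / 2) ^ (2 * t + 1) * nR := by
    have hcd : (η / 32) ^ E ≤ (c / 2) ^ (2 * t + 1) := by
      have e1 : (c / 2 : ℝ) ≥ (η / 32) ^ (t + 1) := by
        rw [hc]
        have : ((η:ℝ) / 16) ^ (t+1) = 2 ^ (t+1) * (η / 32) ^ (t+1) := by
          rw [← mul_pow]; congr 1; field_simp; ring
        rw [this]
        have h2 : (2:ℝ) ≤ 2 ^ (t+1) := by
          calc (2:ℝ) = 2^1 := by norm_num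
          _ ≤ 2^(t+1) := by apply pow_le_pow_right₀ (by norm_num); omega
        nlinarith [pow_pos hfrac0 (t+1)]
      calc (η/32)^E = ((η/32)^(t+1))^(2*t+1) := by
            rw [← pow_mul, hEdef]
      _ ≤ (c/2)^(2*t+1) := by
            apply pow_le_pow_left₀ (by positivity) e1
    calc (32:ℝ)^(t+1) ≤ (η/32)^E * nR := hP1
    _ ≤ (c/2)^(2*t+1) * nR := mul_le_mul_of_nonneg_right hcd (le_of_lt hnRpos)
  -- P5 : 16 ≤ η * n
  have hP5 : (1024:ℝ) ≤ η * nR := by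
    have h1 : (32/η) ≤ (32/η)^E := le_self_pow₀ hbase (by rw [hEdef]; positivity)
    have hstep : (32/η) * 32 ≤ (32/η)^E * 32^(t+1) :=
      mul_le_mul h1 h32pow (by norm_num) (by positivity)
    have h2 : η * ((32/η) * 32) = 1024 := by field_simp; ring
    have h3 : η * ((32/η) * 32) ≤ η * ((32/η)^E * 32^(t+1)) :=
      mul_le_mul_of_nonneg_left hstep (le_of_lt hη)
    have h4 : η * ((32/η)^E * 32^(t+1)) ≤ η * nR :=
      mul_le_mul_of_nonneg_left hbig (le_of_lt hη)
    linarith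
  -- P6 : t ≤ η * n / 16
  have hP6 : (t:ℝ) ≤ η * nR / 16 := by
    have h1 : c * nR ≤ (η/16) * nR := by
      apply mul_le_mul_of_nonneg_right _ (le_of_lt hnRpos)
      rw [hc]
      calc ((η:ℝ)/16)^(t+1) ≤ (η/16)^1 := pow_le_pow_of_le_one (le_of_lt hc16) hc16' (by omega)
      _ = η/16 := pow_one _
    have h2 : (t:ℝ) ≤ 32^(t+1) := by linarith [hP2]
    calc (t:ℝ) ≤ 32^(t+1) := h2
    _ ≤ c * nR := hP3
    _ ≤ (η/16) * nR := h1
    _ = η * nR / 16 := by ring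
  -- P7 : 2t ≤ n as naturals
  have hP7R : (2 * t : ℝ) ≤ nR := by
    calc (2*t:ℝ) ≤ 4*t+4 := by linarith
    _ ≤ 32^(t+1) := hP2
    _ ≤ c * nR := hP3
    _ ≤ 1 * nR := mul_le_mul_of_nonneg_right hc1 (le_of_lt hnRpos)
    _ = nR := one_mul _
  have hP7 : 2 * t ≤ n := by rw [hnR] at hP7R; exact_mod_cast hP7R
  have htn : t ≤ n := by omega
  -- Step 1: pair degrees
  set N : Finset V → Finset V :=
    fun p => Finset.univ.filter (fun z => z ∉ p ∧ insert z p ∈ H) with hN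
  set pairs := (Finset.univ : Finset V).powersetCard 2 with hpairs
  have hdeg1 : ∑ p ∈ pairs, (N p).card = 3 * H.card := degsum 2 H (fun e he => h3 e he)
  have hNcard : ∀ p : Finset V, (N p).card ≤ n := fun p =>
    le_trans (Finset.card_filter_le _ _) (by rw [Finset.card_univ])
  set a := ⌈η * nR / 8⌉₊ with ha
  set B₁ := pairs.filter (fun p => a ≤ (N p).card) with hB₁
  have hthresh1 : 3 * H.card ≤ B₁.card * n + pairs.card * a := by
    rw [← hdeg1]; exact thresh pairs (fun p => (N p).card) n a (fun p _ => hNcard p)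
  have hpairscard : (pairs.card : ℝ) ≤ nR ^ 2 / 2 := by
    rw [hpairs, Finset.card_powersetCard, Finset.card_univ, hnR]
    have h := Nat.choose_le_pow_div (α := ℝ) 2 n
    norm_num [Nat.factorial] at h ⊢
    convert h using 2 <;> norm_num
  have hn32N : 32 ≤ n := by
    rw [hnR] at hn32; exact_mod_cast hn32
  have hchoose3 : nR ^ 3 / 12 ≤ ((n.choose 3 : ℕ) : ℝ) := by
    have h1 := Nat.pow_le_choose (α := ℝ) 3 n
    have he : n + 1 - 3 = n - 2 := by omega
    have h2 : ((n + 1 - 3 : ℕ) : ℝ) = nR - 2 := by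
      rw [he, Nat.cast_sub (by omega), hnR]; norm_num
    rw [h2] at h1
    norm_num [Nat.factorial] at h1
    have hcube : 32 * nR ^ 2 ≤ nR ^ 3 := by
      have h := mul_le_mul_of_nonneg_right hn32 (sq_nonneg nR)
      nlinarith only [h]
    have h3 : nR ^ 3 / 12 ≤ (nR - 2) ^ 3 / 6 := by nlinarith only [hcube, hn32, sq_nonneg nR]
    exact le_trans h3 h1
  have hsum_low : η * nR ^ 3 / 4 ≤ 3 * (H.card : ℝ) := by
    have h1 : η * (nR ^ 3 / 12) ≤ η * (n.choose 3 : ℝ) :=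
      mul_le_mul_of_nonneg_left hchoose3 hη.le
    have e1 : η * nR ^ 3 / 4 = 3 * (η * (nR ^ 3 / 12)) := by ring
    linarith only [hE, h1, e1]
  have haR : (a : ℝ) ≤ η * nR / 8 + 1 := le_of_lt (Nat.ceil_lt_add_one (by positivity))
  have haR' : η * nR / 8 ≤ (a : ℝ) := Nat.le_ceil _
  have hB1n : η * nR ^ 2 / 8 ≤ (B₁.card : ℝ) := by
    have hcast : (3 * H.card : ℝ) ≤ (B₁.card : ℝ) * nR + (pairs.card : ℝ) * a := by
      rw [hnR]; exact_mod_cast hthresh1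
    have h1 : (pairs.card : ℝ) * a ≤ (nR ^ 2 / 2) * (η * nR / 8 + 1) :=
      mul_le_mul hpairscard haR (Nat.cast_nonneg _) (by positivity)
    have h2 : (nR ^ 2 / 2) * (η * nR / 8 + 1) ≤ η * nR ^ 3 / 8 := by
      have h8 := mul_le_mul_of_nonneg_right (show (16:ℝ) ≤ η * nR by linarith only [hP5]) (sq_nonneg nR)
      nlinarith only [h8]
    have h3 : η * nR ^ 3 / 8 ≤ (B₁.card : ℝ) * nR := by linarith only [hsum_low, hcast, h1, h2]
    exact le_of_mul_le_mul_right (by nlinarith only [h3]) hnRpos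
  obtain ⟨T, hTcard, hTle⟩ := lemA B₁ N t a (fun p hp => (Finset.mem_filter.mp hp).2) htn
  set G' := B₁.filter (fun p => T ⊆ N p) with hG'
  set m := G'.card with hm
  have htaN : t ≤ a := by
    have : (t:ℝ) ≤ (a:ℝ) := by linarith [hP6, haR']
    exact_mod_cast this
  have hCa : (η * nR / 16) ^ t / (t.factorial : ℝ) ≤ (a.choose t : ℝ) := by
    have hple := Nat.pow_le_choose (α := ℝ) t a
    have hcast : ((a + 1 - t : ℕ) : ℝ) = (a : ℝ) + 1 - t := by
      rw [Nat.cast_sub (by omega)]; push_cast; ring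
    rw [hcast] at hple
    refine le_trans ?_ hple
    gcongr
    linarith only [haR', hP6]
  have hCn : ((n.choose t : ℕ) : ℝ) ≤ nR ^ t / (t.factorial : ℝ) := by
    rw [hnR]; exact Nat.choose_le_pow_div t n
  have hmlow : c * nR ^ 2 ≤ (m : ℝ) := by
    have hcastT : (B₁.card : ℝ) * (a.choose t : ℝ) ≤ (n.choose t : ℝ) * m := by
      exact_mod_cast hTle
    have hfc : (0:ℝ) < nR ^ t / (t.factorial : ℝ) := by positivity
    have hkey : (η / 8) * (η / 16) ^ t * nR ^ 2 * (nR ^ t / (t.factorial : ℝ))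
        ≤ (m : ℝ) * (nR ^ t / (t.factorial : ℝ)) := by
      calc (η / 8) * (η / 16) ^ t * nR ^ 2 * (nR ^ t / (t.factorial : ℝ))
          = (η * nR ^ 2 / 8) * ((η * nR / 16) ^ t / (t.factorial : ℝ)) := by
            rw [div_pow, div_pow, mul_pow]; ring
      _ ≤ (B₁.card : ℝ) * (a.choose t : ℝ) :=
            mul_le_mul hB1n hCa (by positivity) (Nat.cast_nonneg _)
      _ ≤ (n.choose t : ℝ) * m := hcastT
      _ ≤ (nR ^ t / (t.factorial : ℝ)) * m :=
            mul_le_mul_of_nonneg_right hCn (Nat.cast_nonneg _)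
      _ = (m : ℝ) * (nR ^ t / (t.factorial : ℝ)) := mul_comm _ _
    have h8 : c * nR ^ 2 ≤ (η / 8) * (η / 16) ^ t * nR ^ 2 := by
      have hPn : (0:ℝ) ≤ (η / 16) ^ t * nR ^ 2 := by positivity
      have h := mul_le_mul_of_nonneg_right (show (η/16:ℝ) ≤ η/8 by linarith only [hη]) hPn
      rw [hc, pow_succ]
      nlinarith only [h]
    exact le_trans h8 (le_of_mul_le_mul_right hkey hfc)
  -- Step 2: the graph G'
  have hG'2 : ∀ e ∈ G', e.card = 2 := by
    intro e he
    have h1 : e ∈ pairs := Finset.mem_filter.mp ((Finset.mem_filter.mp he).1) |>.1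
    exact (Finset.mem_powersetCard.mp (by rw [hpairs] at h1; exact h1)).2
  set N₂ : Finset V → Finset V :=
    fun p => Finset.univ.filter (fun z => z ∉ p ∧ insert z p ∈ G') with hN₂
  have hdeg2 : ∑ p ∈ (Finset.univ : Finset V).powersetCard 1, (N₂ p).card = 2 * m :=
    degsum 1 G' (fun e he => hG'2 e he)
  set b := ⌈c * nR⌉₊ with hb
  set B₂ := ((Finset.univ : Finset V).powersetCard 1).filter (fun p => b ≤ (N₂ p).card) with hB₂
  have hthresh2 : 2 * m ≤ B₂.card * n + ((Finset.univ : Finset V).powersetCard 1).card * b := by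
    rw [← hdeg2]
    exact thresh _ _ n b (fun p _ =>
      le_trans (Finset.card_filter_le _ _) (by rw [Finset.card_univ]))
  have hsingcard : (((Finset.univ : Finset V).powersetCard 1).card : ℝ) = nR := by
    rw [Finset.card_powersetCard, Finset.card_univ, Nat.choose_one_right, hnR]
  have hbR : (b : ℝ) ≤ c * nR + 1 := le_of_lt (Nat.ceil_lt_add_one (by positivity))
  have hbR' : c * nR ≤ (b : ℝ) := Nat.le_ceil _
  have h32c : (32:ℝ) ≤ c * nR := le_trans h32pow hP3
  have hmn : 32 * nR ≤ (m : ℝ) := by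
    have h1 := mul_le_mul_of_nonneg_right h32c hnRpos.le
    nlinarith only [h1, hmlow]
  have hB2low : c * nR / 2 ≤ (B₂.card : ℝ) := by
    have hcast : (2 * m : ℝ) ≤ (B₂.card : ℝ) * nR + (((Finset.univ : Finset V).powersetCard 1).card : ℝ) * b := by
      rw [hnR]; exact_mod_cast hthresh2
    rw [hsingcard] at hcast
    have h1 : nR * (b : ℝ) ≤ nR * (c * nR + 1) := mul_le_mul_of_nonneg_left hbR hnRpos.le
    have hB2n : (m : ℝ) / 2 ≤ (B₂.card : ℝ) * nR := by nlinarith only [hcast, h1, hmlow, hmn]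
    apply le_of_mul_le_mul_right _ hnRpos
    nlinarith only [hB2n, hmlow]
  obtain ⟨S, hScard, hSle⟩ := lemA B₂ N₂ (2 * t) b (fun p hp => (Finset.mem_filter.mp hp).2) hP7
  set B₂' := B₂.filter (fun p => S ⊆ N₂ p) with hB₂'
  set w := B₂'.card with hw
  have hw1 : 4 * t + 1 ≤ w := by
    have hCnpos : 0 < n.choose (2 * t) := Nat.choose_pos hP7
    have h2tb : (2 * t : ℝ) ≤ c * nR / 2 := by linarith only [hP2, hP3]
    have h2tbN : 2 * t ≤ b := by
      have : (2 * t : ℝ) ≤ (b : ℝ) := by linarith only [hbR', h2tb, h32c]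
      exact_mod_cast this
    have hCb : (c * nR / 2) ^ (2 * t) / (((2 * t).factorial : ℕ) : ℝ) ≤ (b.choose (2 * t) : ℝ) := by
      have hple := Nat.pow_le_choose (α := ℝ) (2 * t) b
      have hcast : ((b + 1 - 2 * t : ℕ) : ℝ) = (b : ℝ) + 1 - 2 * t := by
        rw [Nat.cast_sub (by omega)]; push_cast; ring
      rw [hcast] at hple
      refine le_trans ?_ hple
      gcongr
      linarith only [hbR', h2tb]
    have hCn2 : ((n.choose (2 * t) : ℕ) : ℝ) ≤ nR ^ (2 * t) / (((2 * t).factorial : ℕ) : ℝ) := by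
      rw [hnR]; exact Nat.choose_le_pow_div (2 * t) n
    have hcastS : (B₂.card : ℝ) * (b.choose (2 * t) : ℝ) ≤ (n.choose (2 * t) : ℝ) * w := by
      exact_mod_cast hSle
    set F : ℝ := (((2 * t).factorial : ℕ) : ℝ) with hF
    have hFpos : (0:ℝ) < F := by rw [hF]; positivity
    have hx : (4 * t + 1 : ℝ) ≤ (c / 2) ^ (2 * t + 1) * nR := by linarith only [hP2, hP4]
    have hy := mul_le_mul_of_nonneg_right hx (pow_nonneg hnRpos.le (2 * t))
    have hmid : (4 * t + 1 : ℝ) * (nR ^ (2 * t) / F)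
        ≤ (c * nR / 2) * ((c * nR / 2) ^ (2 * t) / F) := by
      calc (4 * t + 1 : ℝ) * (nR ^ (2 * t) / F) = ((4 * t + 1) * nR ^ (2 * t)) / F := by ring
      _ ≤ ((c / 2) ^ (2 * t + 1) * nR * nR ^ (2 * t)) / F := by
          exact (div_le_div_iff_of_pos_right hFpos).mpr hy
      _ = (c * nR / 2) * ((c * nR / 2) ^ (2 * t) / F) := by
          rw [show (c * nR / 2) = (c / 2) * nR by ring, mul_pow, pow_succ]
          ring
    have hmain : (4 * t + 1 : ℝ) * (n.choose (2 * t) : ℝ) ≤ (n.choose (2 * t) : ℝ) * w := by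
      calc (4 * t + 1 : ℝ) * (n.choose (2 * t) : ℝ)
          ≤ (4 * t + 1 : ℝ) * (nR ^ (2 * t) / F) :=
            mul_le_mul_of_nonneg_left hCn2 (by positivity)
      _ ≤ (c * nR / 2) * ((c * nR / 2) ^ (2 * t) / F) := hmid
      _ ≤ (B₂.card : ℝ) * (b.choose (2 * t) : ℝ) :=
            mul_le_mul hB2low hCb (by positivity) (Nat.cast_nonneg _)
      _ ≤ (n.choose (2 * t) : ℝ) * w := hcastS
    have hCpos : (0:ℝ) < (n.choose (2 * t) : ℝ) := by exact_mod_cast hCnpos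
    have hfin : (4 * t + 1 : ℝ) ≤ (w : ℝ) := by
      have h2 : (n.choose (2 * t) : ℝ) * (4 * t + 1) ≤ (n.choose (2 * t) : ℝ) * (w : ℝ) := by
        linarith only [hmain]
      exact le_of_mul_le_mul_left h2 hCpos
    exact_mod_cast hfin
  -- the common neighborhood W
  have hB₂'1 : ∀ p ∈ B₂', p.card = 1 := by
    intro p hp
    have h1 := (Finset.mem_filter.mp ((Finset.mem_filter.mp hp).1)).1
    exact (Finset.mem_powersetCard.mp h1).2
  set W := B₂'.biUnion (fun p => p) with hW
  have hWcard : W.card = w := by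
    rw [hW, Finset.card_biUnion]
    · rw [hw]
      calc ∑ p ∈ B₂', p.card = ∑ _p ∈ B₂', 1 := Finset.sum_congr rfl (fun p hp => hB₂'1 p hp)
      _ = B₂'.card := by rw [Finset.sum_const, smul_eq_mul, mul_one]
    · intro p hp q hq hpq
      obtain ⟨x, rfl⟩ := Finset.card_eq_one.mp (hB₂'1 p hp)
      obtain ⟨y, rfl⟩ := Finset.card_eq_one.mp (hB₂'1 q hq)
      simp only [Finset.disjoint_singleton]
      intro hxy
      exact hpq (by rw [hxy])
  have hST : t ≤ (S \ T).card := by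
    have h1 := Finset.card_le_card_sdiff_add_card (s := S) (t := T)
    omega
  obtain ⟨V₂, hV₂sub, hV₂card⟩ := Finset.exists_subset_card_eq hST
  have hWT : t ≤ (W \ (T ∪ S)).card := by
    have h1 := Finset.card_le_card_sdiff_add_card (s := W) (t := T ∪ S)
    have h2 := Finset.card_union_le T S
    omega
  obtain ⟨V₃, hV₃sub, hV₃card⟩ := Finset.exists_subset_card_eq hWT
  refine ⟨T, V₂, V₃, hTcard, hV₂card, hV₃card, ?_, ?_, ?_, ?_⟩
  · rw [Finset.disjoint_right]
    intro x hx
    exact (Finset.mem_sdiff.mp (hV₂sub hx)).2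
  · rw [Finset.disjoint_right]
    intro x hx hxT
    exact (Finset.mem_sdiff.mp (hV₃sub hx)).2 (Finset.mem_union_left _ hxT)
  · rw [Finset.disjoint_right]
    intro x hx hxV₂
    exact (Finset.mem_sdiff.mp (hV₃sub hx)).2
      (Finset.mem_union_right _ (Finset.mem_sdiff.mp (hV₂sub hxV₂)).1)
  · intro x hx y hy z hz
    have hzW : z ∈ W := (Finset.mem_sdiff.mp (hV₃sub hz)).1
    rw [hW] at hzW
    obtain ⟨p, hp, hzp⟩ := Finset.mem_biUnion.mp hzW
    obtain ⟨v, rfl⟩ := Finset.card_eq_one.mp (hB₂'1 p hp)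
    obtain rfl : v = z := (Finset.mem_singleton.mp hzp).symm
    have hSN : S ⊆ N₂ {v} := (Finset.mem_filter.mp hp).2
    have hyS : y ∈ S := (Finset.mem_sdiff.mp (hV₂sub hy)).1
    have hyN := hSN hyS
    rw [hN₂] at hyN
    simp only [Finset.mem_filter] at hyN
    have hG'mem : insert y {v} ∈ G' := hyN.2.2
    have hTN : T ⊆ N (insert y {v}) := (Finset.mem_filter.mp hG'mem).2
    have hxN := hTN hx
    rw [hN] at hxN
    simp only [Finset.mem_filter] at hxN
    exact hxN.2.2

/-- For small `η > 0` and `n` large, every 3-graph on `n` vertices with at least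
`η·C(n,3)` edges contains a `K^(3)(t)` with `t = ⌊η·√(log₂ n)⌋`. -/
theorem stmt6 :
    ∃ η₀ : ℝ, 0 < η₀ ∧ ∀ η : ℝ, 0 < η → η < η₀ →
    ∃ n₀ : ℕ, ∀ n : ℕ, n₀ < n →
    ∀ (V : Type) [Fintype V] [DecidableEq V], Fintype.card V = n →
    ∀ H : Finset (Finset V), (∀ e ∈ H, e.card = 3) →
    η * (n.choose 3 : ℝ) ≤ (H.card : ℝ) →
    ∃ V₁ V₂ V₃ : Finset V,
      V₁.card = ⌊η * Real.sqrt (Real.logb 2 n)⌋₊ ∧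
      V₂.card = ⌊η * Real.sqrt (Real.logb 2 n)⌋₊ ∧
      V₃.card = ⌊η * Real.sqrt (Real.logb 2 n)⌋₊ ∧
      Disjoint V₁ V₂ ∧ Disjoint V₁ V₃ ∧ Disjoint V₂ V₃ ∧
      ∀ x ∈ V₁, ∀ y ∈ V₂, ∀ z ∈ V₃, ({x, y, z} : Finset V) ∈ H := by
  refine ⟨1/16, by norm_num, ?_⟩
  intro η hη hη16
  refine ⟨⌈(1024/η)^(8:ℕ)⌉₊, ?_⟩
  intro n hn V _ _ hcard H h3 hE
  subst hcard
  set nR : ℝ := (Fintype.card V : ℝ) with hnR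
  set L : ℝ := Real.logb 2 nR with hLdef
  set t : ℕ := ⌊η * Real.sqrt L⌋₊ with htdef
  -- basic facts
  have h1024 : (1:ℝ) ≤ 1024/η := by
    rw [le_div_iff₀ hη]; linarith
  have hnn : ((1024:ℝ)/η)^(8:ℕ) < nR := by
    have h1 : ((⌈(1024/η)^(8:ℕ)⌉₊ : ℕ) : ℝ) < nR := by
      rw [hnR]; exact_mod_cast hn
    exact lt_of_le_of_lt (Nat.le_ceil _) h1
  have hn1 : (1:ℝ) ≤ nR := le_trans (one_le_pow₀ h1024) hnn.le
  have hnpos : (0:ℝ) < nR := by linarith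
  set Λ : ℝ := Real.log (1024/η) with hΛdef
  have hΛ0 : 0 ≤ Λ := Real.log_nonneg h1024
  have hlogn : 8 * Λ ≤ Real.log nR := by
    calc 8 * Λ = Real.log ((1024/η)^(8:ℕ)) := by
          rw [Real.log_pow]; push_cast; ring
    _ ≤ Real.log nR := Real.log_le_log (by positivity) hnn.le
  have hlog2pos : (0:ℝ) < Real.log 2 := Real.log_pos (by norm_num)
  have hL : L * Real.log 2 = Real.log nR := by
    rw [hLdef, Real.logb, div_mul_cancel₀ _ (ne_of_gt hlog2pos)]
  have hL0 : 0 ≤ L := Real.logb_nonneg (by norm_num) hn1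
  have ht : (t:ℝ) ≤ η * Real.sqrt L := Nat.floor_le (by positivity)
  have hsq : Real.sqrt L ^ 2 = L := Real.sq_sqrt hL0
  have hsq0 : 0 ≤ Real.sqrt L := Real.sqrt_nonneg L
  -- E bound
  have hences : (((t+1)*(2*t+1) : ℕ) : ℝ) ≤ 4*η^2*L + 4 := by
    have h2 : (η*Real.sqrt L)^2 = η^2 * L := by rw [mul_pow, hsq]
    have ht2 : (t:ℝ)*(t:ℝ) ≤ (η*Real.sqrt L)*(η*Real.sqrt L) :=
      mul_le_mul ht ht (Nat.cast_nonneg t) (by positivity)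
    push_cast
    nlinarith only [ht, h2, ht2, sq_nonneg (η*Real.sqrt L - 1), (Nat.cast_nonneg t : (0:ℝ) ≤ (t:ℝ))]
  -- Claim A
  have hsqrtη : Real.sqrt η ≤ 1/4 := by
    have h := Real.sqrt_le_sqrt (le_of_lt hη16)
    calc Real.sqrt η ≤ Real.sqrt (1/16) := h
    _ = 1/4 := by
        rw [show (1/16:ℝ) = (1/4)^2 by norm_num, Real.sqrt_sq (by norm_num)]
  have hlogη : Real.log (1/η) ≤ 2 / Real.sqrt η := by
    have hspos : 0 < Real.sqrt (1/η) := Real.sqrt_pos.mpr (by positivity)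
    have hls : Real.log (Real.sqrt (1/η)) = Real.log (1/η) / 2 :=
      Real.log_sqrt (by positivity)
    have h2 : Real.log (Real.sqrt (1/η)) ≤ Real.sqrt (1/η) :=
      le_trans (Real.log_le_sub_one_of_pos hspos) (by linarith)
    have h3 : Real.sqrt (1/η) = 1 / Real.sqrt η := by
      rw [one_div, one_div, Real.sqrt_inv]
    rw [hls, h3] at h2
    have h4 : (2:ℝ)/Real.sqrt η = 2*(1/Real.sqrt η) := by ring
    linarith only [h2, h4]
  have hsηpos : 0 < Real.sqrt η := Real.sqrt_pos.mpr hη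
  have hA : 4*η^2*Λ ≤ Real.log 2 / 2 := by
    have hl2 : (0.6931471803:ℝ) < Real.log 2 := Real.log_two_gt_d9
    have hηsq : η^2 ≤ 1/256 := by nlinarith only [hη, hη16]
    have hΛsplit : Λ = 10*Real.log 2 + Real.log (1/η) := by
      rw [hΛdef, Real.log_div (by norm_num) (ne_of_gt hη),
        show (1024:ℝ) = 2^(10:ℕ) by norm_num, Real.log_pow, one_div, Real.log_inv]
      push_cast; ring
    have hds : η / Real.sqrt η = Real.sqrt η := Real.div_sqrt
    have h8 : 4*η^2*Real.log (1/η) ≤ 8*(η*Real.sqrt η) := by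
      have hmul := mul_le_mul_of_nonneg_left hlogη (by positivity : (0:ℝ) ≤ 4*η^2)
      have heq : 4*η^2*(2/Real.sqrt η) = 8*(η*Real.sqrt η) := by
        have : 4*η^2*(2/Real.sqrt η) = 8*η*(η/Real.sqrt η) := by ring
        rw [this, hds]; ring
      linarith [hmul, heq.le, heq.ge]
    have hηs : η*Real.sqrt η ≤ (1/16)*(1/4) :=
      mul_le_mul (le_of_lt hη16) hsqrtη hsηpos.le (by norm_num)
    have hlogpos : (0:ℝ) ≤ Real.log (1/η) := Real.log_nonneg (by rw [le_div_iff₀ hη]; linarith)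
    have hproj := mul_le_mul_of_nonneg_right hηsq hlog2pos.le
    rw [hΛsplit]
    nlinarith only [hl2, h8, hηs, hproj, hlogpos, hηsq]
  -- combine
  have hmainlog : (((t+1)*(2*t+1) : ℕ) : ℝ) * Λ ≤ Real.log nR := by
    have s1 : (((t+1)*(2*t+1) : ℕ) : ℝ) * Λ ≤ (4*η^2*L + 4) * Λ :=
      mul_le_mul_of_nonneg_right hences hΛ0
    have s2 : (4*η^2*Λ)*L ≤ (Real.log 2/2)*L := mul_le_mul_of_nonneg_right hA hL0
    nlinarith only [s1, s2, hlogn, hL, hΛ0, hL0]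
  have hE1 : t + 1 ≤ (t+1)*(2*t+1) := by
    calc t + 1 = (t+1)*1 := by ring
    _ ≤ (t+1)*(2*t+1) := Nat.mul_le_mul_left _ (by omega)
  have hbig : (32/η) ^ ((t + 1) * (2 * t + 1)) * 32 ^ (t + 1) ≤ nR := by
    have hstep1 : (32/η) ^ ((t+1)*(2*t+1)) * 32 ^ (t+1) ≤ (1024/η) ^ ((t+1)*(2*t+1)) := by
      have he : (1024:ℝ)/η = (32/η)*32 := by field_simp; ring
      rw [he, mul_pow]
      apply mul_le_mul_of_nonneg_left _ (by positivity)
      exact pow_le_pow_right₀ (by norm_num : (1:ℝ) ≤ 32) hE1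
    have hstep2 : ((1024:ℝ)/η) ^ ((t+1)*(2*t+1)) ≤ nR := by
      rw [← Real.exp_log (show (0:ℝ) < (1024/η)^((t+1)*(2*t+1)) by positivity),
        ← Real.exp_log hnpos]
      apply Real.exp_le_exp.mpr
      rw [Real.log_pow]
      exact_mod_cast hmainlog
    linarith
  exact key η hη (by linarith) t V H h3 hE hbig
end

section
/- For all constants c₁, c₂, η ∈ (0,1) there exists m₀ such that for every integer m ≥ m₀ the following holds: let X, Y, Z be pairwise disjoint finite sets with |X| = |Y| = ⌊c₁·m⌋ and |Z| ≥ c₂·2^(m²), and let H be a 3-graph on X ∪ Y ∪ Z such that the number of edges {x,y,z} with x ∈ X, y ∈ Y, z ∈ Z is at least η·|X|·|Y|·|Z|. Then there exist X′ ⊆ X, Y′ ⊆ Y, Z′ ⊆ Z with |X′| = |Y′| = |Z′| ≥ (η/4)·log₂|X| such that every triple {x,y,z} with x ∈ X′, y ∈ Y′, z ∈ Z′ is an edge of H. -/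
open Finset Filter Real


private lemma sq_le_two_pow {m : ℕ} (hm : 5 ≤ m) : m ^ 2 ≤ 2 ^ m := by
  induction m, hm using Nat.le_induction with
  | base => norm_num
  | succ k hk ih =>
    have : 2 ^ (k+1) = 2 * 2 ^ k := by ring
    nlinarith

private lemma alpha_le (η : ℝ) (hη : 0 < η) (hη' : η < 1) :
    η / 4 * (Real.log (8 / η) / Real.log 2) ≤ 3 / 4 := by
  have hL : (0:ℝ) < Real.log 2 := Real.log_pos one_lt_two
  have h8 : Real.log (8 / η) = 3 * Real.log 2 - Real.log η := by
    rw [Real.log_div (by norm_num) hη.ne', show (8:ℝ) = 2 ^ (3:ℕ) by norm_num, Real.log_pow]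
    push_cast; ring
  have hinv : Real.log (1 / η) ≤ 1 / η - 1 := Real.log_le_sub_one_of_pos (by positivity)
  rw [Real.log_div one_ne_zero hη.ne', Real.log_one] at hinv
  have h1 : 1 - 1 / η ≤ Real.log η := by linarith
  have h2 : η - 1 ≤ η * Real.log η := by
    have := mul_le_mul_of_nonneg_left h1 hη.le
    calc η - 1 = η * (1 - 1 / η) := by field_simp
    _ ≤ η * Real.log η := this
  have h3 : (1:ℝ) / 3 ≤ Real.log 2 := by nlinarith [Real.log_two_gt_d9]
  have key : η * Real.log (8 / η) ≤ 3 * Real.log 2 := by rw [h8]; nlinarith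
  rw [show η / 4 * (Real.log (8 / η) / Real.log 2) = η * Real.log (8 / η) / (4 * Real.log 2) by
    ring, div_le_iff₀ (by positivity)]
  nlinarith

private lemma evQ (η : ℝ) (hη : 0 < η) (hη' : η < 1) :
    ∀ᶠ k : ℕ in atTop,
      (⌈η / 4 * Real.logb 2 k⌉₊ : ℝ) ≤ η / 8 * k ∧
      (⌈η / 4 * Real.logb 2 k⌉₊ : ℝ) * (8 / η) ^ (⌈η / 4 * Real.logb 2 k⌉₊ : ℕ) ≤ η / 4 * k := by
  have hL : (0:ℝ) < Real.log 2 := Real.log_pos one_lt_two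
  have t1 : Tendsto (fun k : ℕ => (k:ℝ) ^ ((1:ℝ)/8)) atTop atTop :=
    (tendsto_rpow_atTop (by norm_num)).comp tendsto_natCast_atTop_atTop
  have t2 : Tendsto (fun k : ℕ => (k:ℝ) ^ ((7:ℝ)/8)) atTop atTop :=
    (tendsto_rpow_atTop (by norm_num)).comp tendsto_natCast_atTop_atTop
  filter_upwards [t1.eventually_ge_atTop (128 / η ^ 2), t2.eventually_ge_atTop (32 / η),
    eventually_ge_atTop 2] with k E1 E2 hk2
  have hK2 : (2:ℝ) ≤ (k:ℝ) := by exact_mod_cast hk2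
  have hK1 : (1:ℝ) ≤ (k:ℝ) := by linarith
  have hKpos : (0:ℝ) < (k:ℝ) := by linarith
  set K : ℝ := (k : ℝ)
  set a : ℝ := K ^ ((1:ℝ)/8) with ha
  set b : ℝ := K ^ ((7:ℝ)/8) with hb
  have hapos : (0:ℝ) < a := Real.rpow_pos_of_pos hKpos _
  have haone : (1:ℝ) ≤ a := Real.one_le_rpow hK1 (by norm_num)
  have hlogbK : (0:ℝ) ≤ Real.logb 2 K := Real.logb_nonneg one_lt_two hK1
  set s : ℕ := ⌈η / 4 * Real.logb 2 K⌉₊ with hs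
  have hs_up : (s:ℝ) < η / 4 * Real.logb 2 K + 1 := Nat.ceil_lt_add_one (by positivity)
  have hlogK : Real.log K ≤ 8 * a := by
    have h1 : Real.log a = (1/8) * Real.log K := Real.log_rpow hKpos _
    have h2 : Real.log a ≤ a - 1 := Real.log_le_sub_one_of_pos hapos
    linarith
  have hlogbKle : Real.logb 2 K ≤ 12 * a := by
    rw [Real.logb, div_le_iff₀ hL]
    nlinarith [Real.log_two_gt_d9]
  have hs4 : (s:ℝ) ≤ 4 * a := by nlinarith
  have hKsplit : a * b = K := by
    rw [ha, hb, ← Real.rpow_add hKpos]; norm_num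
  have goal1 : (s:ℝ) ≤ η / 8 * K := by
    calc (s:ℝ) ≤ 4 * a := hs4
    _ = 32 / η * (η / 8 * a) := by field_simp; ring
    _ ≤ b * (η / 8 * a) := by
        apply mul_le_mul_of_nonneg_right E2 (by positivity)
    _ = η / 8 * (a * b) := by ring
    _ = η / 8 * K := by rw [hKsplit]
  refine ⟨goal1, ?_⟩
  -- bound (8/η)^s
  have h8η : (1:ℝ) < 8 / η := by rw [lt_div_iff₀ hη]; linarith
  have hA : (0:ℝ) ≤ Real.log (8 / η) := Real.log_nonneg h8η.le
  have hpow1 : ((8 / η) : ℝ) ^ (s:ℕ) = Real.exp (Real.log (8/η) * s) := by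
    rw [← Real.rpow_natCast (8/η) s, Real.rpow_def_of_pos (by positivity)]
  have hexp : Real.log (8/η) * (η / 4 * Real.logb 2 K + 1) =
      Real.log K * (η / 4 * (Real.log (8 / η) / Real.log 2)) + Real.log (8/η) := by
    rw [Real.logb]; field_simp
  have hpow3 : ((8 / η) : ℝ) ^ (s:ℕ) ≤
      (8 / η) * K ^ (η / 4 * (Real.log (8 / η) / Real.log 2)) := by
    rw [hpow1]
    calc Real.exp (Real.log (8/η) * s)
        ≤ Real.exp (Real.log (8/η) * (η / 4 * Real.logb 2 K + 1)) :=
          Real.exp_le_exp.2 (mul_le_mul_of_nonneg_left hs_up.le hA)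
    _ = Real.exp (Real.log K * (η / 4 * (Real.log (8 / η) / Real.log 2))) *
          Real.exp (Real.log (8/η)) := by rw [hexp, Real.exp_add]
    _ = (8 / η) * K ^ (η / 4 * (Real.log (8 / η) / Real.log 2)) := by
        rw [Real.exp_log (by positivity), Real.rpow_def_of_pos hKpos]; ring
  have hpow4 : K ^ (η / 4 * (Real.log (8 / η) / Real.log 2)) ≤ K ^ ((3:ℝ)/4) :=
    Real.rpow_le_rpow_of_exponent_le hK1 (alpha_le η hη hη')
  have hsplit2 : a * K ^ ((3:ℝ)/4) = b := by
    rw [ha, hb, ← Real.rpow_add hKpos]; norm_num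
  have h34pos : (0:ℝ) ≤ K ^ ((3:ℝ)/4) := (Real.rpow_pos_of_pos hKpos _).le
  calc (s:ℝ) * (8 / η) ^ (s:ℕ)
      ≤ (4 * a) * ((8 / η) * K ^ ((3:ℝ)/4)) := by
        apply mul_le_mul hs4 (hpow3.trans (by nlinarith)) (by positivity) (by positivity)
  _ = 32 / η * (a * K ^ ((3:ℝ)/4)) := by ring
  _ = 32 / η * b := by rw [hsplit2]
  _ = (η / 4 * b) * (128 / η ^ 2) := by field_simp; ring
  _ ≤ (η / 4 * b) * a := by
      apply mul_le_mul_of_nonneg_left E1 (by positivity)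
  _ = η / 4 * (a * b) := by ring
  _ = η / 4 * K := by rw [hKsplit]

private lemma evC (c₁ c₂ η : ℝ) (hc₁ : 0 < c₁) (hc₂ : 0 < c₂) (hη : 0 < η) (hη' : η < 1) :
    ∀ᶠ m : ℕ in atTop,
      1 ≤ m ∧ 2 ≤ ⌊c₁ * (m:ℝ)⌋₊ ∧
      ((⌈η / 4 * Real.logb 2 (⌊c₁ * (m:ℝ)⌋₊ : ℕ)⌉₊ : ℝ) ≤ η / 8 * (⌊c₁ * (m:ℝ)⌋₊ : ℕ) ∧
       (⌈η / 4 * Real.logb 2 (⌊c₁ * (m:ℝ)⌋₊ : ℕ)⌉₊ : ℝ) *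
         (8 / η) ^ (⌈η / 4 * Real.logb 2 (⌊c₁ * (m:ℝ)⌋₊ : ℕ)⌉₊ : ℕ) ≤
         η / 4 * (⌊c₁ * (m:ℝ)⌋₊ : ℕ)) ∧
      (m:ℝ) ≤ η * c₂ / 2 * 2 ^ m := by
  have hn : Tendsto (fun m : ℕ => ⌊c₁ * (m:ℝ)⌋₊) atTop atTop :=
    tendsto_nat_floor_atTop.comp (tendsto_natCast_atTop_atTop.const_mul_atTop hc₁)
  have hP4 : ∀ᶠ m : ℕ in atTop, (m:ℝ) ≤ η * c₂ / 2 * 2 ^ m := by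
    filter_upwards [eventually_ge_atTop 5,
      tendsto_natCast_atTop_atTop.eventually_ge_atTop (2 / (η * c₂))] with m h5 hM
    have hsq : ((m:ℝ)) ^ 2 ≤ 2 ^ m := by exact_mod_cast sq_le_two_pow h5
    have hm1 : (1:ℝ) ≤ η * c₂ / 2 * m := by
      rw [div_le_iff₀ (by positivity)] at hM
      nlinarith
    nlinarith [mul_le_mul_of_nonneg_left hsq (by positivity : (0:ℝ) ≤ η * c₂ / 2),
      mul_le_mul_of_nonneg_right hm1 (Nat.cast_nonneg m)]
  filter_upwards [eventually_ge_atTop 1, hn.eventually_ge_atTop 2,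
    hn.eventually (evQ η hη hη'), hP4] with m h1 h2 h3 h4
  exact ⟨h1, h2, h3, h4⟩

/-- For constants `c₁, c₂, η ∈ (0,1)` and `m` large: if `X, Y, Z` are pairwise disjoint
with `|X| = |Y| = ⌊c₁m⌋`, `|Z| ≥ c₂·2^(m²)` and a 3-graph `H` has at least `η|X||Y||Z|`
crossing edges, then there are `X' ⊆ X`, `Y' ⊆ Y`, `Z' ⊆ Z` with
`|X'| = |Y'| = |Z'| ≥ (η/4)·log₂|X|` spanning a complete 3-partite subgraph. -/
theorem stmt8 (c₁ c₂ η : ℝ) (hc₁ : 0 < c₁) (hc₁' : c₁ < 1) (hc₂ : 0 < c₂) (hc₂' : c₂ < 1)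
    (hη : 0 < η) (hη' : η < 1) :
    ∃ m₀ : ℕ, ∀ m : ℕ, m₀ ≤ m →
    ∀ (V : Type) [DecidableEq V] (X Y Z : Finset V),
    Disjoint X Y → Disjoint X Z → Disjoint Y Z →
    X.card = ⌊c₁ * m⌋₊ → Y.card = ⌊c₁ * m⌋₊ → c₂ * 2 ^ (m ^ 2) ≤ (Z.card : ℝ) →
    ∀ H : Finset (Finset V), (∀ e ∈ H, e.card = 3) →
    η * X.card * Y.card * Z.card ≤
      ((((X ×ˢ Y ×ˢ Z).filter fun p => ({p.1, p.2.1, p.2.2} : Finset V) ∈ H).card : ℕ) : ℝ) →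
    ∃ X' Y' Z' : Finset V, X' ⊆ X ∧ Y' ⊆ Y ∧ Z' ⊆ Z ∧
      X'.card = Y'.card ∧ Y'.card = Z'.card ∧
      η / 4 * Real.logb 2 (X.card : ℝ) ≤ (X'.card : ℝ) ∧
      ∀ x ∈ X', ∀ y ∈ Y', ∀ z ∈ Z', ({x, y, z} : Finset V) ∈ H := by
  obtain ⟨m₀, hm₀⟩ := eventually_atTop.mp (evC c₁ c₂ η hc₁ hc₂ hη hη')
  refine ⟨m₀, ?_⟩
  intro m hm V _ X Y Z hXY hXZ hYZ hX hY hZcard H hH3 hcount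
  obtain ⟨hm1, hn2, ⟨hQ1, hQ2⟩, hP4⟩ := hm₀ m hm
  classical
  set n : ℕ := ⌊c₁ * (m:ℝ)⌋₊ with hn
  set s : ℕ := ⌈η / 4 * Real.logb 2 (n : ℕ)⌉₊ with hs
  have hXcard : X.card = n := hX
  have hYcard : Y.card = n := hY
  have hn2R : (2:ℝ) ≤ (n:ℝ) := by exact_mod_cast hn2
  have hnpos : (0:ℝ) < (n:ℝ) := by linarith
  have h1s : 1 ≤ s := Nat.ceil_pos.mpr
    (mul_pos (by positivity) (Real.logb_pos one_lt_two (by exact_mod_cast hn2)))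
  have hnm : n < m := by
    have h1 : (n:ℝ) ≤ c₁ * m := Nat.floor_le (by positivity)
    have hm1R : (1:ℝ) ≤ (m:ℝ) := by exact_mod_cast hm1
    have h2 : c₁ * m < m := by nlinarith
    exact_mod_cast h1.trans_lt h2
  have hsn : s ≤ n := by
    have : (s:ℝ) ≤ (n:ℝ) := hQ1.trans (by nlinarith)
    exact_mod_cast this
  -- the link graphs
  set L : V → Finset (V × V) :=
    fun z => (X ×ˢ Y).filter (fun p => ({p.1, p.2, z} : Finset V) ∈ H) with hLdef
  set T := (X ×ˢ Y ×ˢ Z).filter (fun p => ({p.1, p.2.1, p.2.2} : Finset V) ∈ H) with hT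
  have hTsum : T.card = ∑ z ∈ Z, (L z).card := by
    rw [Finset.card_eq_sum_card_fiberwise (f := fun p => p.2.2) (t := Z)
      (fun p hp => by simp only [hT, mem_coe, mem_filter, mem_product] at hp; exact hp.1.2.2)]
    refine Finset.sum_congr rfl fun z hz => ?_
    apply Finset.card_bij (fun p _ => (p.1, p.2.1))
    · rintro ⟨x, y, z'⟩ hp
      simp only [hT, mem_filter, mem_product] at hp
      obtain ⟨⟨⟨hx, hy, _⟩, he⟩, rfl⟩ := hp
      simp only [hLdef, mem_filter, mem_product]
      exact ⟨⟨hx, hy⟩, he⟩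
    · rintro ⟨x, y, z'⟩ hp ⟨x', y', z''⟩ hq h
      simp only [hT, mem_filter, mem_product] at hp hq
      simp only [Prod.mk.injEq] at h ⊢
      exact ⟨h.1, h.2, hp.2.trans hq.2.symm⟩
    · rintro ⟨x, y⟩ hq
      simp only [hLdef, mem_filter, mem_product] at hq
      have hmem : (x, y, z) ∈ T.filter (fun p => p.2.2 = z) := by
        simp only [hT, mem_filter, mem_product]
        exact ⟨⟨⟨hq.1.1, hq.1.2, hz⟩, hq.2⟩, trivial⟩
      exact ⟨(x, y, z), hmem, rfl⟩
  -- Averaging over Z : many z have dense links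
  have hLsub : ∀ z : V, (L z).card ≤ n * n := fun z => by
    calc (L z).card ≤ (X ×ˢ Y).card := Finset.card_filter_le _ _
    _ = n * n := by rw [Finset.card_product, hXcard, hYcard]
  set GoodZ := Z.filter (fun z => (η / 2 * ((n:ℝ) * n) : ℝ) ≤ ((L z).card : ℝ)) with hGoodZ
  have hGZ : η / 2 * (Z.card : ℝ) ≤ (GoodZ.card : ℝ) := by
    have hsplit := Finset.sum_filter_add_sum_filter_not Z
      (fun z => (η / 2 * ((n:ℝ) * n) : ℝ) ≤ ((L z).card : ℝ)) (fun z => ((L z).card : ℝ))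
    rw [← hGoodZ] at hsplit
    have h1 : ∑ z ∈ GoodZ, ((L z).card : ℝ) ≤ (GoodZ.card : ℝ) * ((n:ℝ) * n) := by
      have := Finset.sum_le_card_nsmul GoodZ (fun z => ((L z).card : ℝ)) ((n : ℝ) * n)
        (fun z _ => by show ((L z).card : ℝ) ≤ (n:ℝ) * n; exact_mod_cast hLsub z)
      simpa [nsmul_eq_mul] using this
    have h2 : ∑ z ∈ Z.filter (fun z => ¬ ((η / 2 * ((n:ℝ) * n) : ℝ) ≤ ((L z).card : ℝ))),
        ((L z).card : ℝ) ≤ (Z.card : ℝ) * (η / 2 * ((n:ℝ) * n)) := by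
      calc ∑ z ∈ Z.filter (fun z => ¬ ((η / 2 * ((n:ℝ) * n) : ℝ) ≤ ((L z).card : ℝ))),
            ((L z).card : ℝ)
          ≤ ((Z.filter (fun z => ¬ ((η / 2 * ((n:ℝ) * n) : ℝ) ≤ ((L z).card : ℝ)))).card : ℝ)
            * (η / 2 * ((n:ℝ) * n)) := by
            have := Finset.sum_le_card_nsmul
              (Z.filter (fun z => ¬ ((η / 2 * ((n:ℝ) * n) : ℝ) ≤ ((L z).card : ℝ))))
              (fun z => ((L z).card : ℝ)) (η / 2 * ((n:ℝ) * n))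
              (fun z hz => (not_le.1 (Finset.mem_filter.1 hz).2).le)
            simpa [nsmul_eq_mul] using this
      _ ≤ (Z.card : ℝ) * (η / 2 * ((n:ℝ) * n)) := by
            apply mul_le_mul_of_nonneg_right ?_ (by positivity)
            exact_mod_cast Finset.card_filter_le _ _
    have h0 : η * ((n:ℝ) * n) * (Z.card : ℝ) ≤ ∑ z ∈ Z, ((L z).card : ℝ) := by
      have hTR : ((T.card : ℕ) : ℝ) = ∑ z ∈ Z, ((L z).card : ℝ) := by rw [hTsum]; push_cast; ring
      rw [hXcard, hYcard] at hcount
      calc η * ((n:ℝ) * n) * (Z.card : ℝ) = η * (n:ℝ) * (n:ℝ) * (Z.card : ℝ) := by ring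
      _ ≤ ((T.card : ℕ) : ℝ) := hcount
      _ = _ := hTR
    have hfin : (η / 2 * (Z.card : ℝ)) * ((n:ℝ) * n) ≤ (GoodZ.card : ℝ) * ((n:ℝ) * n) := by
      linarith
    exact le_of_mul_le_mul_right hfin (by positivity)
  -- Pigeonhole : many z in GoodZ share the same link graph
  have hsmR : (s:ℝ) ≤ (m:ℝ) := by
    have : s ≤ m := le_trans hsn hnm.le
    exact_mod_cast this
  have hpow : (s:ℝ) * 2 ^ (n * n) ≤ (GoodZ.card : ℝ) := by
    have hexp : n * n + m ≤ m ^ 2 := by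
      calc n * n + m ≤ n * m + m := Nat.add_le_add_right (Nat.mul_le_mul le_rfl hnm.le) m
      _ = (n + 1) * m := by ring
      _ ≤ m * m := Nat.mul_le_mul hnm m.le_refl
      _ = m ^ 2 := (sq m).symm
    calc (s:ℝ) * 2 ^ (n * n) ≤ (η * c₂ / 2 * 2 ^ m) * 2 ^ (n * n) := by
          apply mul_le_mul_of_nonneg_right (hsmR.trans hP4) (by positivity)
    _ = η * c₂ / 2 * 2 ^ (m + n * n) := by rw [pow_add]; ring
    _ ≤ η * c₂ / 2 * 2 ^ (m ^ 2) := by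
          apply mul_le_mul_of_nonneg_left ?_ (by positivity)
          exact pow_le_pow_right₀ one_le_two (by omega)
    _ = η / 2 * (c₂ * 2 ^ (m ^ 2)) := by ring
    _ ≤ η / 2 * (Z.card : ℝ) := mul_le_mul_of_nonneg_left hZcard (by positivity)
    _ ≤ (GoodZ.card : ℝ) := hGZ
  have hnat : ((X ×ˢ Y).powerset.card) * s ≤ GoodZ.card := by
    rw [Finset.card_powerset, Finset.card_product, hXcard, hYcard]
    have : ((2:ℝ)) ^ (n * n) * (s:ℝ) ≤ (GoodZ.card : ℝ) := by linarith
    exact_mod_cast this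
  obtain ⟨G, hGmem, hGs⟩ := Finset.exists_le_card_fiber_of_mul_le_card_of_maps_to
    (s := GoodZ) (f := L) (t := (X ×ˢ Y).powerset) (n := s)
    (fun z _ => by rw [hLdef]; exact Finset.mem_powerset.2 (Finset.filter_subset _ _))
    ⟨∅, Finset.mem_powerset.2 (Finset.empty_subset _)⟩ hnat
  set Z₁ := GoodZ.filter (fun z => L z = G) with hZ₁
  have hZ₁Z : Z₁ ⊆ Z := (Finset.filter_subset _ _).trans (Finset.filter_subset _ _)
  have hZ₁L : ∀ z ∈ Z₁, L z = G := fun z hz => (Finset.mem_filter.1 hz).2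
  have hGcard : η / 2 * ((n:ℝ) * n) ≤ (G.card : ℝ) := by
    obtain ⟨z₀, hz₀⟩ := Finset.card_pos.1 (lt_of_lt_of_le h1s hGs)
    have h1 := (Finset.mem_filter.1 (Finset.mem_filter.1 hz₀).1).2
    rwa [hZ₁L z₀ hz₀] at h1
  have hGsub : G ⊆ X ×ˢ Y := Finset.mem_powerset.1 hGmem
  -- neighborhoods in the common link graph
  set N : V → Finset V := fun y => X.filter (fun x => (x, y) ∈ G) with hNdef
  have hNsub : ∀ y, N y ⊆ X := fun y => Finset.filter_subset _ _
  have hNle : ∀ y, (N y).card ≤ n := fun y => hXcard ▸ Finset.card_le_card (hNsub y)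
  have hGsum : G.card = ∑ y ∈ Y, (N y).card := by
    rw [Finset.card_eq_sum_card_fiberwise (f := Prod.snd) (t := Y)
      (fun p hp => (Finset.mem_product.1 (hGsub hp)).2)]
    refine Finset.sum_congr rfl fun y hy => ?_
    apply Finset.card_bij (fun p _ => p.1)
    · rintro ⟨x, y'⟩ hp
      simp only [Finset.mem_filter] at hp
      obtain ⟨hpG, rfl⟩ := hp
      simp only [hNdef, Finset.mem_filter]
      exact ⟨(Finset.mem_product.1 (hGsub hpG)).1, hpG⟩
    · rintro ⟨x, y'⟩ hp ⟨x', y''⟩ hq h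
      simp only [Finset.mem_filter] at hp hq
      simp only at h
      simp only [Prod.mk.injEq]
      exact ⟨h, hp.2.trans hq.2.symm⟩
    · intro x hx
      simp only [hNdef, Finset.mem_filter] at hx
      exact ⟨(x, y), Finset.mem_filter.2 ⟨hx.2, rfl⟩, rfl⟩
  -- many y with large neighborhoods
  set GoodY := Y.filter (fun y => (η / 4 * (n:ℝ) : ℝ) ≤ ((N y).card : ℝ)) with hGoodY
  have hGYsub : GoodY ⊆ Y := Finset.filter_subset _ _
  have hGY : η / 4 * (n:ℝ) ≤ (GoodY.card : ℝ) := by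
    have hsplit := Finset.sum_filter_add_sum_filter_not Y
      (fun y => (η / 4 * (n:ℝ) : ℝ) ≤ ((N y).card : ℝ)) (fun y => ((N y).card : ℝ))
    rw [← hGoodY] at hsplit
    have h1 : ∑ y ∈ GoodY, ((N y).card : ℝ) ≤ (GoodY.card : ℝ) * (n:ℝ) := by
      have := Finset.sum_le_card_nsmul GoodY (fun y => ((N y).card : ℝ)) ((n:ℝ))
        (fun y _ => by show ((N y).card : ℝ) ≤ (n:ℝ); exact_mod_cast hNle y)
      simpa [nsmul_eq_mul] using this
    have h2 : ∑ y ∈ Y.filter (fun y => ¬ ((η / 4 * (n:ℝ) : ℝ) ≤ ((N y).card : ℝ))),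
        ((N y).card : ℝ) ≤ (Y.card : ℝ) * (η / 4 * (n:ℝ)) := by
      calc ∑ y ∈ Y.filter (fun y => ¬ ((η / 4 * (n:ℝ) : ℝ) ≤ ((N y).card : ℝ))),
            ((N y).card : ℝ)
          ≤ ((Y.filter (fun y => ¬ ((η / 4 * (n:ℝ) : ℝ) ≤ ((N y).card : ℝ)))).card : ℝ)
            * (η / 4 * (n:ℝ)) := by
            have := Finset.sum_le_card_nsmul
              (Y.filter (fun y => ¬ ((η / 4 * (n:ℝ) : ℝ) ≤ ((N y).card : ℝ))))
              (fun y => ((N y).card : ℝ)) (η / 4 * (n:ℝ))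
              (fun y hy => (not_le.1 (Finset.mem_filter.1 hy).2).le)
            simpa [nsmul_eq_mul] using this
      _ ≤ (Y.card : ℝ) * (η / 4 * (n:ℝ)) := by
            apply mul_le_mul_of_nonneg_right ?_ (by positivity)
            exact_mod_cast Finset.card_filter_le _ _
    rw [hYcard] at h2
    have h0 : η / 2 * ((n:ℝ) * n) ≤ ∑ y ∈ Y, ((N y).card : ℝ) := by
      have hGR : ((G.card : ℕ) : ℝ) = ∑ y ∈ Y, ((N y).card : ℝ) := by
        rw [hGsum]; push_cast; ring
      linarith [hGcard]
    have hfin : (η / 4 * (n:ℝ)) * (n:ℝ) ≤ (GoodY.card : ℝ) * (n:ℝ) := by linarith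
    exact le_of_mul_le_mul_right hfin (by positivity)
  -- ceilings
  set D : ℕ := ⌈η / 4 * (n:ℝ)⌉₊ with hD
  set E : ℕ := ⌈η / 8 * (n:ℝ)⌉₊ with hE
  have hED : E + s ≤ D + 1 := by
    have h1 : (E:ℝ) < η / 8 * (n:ℝ) + 1 := Nat.ceil_lt_add_one (by positivity)
    have h2 : (η / 4 * (n:ℝ)) ≤ D := Nat.le_ceil _
    have h3 : ((E + s : ℕ) : ℝ) < ((D + 1 : ℕ) : ℝ) := by push_cast; linarith [hQ1]
    exact_mod_cast h3.le
  have hDy : ∀ y ∈ GoodY, D ≤ (N y).card := fun y hy =>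
    Nat.ceil_le.2 (Finset.mem_filter.1 hy).2
  -- counting pairs (S, y) with S an s-subset of N y
  set Pairs := ((X.powersetCard s) ×ˢ GoodY).filter (fun q => q.1 ⊆ N q.2) with hPairs
  have hPsum : Pairs.card = ∑ y ∈ GoodY, ((N y).card.choose s) := by
    rw [Finset.card_eq_sum_card_fiberwise (f := Prod.snd) (t := GoodY)
      (fun q hq => (Finset.mem_product.1 (Finset.mem_filter.1 hq).1).2)]
    refine Finset.sum_congr rfl fun y hy => ?_
    have hbij : (Pairs.filter (fun q => q.2 = y)).card = ((N y).powersetCard s).card := by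
      apply Finset.card_bij (fun q _ => q.1)
      · rintro ⟨S, y'⟩ hq
        simp only [hPairs, Finset.mem_filter, Finset.mem_product] at hq
        obtain ⟨⟨⟨hS, hy'⟩, hsub⟩, rfl⟩ := hq
        exact Finset.mem_powersetCard.2 ⟨hsub, (Finset.mem_powersetCard.1 hS).2⟩
      · rintro ⟨S, y'⟩ hp ⟨S', y''⟩ hq h
        simp only [Finset.mem_filter] at hp hq
        simp only at h
        simp only [Prod.mk.injEq]
        exact ⟨h, hp.2.trans hq.2.symm⟩
      · intro S hS
        have h1 := Finset.mem_powersetCard.1 hS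
        refine ⟨(S, y), ?_, rfl⟩
        simp only [hPairs, Finset.mem_filter, Finset.mem_product]
        exact ⟨⟨⟨Finset.mem_powersetCard.2 ⟨h1.1.trans (hNsub y), h1.2⟩, hy⟩, h1.1⟩, trivial⟩
    rw [hbij, Finset.card_powersetCard]
  have hPlow : GoodY.card * (D.choose s) ≤ Pairs.card := by
    rw [hPsum]
    have := Finset.card_nsmul_le_sum GoodY (fun y => ((N y).card.choose s)) (D.choose s)
      (fun y hy => Nat.choose_le_choose s (hDy y hy))
    simpa [smul_eq_mul] using this
  -- the key counting inequality
  have hmid : s * n ^ s ≤ GoodY.card * E ^ s := by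
    have hr : (s:ℝ) * (n:ℝ) ^ s ≤ (GoodY.card : ℝ) * (E:ℝ) ^ s := by
      have hcancel : ((8:ℝ) / η) ^ s * (η / 8) ^ s = 1 := by
        rw [← mul_pow, show (8:ℝ) / η * (η / 8) = 1 by field_simp]
        exact one_pow s
      have hstep1 : (s:ℝ) * (n:ℝ) ^ s ≤ (η / 4 * (n:ℝ)) * ((η / 8) * (n:ℝ)) ^ s := by
        calc (s:ℝ) * (n:ℝ) ^ s = ((s:ℝ) * (8 / η) ^ s) * ((η / 8) ^ s * (n:ℝ) ^ s) := by
              rw [show ((s:ℝ) * (8 / η) ^ s) * ((η / 8) ^ s * (n:ℝ) ^ s)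
                   = (s:ℝ) * (((8:ℝ) / η) ^ s * (η / 8) ^ s) * (n:ℝ) ^ s by ring, hcancel]
              ring
        _ ≤ (η / 4 * (n:ℝ)) * ((η / 8) ^ s * (n:ℝ) ^ s) := by
              apply mul_le_mul_of_nonneg_right hQ2 (by positivity)
        _ = (η / 4 * (n:ℝ)) * ((η / 8) * (n:ℝ)) ^ s := by rw [mul_pow]
      have hE0 : (0:ℝ) ≤ η / 8 * (n:ℝ) := by positivity
      have hEle : η / 8 * (n:ℝ) ≤ (E:ℝ) := by rw [hE]; exact Nat.le_ceil _
      have hstep2 : (η / 4 * (n:ℝ)) * ((η / 8) * (n:ℝ)) ^ s ≤ (GoodY.card:ℝ) * (E:ℝ) ^ s :=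
        mul_le_mul hGY (pow_le_pow_left₀ hE0 hEle s) (pow_nonneg hE0 s) (Nat.cast_nonneg _)
      linarith
    exact_mod_cast hr
  have hkey : (X.powersetCard s).card * s ≤ Pairs.card := by
    rw [Finset.card_powersetCard, hXcard]
    refine le_trans ?_ hPlow
    apply Nat.le_of_mul_le_mul_right ?_ (Nat.factorial_pos s)
    calc n.choose s * s * s.factorial = s * (s.factorial * n.choose s) := by ring
    _ = s * n.descFactorial s := by rw [← Nat.descFactorial_eq_factorial_mul_choose]
    _ ≤ s * n ^ s := Nat.mul_le_mul le_rfl (Nat.descFactorial_le_pow n s)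
    _ ≤ GoodY.card * E ^ s := hmid
    _ ≤ GoodY.card * (D + 1 - s) ^ s :=
        Nat.mul_le_mul le_rfl (Nat.pow_le_pow_left (by omega) s)
    _ ≤ GoodY.card * D.descFactorial s :=
        Nat.mul_le_mul le_rfl (Nat.pow_sub_le_descFactorial D s)
    _ = GoodY.card * (s.factorial * D.choose s) := by
        rw [← Nat.descFactorial_eq_factorial_mul_choose]
    _ = GoodY.card * D.choose s * s.factorial := by ring
  -- second pigeonhole: a common s-subset S
  obtain ⟨S, hSmem, hSfib⟩ := Finset.exists_le_card_fiber_of_mul_le_card_of_maps_to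
    (s := Pairs) (f := Prod.fst) (t := X.powersetCard s) (n := s)
    (fun q hq => (Finset.mem_product.1 (Finset.mem_filter.1 hq).1).1)
    (Finset.powersetCard_nonempty.2 (by rw [hXcard]; exact hsn)) hkey
  set F := Pairs.filter (fun q => q.1 = S) with hF
  have hFinj : Set.InjOn Prod.snd (F : Set (Finset V × V)) := by
    intro q hq q' hq' h
    have h1 : q.1 = S := (Finset.mem_filter.1 hq).2
    have h2 : q'.1 = S := (Finset.mem_filter.1 hq').2
    exact Prod.ext (h1.trans h2.symm) h
  have hY2card : s ≤ (F.image Prod.snd).card := by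
    rw [Finset.card_image_of_injOn hFinj]; exact hSfib
  have hY2sub : F.image Prod.snd ⊆ GoodY := by
    intro y hy
    obtain ⟨q, hq, rfl⟩ := Finset.mem_image.1 hy
    exact (Finset.mem_product.1 (Finset.mem_filter.1 (Finset.mem_filter.1 hq).1).1).2
  have hY2N : ∀ y ∈ F.image Prod.snd, S ⊆ N y := by
    intro y hy
    obtain ⟨q, hq, rfl⟩ := Finset.mem_image.1 hy
    have h1 := (Finset.mem_filter.1 (Finset.mem_filter.1 hq).1).2
    rwa [(Finset.mem_filter.1 hq).2] at h1
  obtain ⟨Y', hY'sub, hY'card⟩ := Finset.exists_subset_card_eq hY2card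
  obtain ⟨Z', hZ'sub, hZ'card⟩ := Finset.exists_subset_card_eq hGs
  have hSX : S ⊆ X := (Finset.mem_powersetCard.1 hSmem).1
  have hScard : S.card = s := (Finset.mem_powersetCard.1 hSmem).2
  refine ⟨S, Y', Z', hSX, (hY'sub.trans hY2sub).trans hGYsub, hZ'sub.trans hZ₁Z,
    by rw [hScard, hY'card], by rw [hY'card, hZ'card], ?_, ?_⟩
  · rw [hXcard, hScard, hs]
    exact Nat.le_ceil _
  · intro x hx y hy z hz
    have hxN : x ∈ N y := hY2N y (hY'sub hy) hx
    have hxy : (x, y) ∈ G := by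
      rw [hNdef] at hxN
      exact (Finset.mem_filter.1 hxN).2
    have hLz := hZ₁L z (hZ'sub hz)
    rw [← hLz, hLdef] at hxy
    exact (Finset.mem_filter.1 hxy).2
end

section
/- For all constants c₁, c₂, η ∈ (0,1) there exists m₀ such that for every integer m ≥ m₀ the following holds: let A and B be disjoint finite sets with |A| = ⌊c₁·m⌋ and |B| ≥ c₂·2^(m²), and let H be a 3-graph in which every edge consists of one vertex of A and two vertices of B, with at least η·|A|·C(|B|,2) edges. Then there exist A′ ⊆ A and disjoint B′, B″ ⊆ B with |A′| = |B′| = |B″| ≥ ⌊η·|A|/2⌋ such that every triple {a,b′,b″} with a ∈ A′, b′ ∈ B′, b″ ∈ B″ is an edge of H. -/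
open Finset Nat Filter Real Topology


lemma pow_le_pow_mul_choose (d t : ℕ) (ht : t ≤ d) :
    (d:ℝ)^t ≤ (t:ℝ)^t * (d.choose t : ℝ) := by
  have key : d^t * t ! ≤ d.descFactorial t * t^t := by
    have h2 : (∏ i ∈ range t, (t - i)) = t ! := by
      calc (∏ i ∈ range t, (t - i)) = ∏ i ∈ range t, ((fun j => j + 1) (t - 1 - i)) := by
            refine prod_congr rfl fun i hi => ?_
            have := mem_range.1 hi; simp only; omega
        _ = ∏ i ∈ range t, (i + 1) := prod_range_reflect _ t
        _ = t ! := prod_range_add_one_eq_factorial t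
    calc d^t * t ! = ∏ i ∈ range t, (d * (t - i)) := by
          rw [prod_mul_distrib, prod_const, card_range, h2]
      _ ≤ ∏ i ∈ range t, ((d - i) * t) := by
          refine prod_le_prod' fun i hi => ?_
          have hi' := mem_range.1 hi
          have h1 : i ≤ t := hi'.le
          have h3 : i ≤ d := h1.trans ht
          zify [h1, h3]
          have : (i:ℤ) * t ≤ i * d := by
            have : (t:ℤ) ≤ d := by exact_mod_cast ht
            nlinarith [Int.natCast_nonneg i]
          nlinarith
      _ = d.descFactorial t * t^t := by
          rw [prod_mul_distrib, prod_const, card_range, ← Nat.descFactorial_eq_prod_range]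
  have key' : (d:ℝ)^t * t ! ≤ (t:ℝ)^t * (d.choose t) * t ! := by
    calc (d:ℝ)^t * t ! ≤ (d.descFactorial t : ℝ) * t^t := by exact_mod_cast key
      _ = (t:ℝ)^t * (d.choose t) * t ! := by
          rw [Nat.descFactorial_eq_factorial_mul_choose]; push_cast; ring
  have hf : (0:ℝ) < t ! := by exact_mod_cast t.factorial_pos
  exact le_of_mul_le_mul_right key' hf

set_option maxHeartbeats 1000000 in

lemma key_growth (c₁ c₂ η : ℝ) (hc₁ : 0 < c₁) (hc₁' : c₁ < 1) (hc₂ : 0 < c₂) (hη : 0 < η)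
    (hη' : η < 1) :
    ∃ m₀ : ℕ, ∀ m : ℕ, m₀ ≤ m →
      (2 : ℝ) ≤ c₂ * 2 ^ (m ^ 2) ∧
      ∀ a : ℕ, 1 ≤ a → (a : ℝ) ≤ c₁ * m →
        2 * (a:ℝ)^(a+1) * 2^((a+4)*(a+1)) < η^(a+1) * (c₂ * 2^(m^2)) := by
  -- Part 1 : c₂ * 2^(m^2) → ∞
  have h2m : Tendsto (fun m : ℕ => c₂ * 2 ^ (m ^ 2) : ℕ → ℝ) atTop atTop := by
    have h1 : Tendsto (fun n : ℕ => c₂ * 2 ^ n : ℕ → ℝ) atTop atTop :=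
      (tendsto_pow_atTop_atTop_of_one_lt (by norm_num : (1:ℝ) < 2)).const_mul_atTop hc₂
    have h2 : Tendsto (fun m : ℕ => m ^ 2) atTop atTop :=
      tendsto_atTop_mono (fun m => Nat.le_self_pow two_ne_zero m) tendsto_id
    exact h1.comp h2
  have ev1 : ∀ᶠ m : ℕ in atTop, (2:ℝ) ≤ c₂ * 2 ^ (m ^ 2) := h2m.eventually_ge_atTop 2
  -- Part 2 : the function G
  set L2 := Real.log 2 with hL2
  have hL2pos : 0 < L2 := Real.log_pos (by norm_num)
  set G : ℕ → ℝ := fun m => (L2 - Real.log c₂) * (1/m) * (1/m)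
      + (c₁ + 1/m) * (Real.log m / m)
      + (c₁ + 4/m) * (c₁ + 1/m) * L2
      + (c₁ + 1/m) * (- Real.log η) * (1/m) with hG
  have hinv : Tendsto (fun m : ℕ => 1/(m:ℝ)) atTop (𝓝 0) := tendsto_one_div_atTop_nhds_zero_nat
  have hlog : Tendsto (fun m : ℕ => Real.log m / m) atTop (𝓝 0) :=
    (Real.isLittleO_log_id_atTop.tendsto_div_nhds_zero).comp tendsto_natCast_atTop_atTop
  have h4inv : Tendsto (fun m : ℕ => 4/(m:ℝ)) atTop (𝓝 0) := by
    have := hinv.const_mul (4:ℝ)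
    simpa [div_eq_mul_inv] using this
  have hGlim : Tendsto G atTop (𝓝 (c₁ * c₁ * L2)) := by
    have : Tendsto G atTop (𝓝 ((L2 - Real.log c₂) * 0 * 0 + (c₁ + 0) * 0
        + (c₁ + 0) * (c₁ + 0) * L2 + (c₁ + 0) * (- Real.log η) * 0)) := by
      exact ((((tendsto_const_nhds.mul hinv).mul hinv).add
        ((tendsto_const_nhds.add hinv).mul hlog)).add
        (((tendsto_const_nhds.add h4inv).mul (tendsto_const_nhds.add hinv)).mul
          tendsto_const_nhds)).add
        (((tendsto_const_nhds.add hinv).mul tendsto_const_nhds).mul hinv)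
    simpa using this
  have hlt : c₁ * c₁ * L2 < L2 := by
    have h : c₁ * c₁ < 1 := by nlinarith
    nlinarith [mul_lt_mul_of_pos_right h hL2pos]
  have ev2 : ∀ᶠ m : ℕ in atTop, G m < L2 := hGlim.eventually_lt_const hlt
  have ev3 : ∀ᶠ m : ℕ in atTop, 1 ≤ m := eventually_ge_atTop 1
  obtain ⟨m₀, hm₀⟩ := eventually_atTop.1 ((ev1.and ev2).and ev3)
  refine ⟨m₀, fun m hm => ?_⟩
  obtain ⟨⟨h1, hGm⟩, hm1⟩ := hm₀ m hm
  refine ⟨h1, fun a ha1 hac => ?_⟩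
  have hmpos : (0:ℝ) < m := by exact_mod_cast hm1
  have hapos : (0:ℝ) < a := by exact_mod_cast ha1
  have ham : (a:ℝ) ≤ m := hac.trans (by nlinarith)
  -- positivity of both sides
  have hLpos : (0:ℝ) < 2 * (a:ℝ)^(a+1) * 2^((a+4)*(a+1)) := by positivity
  have hRpos : (0:ℝ) < η^(a+1) * (c₂ * 2^(m^2)) := by positivity
  rw [← Real.log_lt_log_iff hLpos hRpos]
  rw [Real.log_mul (by positivity) (by positivity), Real.log_mul (by positivity) (by positivity),
    Real.log_mul (by positivity) (by positivity), Real.log_mul (by positivity) (by positivity),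
    Real.log_pow, Real.log_pow, Real.log_pow, Real.log_pow]
  -- reduce to F m < m^2 * L2
  have hFm : G m * (m:ℝ)^2 < L2 * (m:ℝ)^2 := by
    have := mul_lt_mul_of_pos_right hGm (by positivity : (0:ℝ) < (m:ℝ)^2)
    linarith
  have hGexp : G m * (m:ℝ)^2 = (L2 - Real.log c₂) + (c₁*m + 1) * Real.log m
      + (c₁*m + 4) * (c₁*m + 1) * L2 + (c₁*m + 1) * (- Real.log η) := by
    have hm0 : (m:ℝ) ≠ 0 := ne_of_gt hmpos
    rw [hG]
    field_simp
  rw [hGexp] at hFm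
  -- bridging bounds
  have hloga : Real.log a ≤ Real.log m := Real.log_le_log hapos ham
  have hloga0 : 0 ≤ Real.log a := Real.log_nonneg (by exact_mod_cast ha1)
  have ha1' : (a:ℝ) + 1 ≤ c₁*m + 1 := by linarith
  have hb1 : ((a:ℝ) + 1) * Real.log a ≤ (c₁*m + 1) * Real.log m :=
    mul_le_mul ha1' hloga hloga0 (by positivity)
  have hb2 : ((a:ℝ) + 4) * ((a:ℝ) + 1) * L2 ≤ (c₁*m + 4) * (c₁*m + 1) * L2 := by
    have : ((a:ℝ) + 4) * ((a:ℝ) + 1) ≤ (c₁*m + 4) * (c₁*m + 1) := by nlinarith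
    nlinarith
  have hlogη : Real.log η < 0 := Real.log_neg hη hη'
  have hb3 : (c₁*m + 1) * Real.log η ≤ ((a:ℝ) + 1) * Real.log η := by nlinarith
  have hcast1 : ((a+1 : ℕ) : ℝ) = (a:ℝ) + 1 := by push_cast; ring
  have hcast2 : (((a+4)*(a+1) : ℕ) : ℝ) = ((a:ℝ)+4) * ((a:ℝ)+1) := by push_cast; ring
  have hcast3 : ((m^2 : ℕ) : ℝ) = (m:ℝ)^2 := by push_cast; ring
  rw [hcast1, hcast2, hcast3]
  linarith

set_option maxHeartbeats 1600000 in
/-- For constants `c₁, c₂, η ∈ (0,1)` and `m` large: if `A, B` are disjoint with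
`|A| = ⌊c₁m⌋`, `|B| ≥ c₂·2^(m²)`, and `H` is a 3-graph whose every edge has one vertex
in `A` and two in `B`, with at least `η|A|·C(|B|,2)` edges, then there are `A' ⊆ A` and
disjoint `B', B'' ⊆ B` with `|A'| = |B'| = |B''| ≥ ⌊η|A|/2⌋` spanning a complete
3-partite subgraph. -/
theorem stmt9 (c₁ c₂ η : ℝ) (hc₁ : 0 < c₁) (hc₁' : c₁ < 1) (hc₂ : 0 < c₂) (hc₂' : c₂ < 1)
    (hη : 0 < η) (hη' : η < 1) :
    ∃ m₀ : ℕ, ∀ m : ℕ, m₀ ≤ m →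
    ∀ (V : Type) [DecidableEq V] (A B : Finset V), Disjoint A B →
    A.card = ⌊c₁ * m⌋₊ → c₂ * 2 ^ (m ^ 2) ≤ (B.card : ℝ) →
    ∀ H : Finset (Finset V),
    (∀ e ∈ H, e.card = 3 ∧ (e ∩ A).card = 1 ∧ (e ∩ B).card = 2) →
    η * A.card * (B.card.choose 2 : ℝ) ≤ (H.card : ℝ) →
    ∃ A' B' B'' : Finset V, A' ⊆ A ∧ B' ⊆ B ∧ B'' ⊆ B ∧ Disjoint B' B'' ∧
      A'.card = B'.card ∧ B'.card = B''.card ∧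
      ⌊η * A.card / 2⌋₊ ≤ A'.card ∧
      ∀ a ∈ A', ∀ b ∈ B', ∀ b' ∈ B'', ({a, b, b'} : Finset V) ∈ H := by
  obtain ⟨m₀, hkey⟩ := key_growth c₁ c₂ η hc₁ hc₁' hc₂ hη hη'
  refine ⟨m₀, fun m hm V _ A B hAB hA hB H hedge hcount => ?_⟩
  obtain ⟨h2n, hgrow⟩ := hkey m hm
  set t := ⌊η * A.card / 2⌋₊ with ht
  by_cases ht0 : t = 0
  · refine ⟨∅, ∅, ∅, empty_subset _, empty_subset _, empty_subset _, disjoint_empty_left _,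
      rfl, rfl, by simp [ht0], by simp⟩
  -- main case
  have ht1 : 1 ≤ t := Nat.one_le_iff_ne_zero.2 ht0
  have htR : (t:ℝ) ≤ η * A.card / 2 := Nat.floor_le (by positivity)
  have haR : (0:ℝ) < A.card := by
    by_contra hcon
    push_neg at hcon
    have : (A.card:ℝ) = 0 := le_antisymm hcon (by positivity)
    rw [this] at htR
    simp at htR
    have : (t:ℝ) ≥ 1 := by exact_mod_cast ht1
    linarith
  have ha1 : 1 ≤ A.card := by exact_mod_cast haR
  have htaR : (t:ℝ) ≤ A.card := by nlinarith
  have hta : t ≤ A.card := by exact_mod_cast htaR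
  have hNR : (2:ℝ) ≤ B.card := le_trans h2n hB
  have hN2 : 2 ≤ B.card := by exact_mod_cast hNR
  -- notation
  set n := B.card with hn
  classical
  -- pairs and degrees
  set Pairs := B.powersetCard 2 with hPairs
  set deg : Finset V → ℕ := fun p => (A.filter fun x => insert x p ∈ H).card with hdeg
  -- C1 : edge count
  have hC1 : H.card = ∑ p ∈ Pairs, deg p := by
    have hfib : ∀ e ∈ H, e ∩ B ∈ Pairs := fun e he =>
      mem_powersetCard.2 ⟨inter_subset_right, (hedge e he).2.2⟩
    rw [card_eq_sum_card_fiberwise hfib]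
    refine sum_congr rfl fun p hp => ?_
    obtain ⟨hpB, hp2⟩ := mem_powersetCard.1 hp
    refine (card_bij (fun x _ => insert x p) ?_ ?_ ?_).symm
    · intro x hx
      obtain ⟨hxA, hxH⟩ := mem_filter.1 hx
      have hxB : x ∉ B := disjoint_left.1 hAB hxA
      refine mem_filter.2 ⟨hxH, ?_⟩
      rw [insert_inter_of_notMem hxB, inter_eq_left.2 hpB]
    · intro x hx y hy hxy
      have hxA := (mem_filter.1 hx).1
      have hxp : x ∉ p := fun hc => disjoint_left.1 hAB hxA (hpB hc)
      have : x ∈ insert y p := by rw [← hxy]; exact mem_insert_self x p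
      rcases mem_insert.1 this with h | h
      · exact h
      · exact absurd h hxp
    · intro e he
      obtain ⟨heH, heB⟩ := mem_filter.1 he
      obtain ⟨he3, he1, he2⟩ := hedge e heH
      obtain ⟨x, hx⟩ := card_eq_one.1 he1
      have hxmem : x ∈ e ∩ A := hx ▸ mem_singleton_self x
      have hxA : x ∈ A := (mem_inter.1 hxmem).2
      have hxe : x ∈ e := (mem_inter.1 hxmem).1
      have hxp : x ∉ p := fun hc => disjoint_left.1 hAB hxA (hpB hc)
      have hsub : insert x p ⊆ e := by
        rw [← heB]
        exact insert_subset hxe inter_subset_left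
      have hcard : e.card ≤ (insert x p).card := by
        rw [card_insert_of_notMem hxp, hp2, he3]
      have hep : insert x p = e := eq_of_subset_of_card_le hsub hcard
      exact ⟨x, mem_filter.2 ⟨hxA, by rw [hep]; exact heH⟩, hep⟩
  have hsum : η * A.card * (n.choose 2 : ℝ) ≤ ∑ p ∈ Pairs, (deg p : ℝ) := by
    rw [← Nat.cast_sum, ← hC1]; exact hcount
  -- heavy pairs
  set heavy := Pairs.filter (fun p => t ≤ deg p) with hheavyd
  have hheavy : η * (n.choose 2 : ℝ) ≤ 2 * heavy.card := by
    have hsplit := sum_filter_add_sum_filter_not Pairs (fun p => t ≤ deg p) (fun p => (deg p : ℝ))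
    have h1 : ∑ p ∈ heavy, (deg p : ℝ) ≤ heavy.card * A.card := by
      rw [← nsmul_eq_mul]
      exact sum_le_card_nsmul _ _ _ (fun p _ => by
        exact_mod_cast card_filter_le A (fun x => insert x p ∈ H))
    have h2 : ∑ p ∈ Pairs.filter (fun p => ¬ t ≤ deg p), (deg p : ℝ)
        ≤ (n.choose 2 : ℝ) * (η * A.card / 2) := by
      have hb : ∀ p ∈ Pairs.filter (fun p => ¬ t ≤ deg p), (deg p : ℝ) ≤ η * A.card / 2 := by
        intro p hp
        have hlt : deg p < t := by
          have := (mem_filter.1 hp).2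
          omega
        have : (deg p : ℝ) < t := by exact_mod_cast hlt
        linarith
      calc ∑ p ∈ Pairs.filter (fun p => ¬ t ≤ deg p), (deg p : ℝ)
          ≤ (Pairs.filter (fun p => ¬ t ≤ deg p)).card • (η * A.card / 2) :=
            sum_le_card_nsmul _ _ _ hb
        _ = (Pairs.filter (fun p => ¬ t ≤ deg p)).card * (η * A.card / 2) := nsmul_eq_mul _ _
        _ ≤ (n.choose 2 : ℝ) * (η * A.card / 2) := by
            have hle : (Pairs.filter (fun p => ¬ t ≤ deg p)).card ≤ n.choose 2 := by
              rw [← card_powersetCard 2 B]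
              exact card_le_card (filter_subset _ _)
            have : ((Pairs.filter (fun p => ¬ t ≤ deg p)).card : ℝ) ≤ (n.choose 2 : ℝ) := by
              exact_mod_cast hle
            have hpos : (0:ℝ) ≤ η * A.card / 2 := by positivity
            exact mul_le_mul_of_nonneg_right this hpos
    have h4 : (η * (n.choose 2 : ℝ) / 2) * A.card ≤ (heavy.card : ℝ) * A.card := by
      rw [← hsplit] at hsum
      linarith [hsum, h1, h2]
    have h5 := le_of_mul_le_mul_right h4 haR
    linarith
  -- subsets of A of size t
  set SS := A.powersetCard t with hSS
  set ES : Finset V → Finset (Finset V) :=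
    fun S => Pairs.filter (fun p => ∀ x ∈ S, insert x p ∈ H) with hES
  have hswap : heavy.card ≤ ∑ S ∈ SS, (ES S).card := by
    have hstep : ∀ p ∈ heavy, 1 ≤ (SS.filter fun S' => ∀ x ∈ S', insert x p ∈ H).card := by
      intro p hp
      have hpt : t ≤ deg p := (mem_filter.1 hp).2
      obtain ⟨S₀, hS₀sub, hS₀card⟩ := exists_subset_card_eq hpt
      refine card_pos.2 ⟨S₀, mem_filter.2 ⟨mem_powersetCard.2
        ⟨hS₀sub.trans (filter_subset _ _), hS₀card⟩,
        fun x hx => (mem_filter.1 (hS₀sub hx)).2⟩⟩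
    calc heavy.card = ∑ _p ∈ heavy, 1 := (card_eq_sum_ones heavy)
      _ ≤ ∑ p ∈ heavy, (SS.filter fun S' => ∀ x ∈ S', insert x p ∈ H).card :=
          sum_le_sum hstep
      _ ≤ ∑ p ∈ Pairs, (SS.filter fun S' => ∀ x ∈ S', insert x p ∈ H).card :=
          sum_le_sum_of_subset (filter_subset _ _)
      _ = ∑ S' ∈ SS, (ES S').card := by
          simp only [hES]
          simp_rw [card_filter]
          exact sum_comm
  have hSSne : SS.Nonempty := powersetCard_nonempty.2 hta
  obtain ⟨S, hSmem, hSmax⟩ := exists_max_image SS (fun S => (ES S).card) hSSne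
  have hSsub : S ⊆ A := (mem_powersetCard.1 hSmem).1
  have hScard : S.card = t := (mem_powersetCard.1 hSmem).2
  set E := ES S with hE
  have hpick : heavy.card ≤ 2 ^ A.card * E.card := by
    have hSScard : SS.card ≤ 2 ^ A.card := by
      rw [hSS, ← card_powerset A]
      exact card_le_card (by rw [powersetCard_eq_filter]; exact filter_subset _ _)
    calc heavy.card ≤ ∑ S' ∈ SS, (ES S').card := hswap
      _ ≤ SS.card • (ES S).card := sum_le_card_nsmul _ _ _ (fun S' hS' => hSmax S' hS')
      _ = SS.card * E.card := by rw [smul_eq_mul]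
      _ ≤ 2 ^ A.card * E.card := Nat.mul_le_mul_right _ hSScard
  -- the real lower bound for E.card
  have heE : η * (n:ℝ)^2 ≤ 2^(A.card+3) * E.card := by
    have hC4 : (n:ℝ)^2 ≤ 4 * (n.choose 2 : ℝ) := by
      rw [Nat.cast_choose_two]
      nlinarith [hNR]
    have hstep1 : η * (n:ℝ)^2 ≤ η * (4 * (n.choose 2 : ℝ)) :=
      mul_le_mul_of_nonneg_left hC4 hη.le
    have hpickR : (heavy.card : ℝ) ≤ 2^A.card * E.card := by exact_mod_cast hpick
    have hpow : (2:ℝ)^(A.card+3) = 2^A.card * 8 := by rw [pow_add]; norm_num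
    rw [hpow]
    linarith [hstep1, hheavy, hpickR]
  -- graph degrees
  set nbr : V → Finset V := fun v => B.filter (fun u => ({v, u} : Finset V) ∈ E) with hnbr
  set d : V → ℕ := fun v => (nbr v).card with hd
  have hdsum : E.card ≤ ∑ v ∈ B, d v := by
    set Q := (B ×ˢ B).filter (fun q => ({q.1, q.2} : Finset V) ∈ E) with hQ
    have hQcard : Q.card = ∑ v ∈ B, d v := by
      have hfst : ∀ q ∈ Q, q.1 ∈ B := fun q hq => (mem_product.1 (mem_filter.1 hq).1).1
      rw [card_eq_sum_card_fiberwise hfst]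
      refine sum_congr rfl fun v hv => ?_
      show _ = (nbr v).card
      refine card_bij (fun q (_ : q ∈ Q.filter (fun q => q.1 = v)) => q.2) ?_ ?_ ?_
      · intro q hq
        obtain ⟨hqQ, hqv⟩ := mem_filter.1 hq
        obtain ⟨hqBB, hqE⟩ := mem_filter.1 hqQ
        refine mem_filter.2 ⟨(mem_product.1 hqBB).2, ?_⟩
        rw [← hqv]; exact hqE
      · intro q hq q' hq' hqq
        have h1 : q.1 = v := (mem_filter.1 hq).2
        have h2 : q'.1 = v := (mem_filter.1 hq').2
        exact Prod.ext (h1.trans h2.symm) hqq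
      · intro u hu
        obtain ⟨huB, huE⟩ := mem_filter.1 hu
        exact ⟨(v, u), mem_filter.2 ⟨mem_filter.2 ⟨mem_product.2 ⟨hv, huB⟩, huE⟩, rfl⟩, rfl⟩
    have hQle : E.card ≤ Q.card := by
      refine card_le_card_of_surjOn (fun q => ({q.1, q.2} : Finset V)) ?_
      intro p hp
      have hpE : p ∈ E := hp
      have hpP : p ∈ Pairs := mem_of_mem_filter p hpE
      obtain ⟨hpB, hp2⟩ := mem_powersetCard.1 hpP
      obtain ⟨x, y, hxy, hpxy⟩ := card_eq_two.1 hp2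
      have hxB : x ∈ B := hpB (by rw [hpxy]; exact mem_insert_self x {y})
      have hyB : y ∈ B := hpB (by rw [hpxy]; exact mem_insert_of_mem (mem_singleton_self y))
      refine ⟨(x, y), ?_, ?_⟩
      · exact mem_coe.2 (mem_filter.2 ⟨mem_product.2 ⟨hxB, hyB⟩, by rw [← hpxy]; exact hpE⟩)
      · exact hpxy.symm
    omega
  set hi := B.filter (fun v => (E.card:ℝ) ≤ 2 * n * d v) with hhi
  have hhicard : (E.card : ℝ) ≤ 2 * n * hi.card := by
    have hnpos : (0:ℝ) < n := by linarith
    have hsplit := sum_filter_add_sum_filter_not B (fun v => (E.card:ℝ) ≤ 2 * n * d v)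
      (fun v => (d v : ℝ))
    have hlo : ∑ v ∈ B.filter (fun v => ¬ ((E.card:ℝ) ≤ 2 * n * d v)), (d v : ℝ)
        ≤ (E.card : ℝ) / 2 := by
      have hb : ∀ v ∈ B.filter (fun v => ¬ ((E.card:ℝ) ≤ 2 * n * d v)),
          (d v : ℝ) ≤ (E.card : ℝ) / (2 * n) := by
        intro v hv
        have hlt : 2 * (n:ℝ) * d v < E.card := lt_of_not_ge (mem_filter.1 hv).2
        rw [le_div_iff₀ (by linarith)]
        linarith
      calc ∑ v ∈ B.filter (fun v => ¬ ((E.card:ℝ) ≤ 2 * n * d v)), (d v : ℝ)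
          ≤ (B.filter (fun v => ¬ ((E.card:ℝ) ≤ 2 * n * d v))).card • ((E.card : ℝ) / (2 * n)) :=
            sum_le_card_nsmul _ _ _ hb
        _ = (B.filter (fun v => ¬ ((E.card:ℝ) ≤ 2 * n * d v))).card * ((E.card : ℝ) / (2 * n)) :=
            nsmul_eq_mul _ _
        _ ≤ n * ((E.card : ℝ) / (2 * n)) := by
            have h1 : ((B.filter (fun v => ¬ ((E.card:ℝ) ≤ 2 * n * d v))).card : ℝ) ≤ n := by
              exact_mod_cast card_filter_le B _
            exact mul_le_mul_of_nonneg_right h1 (by positivity)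
        _ = (E.card : ℝ) / 2 := by field_simp
    have hhi2 : ∑ v ∈ hi, (d v : ℝ) ≤ hi.card * n := by
      rw [← nsmul_eq_mul]
      refine sum_le_card_nsmul _ _ _ fun v hv => ?_
      exact_mod_cast card_filter_le B _
    have hdsumR : (E.card : ℝ) ≤ ∑ v ∈ B, (d v : ℝ) := by
      rw [← Nat.cast_sum]
      exact_mod_cast hdsum
    rw [← hsplit] at hdsumR
    have hhieq : ∑ v ∈ hi, (d v : ℝ) = ∑ v ∈ B.filter (fun v => (E.card:ℝ) ≤ 2 * n * d v), (d v : ℝ) := by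
      rw [hhi]
    linarith [hdsumR, hlo, hhi2, hhieq.symm.le, hhieq.le]
  -- D, lower bound on degrees
  set D := η * n / 2^(A.card+4) with hD
  have hnpos : (0:ℝ) < n := by linarith
  have hPpos : (0:ℝ) < 2^(A.card+4) := by positivity
  have hpow4 : (2:ℝ)^(A.card+4) = 2^(A.card+3) * 2 := by rw [pow_succ]
  have hD1 : ∀ v ∈ hi, D ≤ (d v : ℝ) := by
    intro v hv
    have hvE : (E.card:ℝ) ≤ 2 * n * d v := (mem_filter.1 hv).2
    have hstep : η * (n:ℝ)^2 ≤ 2^(A.card+4) * (n * d v) := by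
      have h2 : (2:ℝ)^(A.card+3) * (E.card:ℝ) ≤ 2^(A.card+3) * (2 * n * d v) :=
        mul_le_mul_of_nonneg_left hvE (by positivity)
      rw [hpow4]
      nlinarith [heE]
    have hcancel : η * (n:ℝ) ≤ 2^(A.card+4) * d v := by
      nlinarith [hstep, hnpos]
    rw [hD, div_le_iff₀ hPpos]
    linarith [hcancel]
  have hD2 : D ≤ (hi.card : ℝ) := by
    have hstep : η * (n:ℝ)^2 ≤ 2^(A.card+4) * (n * hi.card) := by
      have h2 : (2:ℝ)^(A.card+3) * (E.card:ℝ) ≤ 2^(A.card+3) * (2 * n * hi.card) :=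
        mul_le_mul_of_nonneg_left hhicard (by positivity)
      rw [hpow4]
      nlinarith [heE]
    have hcancel : η * (n:ℝ) ≤ 2^(A.card+4) * hi.card := by
      nlinarith [hstep, hnpos]
    rw [hD, div_le_iff₀ hPpos]
    linarith [hcancel]
  -- key growth instance
  have hkey2 : 2 * ((t:ℝ))^(t+1) * 2^((A.card+4)*(t+1)) < η^(t+1) * (n:ℝ) := by
    have hacm : (A.card : ℝ) ≤ c₁ * m := by
      rw [hA]
      exact Nat.floor_le (by positivity)
    have hbig := hgrow A.card ha1 hacm
    have ha1R : (1:ℝ) ≤ A.card := by exact_mod_cast ha1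
    have h1 : ((t:ℝ))^(t+1) ≤ ((A.card:ℝ))^(A.card+1) := by
      calc ((t:ℝ))^(t+1) ≤ ((A.card:ℝ))^(t+1) :=
            pow_le_pow_left₀ (by positivity) htaR _
        _ ≤ ((A.card:ℝ))^(A.card+1) := pow_le_pow_right₀ ha1R (by omega)
    have h2 : (2:ℝ)^((A.card+4)*(t+1)) ≤ 2^((A.card+4)*(A.card+1)) :=
      pow_le_pow_right₀ one_le_two (Nat.mul_le_mul_left _ (by omega))
    have h3 : η^(A.card+1) ≤ η^(t+1) :=
      pow_le_pow_of_le_one hη.le hη'.le (by omega)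
    have h4 : η^(t+1) * (c₂ * 2^(m^2)) ≤ η^(t+1) * (n:ℝ) :=
      mul_le_mul_of_nonneg_left hB (by positivity)
    have h5 : 2 * ((t:ℝ))^(t+1) * 2^((A.card+4)*(t+1))
        ≤ 2 * ((A.card:ℝ))^(A.card+1) * 2^((A.card+4)*(A.card+1)) := by
      have := mul_le_mul h1 h2 (by positivity) (by positivity)
      nlinarith [this]
    have h6 : η^(A.card+1) * (c₂ * 2^(m^2)) ≤ η^(t+1) * (c₂ * 2^(m^2)) := by
      have hc2pos : (0:ℝ) ≤ c₂ * 2^(m^2) := by positivity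
      exact mul_le_mul_of_nonneg_right h3 hc2pos
    linarith [h5, hbig, h6, h4]
  have hDt : (t:ℝ) ≤ D := by
    have ht1R : (1:ℝ) ≤ t := by exact_mod_cast ht1
    have h1 : (t:ℝ) ≤ ((t:ℝ))^(t+1) := by
      calc (t:ℝ) = (t:ℝ)^1 := (pow_one _).symm
        _ ≤ ((t:ℝ))^(t+1) := pow_le_pow_right₀ ht1R (by omega)
    have h2 : (2:ℝ)^(A.card+4) ≤ 2^((A.card+4)*(t+1)) :=
      pow_le_pow_right₀ one_le_two (by nlinarith [ht1])
    have h3 : η^(t+1) ≤ η := by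
      calc η^(t+1) ≤ η^1 := pow_le_pow_of_le_one hη.le hη'.le (by omega)
        _ = η := pow_one _
    have h4 : (t:ℝ) * 2^(A.card+4) ≤ ((t:ℝ))^(t+1) * 2^((A.card+4)*(t+1)) :=
      mul_le_mul h1 h2 (by positivity) (by positivity)
    have h5 : η^(t+1) * (n:ℝ) ≤ η * n := mul_le_mul_of_nonneg_right h3 (by positivity)
    rw [hD, le_div_iff₀ hPpos]
    nlinarith [hkey2, h4, h5]
  -- find T with large codegree
  have hT : ∃ T ∈ B.powersetCard t, 2*t + 1 ≤ (B.filter fun v => T ⊆ nbr v).card := by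
    by_contra hcon
    push_neg at hcon
    -- every t-set has codegree ≤ 2t : double count and contradict
    set M := ∑ v ∈ B, (d v).choose t with hM
    have hMeq : M = ∑ T ∈ B.powersetCard t, (B.filter fun v => T ⊆ nbr v).card := by
      have h1 : ∀ v ∈ B, (d v).choose t = ((B.powersetCard t).filter (fun T => T ⊆ nbr v)).card := by
        intro v hv
        have hnb : nbr v ⊆ B := filter_subset _ _
        rw [show d v = (nbr v).card from rfl, ← card_powersetCard t (nbr v)]
        congr 1
        ext T
        simp only [mem_powersetCard, mem_filter]
        constructor
        · exact fun ⟨hsub, hc⟩ => ⟨⟨hsub.trans hnb, hc⟩, hsub⟩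
        · exact fun ⟨⟨_, hc⟩, hsub⟩ => ⟨hsub, hc⟩
      rw [hM, sum_congr rfl h1]
      simp_rw [card_filter]
      rw [sum_comm]
    have hMub : M ≤ (B.powersetCard t).card * (2*t) := by
      rw [hMeq, ← smul_eq_mul]
      exact sum_le_card_nsmul _ _ _ fun T hT => by have := hcon T hT; omega
    have hMubR : (M:ℝ) ≤ 2 * t * (n:ℝ)^t := by
      have h1 : ((B.powersetCard t).card : ℝ) ≤ (n:ℝ)^t := by
        rw [card_powersetCard]
        calc ((n.choose t : ℕ) : ℝ) ≤ ((n^t : ℕ) : ℝ) := by exact_mod_cast Nat.choose_le_pow n t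
          _ = (n:ℝ)^t := by push_cast; ring
      have h2 : (M:ℝ) ≤ ((B.powersetCard t).card : ℝ) * (2*t) := by exact_mod_cast hMub
      have h3 : ((B.powersetCard t).card : ℝ) * (2*(t:ℝ)) ≤ (n:ℝ)^t * (2*t) :=
        mul_le_mul_of_nonneg_right h1 (by positivity)
      calc (M:ℝ) ≤ ((B.powersetCard t).card : ℝ) * (2*(t:ℝ)) := by exact_mod_cast h2
        _ ≤ (n:ℝ)^t * (2*t) := h3
        _ = 2 * t * (n:ℝ)^t := by ring
    have hDpos : 0 ≤ D := by rw [hD]; positivity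
    have hMlb : D * D^t ≤ (t:ℝ)^t * M := by
      have hstep : ∀ v ∈ hi, D^t ≤ (t:ℝ)^t * ((d v).choose t : ℝ) := by
        intro v hv
        have hdv : (t:ℝ) ≤ d v := le_trans hDt (hD1 v hv)
        have hdvN : t ≤ d v := by exact_mod_cast hdv
        calc D^t ≤ ((d v : ℝ))^t := pow_le_pow_left₀ hDpos (hD1 v hv) t
          _ ≤ (t:ℝ)^t * ((d v).choose t : ℝ) := pow_le_pow_mul_choose (d v) t hdvN
      calc D * D^t ≤ hi.card * D^t :=
            mul_le_mul_of_nonneg_right hD2 (by positivity)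
        _ = ∑ _v ∈ hi, D^t := by rw [sum_const, nsmul_eq_mul]
        _ ≤ ∑ v ∈ hi, (t:ℝ)^t * ((d v).choose t : ℝ) := sum_le_sum hstep
        _ = (t:ℝ)^t * ∑ v ∈ hi, ((d v).choose t : ℝ) := by rw [mul_sum]
        _ ≤ (t:ℝ)^t * M := by
            have h1 : ∑ v ∈ hi, ((d v).choose t : ℝ) ≤ (M:ℝ) := by
              rw [hM]
              have h2 : ∑ v ∈ hi, (d v).choose t ≤ ∑ v ∈ B, (d v).choose t :=
                sum_le_sum_of_subset (filter_subset _ _)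
              push_cast
              exact_mod_cast h2
            exact mul_le_mul_of_nonneg_left h1 (by positivity)
    -- assemble the contradiction
    have hDpow : D^(t+1) * (2:ℝ)^((A.card+4)*(t+1)) = η^(t+1) * (n:ℝ)^(t+1) := by
      rw [hD, div_pow, pow_mul, div_mul_cancel₀, mul_pow]
      positivity
    have hchain : D^(t+1) ≤ 2 * (t:ℝ)^(t+1) * (n:ℝ)^t := by
      calc D^(t+1) = D * D^t := by rw [pow_succ]; ring
        _ ≤ (t:ℝ)^t * M := hMlb
        _ ≤ (t:ℝ)^t * (2 * t * (n:ℝ)^t) :=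
            mul_le_mul_of_nonneg_left hMubR (by positivity)
        _ = 2 * (t:ℝ)^(t+1) * (n:ℝ)^t := by rw [pow_succ]; ring
    have hfin : η^(t+1) * (n:ℝ)^(t+1) ≤ 2 * (t:ℝ)^(t+1) * 2^((A.card+4)*(t+1)) * (n:ℝ)^t := by
      rw [← hDpow]
      calc D^(t+1) * (2:ℝ)^((A.card+4)*(t+1))
          ≤ (2 * (t:ℝ)^(t+1) * (n:ℝ)^t) * (2:ℝ)^((A.card+4)*(t+1)) :=
            mul_le_mul_of_nonneg_right hchain (by positivity)
        _ = 2 * (t:ℝ)^(t+1) * 2^((A.card+4)*(t+1)) * (n:ℝ)^t := by ring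
    have hcancel : η^(t+1) * (n:ℝ) ≤ 2 * (t:ℝ)^(t+1) * 2^((A.card+4)*(t+1)) := by
      have hnt : (0:ℝ) < (n:ℝ)^t := by positivity
      have := hfin
      rw [show η^(t+1) * (n:ℝ)^(t+1) = (η^(t+1) * (n:ℝ)) * (n:ℝ)^t by rw [pow_succ]; ring] at this
      exact le_of_mul_le_mul_right this hnt
    linarith [hkey2]
  obtain ⟨T, hTmem, hTcard⟩ := hT
  have hTsub : T ⊆ B := (mem_powersetCard.1 hTmem).1
  have hTc : T.card = t := (mem_powersetCard.1 hTmem).2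
  set W := B.filter (fun v => T ⊆ nbr v) with hW
  have hWT : t ≤ (W \ T).card := by
    have h1 := le_card_sdiff T W
    omega
  obtain ⟨B'', hB''sub, hB''card⟩ := exists_subset_card_eq hWT
  refine ⟨S, T, B'', hSsub, hTsub, fun x hx => mem_of_mem_filter x ((mem_sdiff.1 (hB''sub hx)).1), ?_, by rw [hScard, hTc], by rw [hTc, hB''card], ?_, ?_⟩
  · exact disjoint_left.2 fun x hxT hxB'' => (mem_sdiff.1 (hB''sub hxB'')).2 hxT
  · exact hScard.ge
  · intro x hxS b hbT b'' hb''
    have hb''W : b'' ∈ W := (mem_sdiff.1 (hB''sub hb'')).1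
    have hTn : T ⊆ nbr b'' := (mem_filter.1 hb''W).2
    have hbnbr : b ∈ nbr b'' := hTn hbT
    have hpair : ({b'', b} : Finset V) ∈ E := (mem_filter.1 hbnbr).2
    have hall : ∀ y ∈ S, insert y ({b'', b} : Finset V) ∈ H := (mem_filter.1 hpair).2
    have hins := hall x hxS
    have heq : ({x, b, b''} : Finset V) = insert x ({b'', b} : Finset V) := by
      rw [pair_comm b'' b]
    rw [heq]
    exact hins
end

section
/- There exist α₀ > 0 and n₀ such that for every α ∈ (0, α₀) and every n ≥ n₀ divisible by 3 the following holds. Let H be a 3-graph on an n-element vertex set V with δ₁(H) ≥ C(n−1,2) − C(2n/3,2) + 1, and let V = A ∪ B be a partition with |A| = n/3, |B| = 2n/3 and e(H|_B) < 6α·C(2n/3,3). Then the set S_B = { b ∈ B : deg(b, B×A) < α^(1/3)·(n/3)·(2n/3 − 1) } satisfies |S_B| ≤ 40α·|B|. -/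
attribute [local instance] Classical.propDecidable

/-- `deg(a, C(B,2))`: the number of 2-element subsets `{b,b'}` of `B` with
`{a,b,b'} ∈ H`. -/
def degA {V : Type} [DecidableEq V] (H : Finset (Finset V)) (B : Finset V) (a : V) : ℕ :=
  ((B.powersetCard 2).filter fun p => insert a p ∈ H).card

/-- `deg(b, B×A)`: the number of pairs `(b', a)` with `b' ∈ B ∖ {b}`, `a ∈ A` and
`{b,b',a} ∈ H`. -/
def degB {V : Type} [DecidableEq V] (H : Finset (Finset V)) (A B : Finset V) (b : V) : ℕ :=
  (((B.erase b) ×ˢ A).filter fun q => ({b, q.1, q.2} : Finset V) ∈ H).card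

lemma double_count {V : Type} [DecidableEq V] (S : Finset V) (T : Finset (Finset V))
    (h3 : ∀ e ∈ T, e.card = 3) :
    ∑ b ∈ S, (T.filter fun e => b ∈ e).card ≤ 3 * T.card := by
  have h : ∑ b ∈ S, (T.filter fun e => b ∈ e).card
      = ∑ e ∈ T, (S.filter fun b => b ∈ e).card := by
    simp only [Finset.card_filter]
    exact Finset.sum_comm
  rw [h]
  calc ∑ e ∈ T, (S.filter fun b => b ∈ e).card ≤ ∑ _e ∈ T, 3 := by
        apply Finset.sum_le_sum
        intro e he
        calc (S.filter fun b => b ∈ e).card ≤ e.card :=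
              Finset.card_le_card (fun x hx => (Finset.mem_filter.mp hx).2)
          _ = 3 := h3 e he
    _ = 3 * T.card := by rw [Finset.sum_const, smul_eq_mul, mul_comm]

lemma deg_split {V : Type} [Fintype V] [DecidableEq V] (H : Finset (Finset V))
    (h3 : ∀ e ∈ H, e.card = 3) (A B : Finset V) (hdisj : Disjoint A B)
    (hcover : A ∪ B = Finset.univ) (b : V) (hb : b ∈ B) :
    (H.filter fun e => b ∈ e).card ≤
      ((H.filter fun e => e ⊆ B).filter fun e => b ∈ e).card + degB H A B b
        + A.card.choose 2 := by
  have hbA : b ∉ A := fun h => (Finset.disjoint_left.mp hdisj h) hb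
  set F0 := (H.filter fun e => e ⊆ B).filter fun e => b ∈ e with hF0
  set F1 := H.filter (fun e => b ∈ e ∧ (e ∩ A).card = 1) with hF1
  set F2 := H.filter (fun e => b ∈ e ∧ (e ∩ A).card = 2) with hF2
  have hsub : H.filter (fun e => b ∈ e) ⊆ (F0 ∪ F1) ∪ F2 := by
    intro e he
    obtain ⟨heH, hbe⟩ := Finset.mem_filter.mp he
    have hle2 : (e ∩ A).card ≤ 2 := by
      have hsub' : e ∩ A ⊆ e.erase b := by
        intro x hx
        obtain ⟨hxe, hxA⟩ := Finset.mem_inter.mp hx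
        exact Finset.mem_erase.mpr ⟨fun h => hbA (h ▸ hxA), hxe⟩
      calc (e ∩ A).card ≤ (e.erase b).card := Finset.card_le_card hsub'
        _ = 2 := by rw [Finset.card_erase_of_mem hbe, h3 e heH]
    interval_cases h : (e ∩ A).card
    · have heB : e ⊆ B := by
        intro x hxe
        have hxA : x ∉ A := fun hxA =>
          Finset.notMem_empty x (Finset.card_eq_zero.mp h ▸ Finset.mem_inter.mpr ⟨hxe, hxA⟩)
        rcases Finset.mem_union.mp (hcover ▸ Finset.mem_univ x) with h' | h'
        · exact absurd h' hxA
        · exact h'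
      exact Finset.mem_union.mpr (Or.inl (Finset.mem_union.mpr (Or.inl
        (Finset.mem_filter.mpr ⟨Finset.mem_filter.mpr ⟨heH, heB⟩, hbe⟩))))
    · exact Finset.mem_union.mpr (Or.inl (Finset.mem_union.mpr (Or.inr
        (Finset.mem_filter.mpr ⟨heH, hbe, h⟩))))
    · exact Finset.mem_union.mpr (Or.inr (Finset.mem_filter.mpr ⟨heH, hbe, h⟩))
  have hcard : (H.filter fun e => b ∈ e).card ≤ F0.card + F1.card + F2.card :=
    le_trans (Finset.card_le_card hsub)
      (le_trans (Finset.card_union_le _ _) (Nat.add_le_add_right (Finset.card_union_le _ _) _))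
  have hF1le : F1.card ≤ degB H A B b := by
    apply Finset.card_le_card_of_surjOn (fun q => ({b, q.1, q.2} : Finset V))
    intro e he
    obtain ⟨heH, hbe, hcard1⟩ := Finset.mem_filter.mp (Finset.mem_coe.mp he)
    have he3 := h3 e heH
    obtain ⟨a, ha⟩ := Finset.card_eq_one.mp hcard1
    have haA : a ∈ A := (Finset.mem_inter.mp (ha ▸ Finset.mem_singleton_self a)).2
    have hae : a ∈ e := (Finset.mem_inter.mp (ha ▸ Finset.mem_singleton_self a)).1
    have hba : b ≠ a := fun h => hbA (h ▸ haA)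
    have hcard2 : (e.erase a).card = 2 := by
      rw [Finset.card_erase_of_mem hae, he3]
    obtain ⟨x, y, hxy, hexy⟩ := Finset.card_eq_two.mp hcard2
    have hb' : b ∈ e.erase a := Finset.mem_erase.mpr ⟨hba, hbe⟩
    have hbxy : b = x ∨ b = y := by rw [hexy] at hb'; simpa using hb'
    have hex : ∃ b', b' ≠ b ∧ b' ∈ e.erase a := by
      rcases hbxy with h | h
      · exact ⟨y, by rw [h]; exact hxy.symm, by rw [hexy]; simp⟩
      · exact ⟨x, by rw [h]; exact hxy, by rw [hexy]; simp⟩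
    obtain ⟨b', hb'b, hb'ea⟩ := hex
    have hb'e : b' ∈ e := Finset.mem_of_mem_erase hb'ea
    have hb'a : b' ≠ a := (Finset.mem_erase.mp hb'ea).1
    have hb'A : b' ∉ A := fun h => by
      have : b' ∈ e ∩ A := Finset.mem_inter.mpr ⟨hb'e, h⟩
      rw [ha] at this
      exact hb'a (Finset.mem_singleton.mp this)
    have hb'B : b' ∈ B := by
      rcases Finset.mem_union.mp (hcover ▸ Finset.mem_univ b') with h | h
      · exact absurd h hb'A
      · exact h
    have heq : ({b, b', a} : Finset V) = e := by
      have h1 : ({b, b'} : Finset V) ⊆ e.erase a := by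
        intro z hz
        rcases Finset.mem_insert.mp hz with h | h
        · exact h ▸ hb'
        · exact (Finset.mem_singleton.mp h) ▸ hb'ea
      have h2 : ({b, b'} : Finset V).card = 2 := Finset.card_pair (Ne.symm hb'b)
      have h3' : ({b, b'} : Finset V) = e.erase a :=
        Finset.eq_of_subset_of_card_le h1 (by rw [h2, hcard2])
      have : insert a ({b, b'} : Finset V) = e := by
        rw [h3', Finset.insert_erase hae]
      rw [← this]
      ext z; simp; tauto
    refine ⟨(b', a), ?_, heq⟩
    refine Finset.mem_coe.mpr (Finset.mem_filter.mpr ⟨?_, ?_⟩)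
    · exact Finset.mem_product.mpr ⟨Finset.mem_erase.mpr ⟨hb'b, hb'B⟩, haA⟩
    · rw [heq]; exact heH
  have hF2le : F2.card ≤ A.card.choose 2 := by
    have key : ∀ e ∈ F2, e = insert b (e ∩ A) := by
      intro e he
      obtain ⟨heH, hbe, h2⟩ := Finset.mem_filter.mp he
      have hdisj' : Disjoint (e ∩ A) (e ∩ B) :=
        Finset.disjoint_left.mpr (fun x hx hx' =>
          (Finset.disjoint_left.mp hdisj (Finset.mem_inter.mp hx).2)
            (Finset.mem_inter.mp hx').2)
      have hun : e = (e ∩ A) ∪ (e ∩ B) := by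
        rw [← Finset.inter_union_distrib_left, hcover, Finset.inter_univ]
      have hc : (e ∩ B).card = 1 := by
        have h3e := h3 e heH
        have hcu := Finset.card_union_of_disjoint hdisj'
        rw [← hun] at hcu
        omega
      obtain ⟨c, hc'⟩ := Finset.card_eq_one.mp hc
      have hbc : b = c := by
        have : b ∈ e ∩ B := Finset.mem_inter.mpr ⟨hbe, hb⟩
        rw [hc'] at this
        exact Finset.mem_singleton.mp this
      conv_lhs => rw [hun, hc', ← hbc]
      rw [Finset.union_comm]; ext z; simp
    have hmaps : ∀ e ∈ F2, e ∩ A ∈ A.powersetCard 2 := by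
      intro e he
      obtain ⟨heH, hbe, h2⟩ := Finset.mem_filter.mp he
      exact Finset.mem_powersetCard.mpr ⟨Finset.inter_subset_right, h2⟩
    have hinj : Set.InjOn (fun e => e ∩ A) ↑F2 := by
      intro e1 he1 e2 he2 heq
      simp only at heq
      rw [key e1 (Finset.mem_coe.mp he1), key e2 (Finset.mem_coe.mp he2), heq]
    exact le_trans (Finset.card_le_card_of_injOn _ hmaps hinj)
      (le_of_eq (Finset.card_powersetCard 2 A))
  calc (H.filter fun e => b ∈ e).card ≤ F0.card + F1.card + F2.card := hcard
    _ ≤ F0.card + degB H A B b + A.card.choose 2 := by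
        exact add_le_add (Nat.add_le_add_left hF1le _) hF2le

/-- In the extremal configuration, the set `S_B` of strongly exceptional vertices of `B`
(those with `deg(b, B×A) < α^(1/3)·(n/3)·(2n/3 − 1)`) has size at most `40α·|B|`. -/
theorem stmt16 :
    ∃ α₀ : ℝ, 0 < α₀ ∧ ∃ n₀ : ℕ, ∀ α : ℝ, 0 < α → α < α₀ → ∀ n : ℕ, n₀ ≤ n → 3 ∣ n →
    ∀ (V : Type) [Fintype V] [DecidableEq V], Fintype.card V = n →
    ∀ H : Finset (Finset V), (∀ e ∈ H, e.card = 3) →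
    (∀ v : V, (n - 1).choose 2 - (2 * n / 3).choose 2 + 1 ≤ (H.filter fun e => v ∈ e).card) →
    ∀ A B : Finset V, Disjoint A B → A ∪ B = Finset.univ →
    A.card = n / 3 → B.card = 2 * n / 3 →
    ((H.filter fun e => e ⊆ B).card : ℝ) < 6 * α * ((2 * n / 3).choose 3 : ℝ) →
    (((B.filter fun b =>
        ((degB H A B b : ℝ) <
          α ^ ((1 : ℝ) / 3) * ((n / 3 : ℕ) : ℝ) * (((2 * n / 3 : ℕ) : ℝ) - 1))).card : ℝ))
      ≤ 40 * α * B.card := by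
  refine ⟨1/1000, by norm_num, 12, ?_⟩
  intro α hα0 hα1 n hn hdvd V _ _ hcardV H h3 hdeg A B hdisj hcover hA hB heB
  obtain ⟨m, rfl⟩ := hdvd
  have hm : 4 ≤ m := by omega
  have h23 : 2 * (3 * m) / 3 = 2 * m := by omega
  have h13 : 3 * m / 3 = m := by omega
  rw [h13] at hA
  rw [h23] at hB heB
  simp only [h13, h23] at hdeg ⊢
  set x : ℝ := (m : ℝ) with hx
  have hx4 : (4:ℝ) ≤ x := by rw [hx]; exact_mod_cast hm
  set t : ℝ := α ^ ((1:ℝ)/3) with ht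
  have ht0 : 0 < t := Real.rpow_pos_of_pos hα0 _
  have ht10 : t < 1/10 := by
    have h1 : α ^ ((1:ℝ)/3) < ((1:ℝ)/1000) ^ ((1:ℝ)/3) :=
      Real.rpow_lt_rpow hα0.le hα1 (by norm_num)
    have h2 : ((1:ℝ)/1000) ^ ((1:ℝ)/3) = 1/10 := by
      rw [show (1:ℝ)/1000 = ((1:ℝ)/10) ^ (3:ℝ) by
            rw [show (3:ℝ) = ((3:ℕ):ℝ) by norm_num, Real.rpow_natCast]; norm_num,
          ← Real.rpow_mul (by norm_num)]
      norm_num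
    rw [← ht] at h1
    linarith [h2 ▸ h1]
  set T := H.filter (fun e => e ⊆ B) with hT
  set S := B.filter (fun b =>
      (degB H A B b : ℝ) < t * ((m : ℕ) : ℝ) * (((2*m : ℕ) : ℝ) - 1)) with hS
  set L : ℝ := (((3*m-1).choose 2 : ℕ) : ℝ) - (((2*m).choose 2 : ℕ) : ℝ) + 1
      - ((m.choose 2 : ℕ) : ℝ) - t * x * (2*x - 1) with hLdef
  have hxx : (0:ℝ) ≤ x * (2*x - 1) := by nlinarith
  have htb : t * x * (2*x - 1) ≤ 1/10 * (x * (2*x - 1)) := by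
    have := mul_le_mul_of_nonneg_right ht10.le hxx
    linarith [this]
  have hL : L = 2*x^2 - 3*x + 2 - t*x*(2*x - 1) := by
    rw [hLdef, Nat.cast_choose_two, Nat.cast_choose_two, Nat.cast_choose_two]
    push_cast [Nat.cast_sub (show 1 ≤ 3*m by omega)]
    ring
  have hLpos : 0 < L := by rw [hL]; nlinarith [htb, hx4]
  have hper : ∀ b ∈ S, L ≤ ((T.filter fun e => b ∈ e).card : ℝ) := by
    intro b hbS
    obtain ⟨hbB, hdb⟩ := Finset.mem_filter.mp hbS
    have hdbr : (degB H A B b : ℝ) < t * x * (2*x - 1) := by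
      push_cast at hdb
      linarith [hdb]
    have hsplit := deg_split H h3 A B hdisj hcover b hbB
    rw [hA] at hsplit
    have hsplitr : ((H.filter fun e => b ∈ e).card : ℝ) ≤
        ((T.filter fun e => b ∈ e).card : ℝ) + (degB H A B b : ℝ)
          + ((m.choose 2 : ℕ) : ℝ) := by exact_mod_cast hsplit
    have hmono : (2*m).choose 2 ≤ (3*m-1).choose 2 := Nat.choose_le_choose 2 (by omega)
    have hd := hdeg b
    have hdr : (((3*m-1).choose 2 : ℕ) : ℝ) - (((2*m).choose 2 : ℕ) : ℝ) + 1
        ≤ ((H.filter fun e => b ∈ e).card : ℝ) := by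
      have h' : (((3*m-1).choose 2 - (2*m).choose 2 + 1 : ℕ) : ℝ)
          ≤ ((H.filter fun e => b ∈ e).card : ℝ) := Nat.cast_le.mpr hd
      rwa [Nat.cast_add, Nat.cast_sub hmono, Nat.cast_one] at h'
    rw [hLdef]
    linarith
  have hT3 : ∀ e ∈ T, e.card = 3 := fun e he => h3 e (Finset.mem_filter.mp he).1
  have hsum : (S.card : ℝ) * L ≤ 3 * (T.card : ℝ) := by
    calc (S.card : ℝ) * L ≤ ∑ b ∈ S, ((T.filter fun e => b ∈ e).card : ℝ) := by
          have := Finset.card_nsmul_le_sum S (fun b => ((T.filter fun e => b ∈ e).card : ℝ)) L hper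
          rwa [nsmul_eq_mul] at this
      _ = ((∑ b ∈ S, (T.filter fun e => b ∈ e).card : ℕ) : ℝ) := by push_cast; rfl
      _ ≤ ((3 * T.card : ℕ) : ℝ) := Nat.cast_le.mpr (double_count S T hT3)
      _ = 3 * (T.card : ℝ) := by push_cast; ring
  have hc3 : ((2*m).choose 3 : ℝ) ≤ (2*x)^3 / 6 := by
    have h := Nat.choose_le_pow_div (α := ℝ) 3 (2*m)
    have h6 : ((Nat.factorial 3 : ℕ) : ℝ) = 6 := by norm_num [Nat.factorial]
    rw [h6] at h
    calc ((2*m).choose 3 : ℝ) ≤ (((2*m : ℕ))^3 : ℝ) / 6 := by exact_mod_cast h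
      _ = (2*x)^3 / 6 := by push_cast; ring
  have hkey : 18 * (((2*m).choose 3 : ℕ) : ℝ) ≤ 80 * x * L := by
    rw [hL]
    nlinarith [hc3, htb, hx4, mul_le_mul_of_nonneg_left htb (by linarith : (0:ℝ) ≤ 80 * x)]
  have hfin : (S.card : ℝ) * L < 80 * α * x * L := by
    calc (S.card : ℝ) * L ≤ 3 * (T.card : ℝ) := hsum
      _ < 3 * (6 * α * (((2*m).choose 3 : ℕ) : ℝ)) := by
          linarith [heB]
      _ = α * (18 * (((2*m).choose 3 : ℕ) : ℝ)) := by ring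
      _ ≤ α * (80 * x * L) := mul_le_mul_of_nonneg_left hkey hα0.le
      _ = 80 * α * x * L := by ring
  have hScard : (S.card : ℝ) < 80 * α * x := lt_of_mul_lt_mul_right hfin hLpos.le
  rw [hB]
  push_cast
  linarith
end

section
/- For every integer s ≥ 1 there exists N₀ such that for every N ≥ N₀ the following holds: every 3-graph H on N vertices with δ₁(H) ≥ C(s−1,2) + (s−1)·(N−s) + 1 (equivalently, δ₁(H) ≥ C(N−1,2) − C(N−s,2) + 1) contains a matching of size s. -/
lemma aux_choose2_add (a b : ℕ) : (a + b).choose 2 = a.choose 2 + a * b + b.choose 2 := by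
  induction b with
  | zero => simp
  | succ n ih =>
    have h1 : a + (n+1) = (a+n)+1 := rfl
    have h2 := Nat.choose_succ_succ (a+n) 1
    have h3 := Nat.choose_succ_succ n 1
    simp [Nat.choose_one_right] at h2 h3
    rw [h1, h2, h3]
    have : a * (n+1) = a*n + a := by ring
    omega

lemma aux_pairs_meet {V : Type*} [DecidableEq V] (X A : Finset V) (hAX : A ⊆ X) :
    ((X.powersetCard 2).filter (fun p => (p ∩ A).Nonempty)).card
      = A.card.choose 2 + A.card * (X.card - A.card) := by
  classical
  have hsplit := Finset.card_filter_add_card_filter_not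
    (s := X.powersetCard 2) (p := fun p => (p ∩ A).Nonempty)
  have hneg : (X.powersetCard 2).filter (fun p => ¬ (p ∩ A).Nonempty)
      = (X \ A).powersetCard 2 := by
    ext p
    simp only [Finset.mem_filter, Finset.mem_powersetCard, Finset.not_nonempty_iff_eq_empty,
      Finset.subset_sdiff]
    constructor
    · rintro ⟨⟨h1, h2⟩, h3⟩
      exact ⟨⟨h1, by rwa [Finset.disjoint_iff_inter_eq_empty]⟩, h2⟩
    · rintro ⟨⟨h1, h2⟩, h3⟩
      exact ⟨⟨h1, h3⟩, by rwa [← Finset.disjoint_iff_inter_eq_empty]⟩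
  rw [hneg] at hsplit
  rw [Finset.card_powersetCard, Finset.card_powersetCard, Finset.card_sdiff_of_subset hAX] at hsplit
  have hc : A.card ≤ X.card := Finset.card_le_card hAX
  have h2 := aux_choose2_add A.card (X.card - A.card)
  rw [Nat.add_sub_cancel' hc] at h2
  omega

lemma aux_card_erase_le {V : Type*} [DecidableEq V] (w : V) (S T : Finset (Finset V))
    (hmem : ∀ e ∈ S, w ∈ e) (hmaps : ∀ e ∈ S, e.erase w ∈ T) : S.card ≤ T.card :=
  Finset.card_le_card_of_injOn (fun e => e.erase w) hmaps (fun e he f hf h => by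
    simp only at h
    rw [← Finset.insert_erase (hmem e he), ← Finset.insert_erase (hmem f hf), h])

lemma aux_arith1 (s N b : ℕ) (hs : 2 ≤ s) (hN : 1000*s*s+1000 ≤ N) (hb : b + 2 ≤ s)
    (hmain2 : (s-1)*(N-s)+1 ≤ (s-2)*(N-1)+s*s+9*s*s+150*s) : False := by
  have hss : s ≤ s*s := Nat.le_mul_of_pos_left s (by omega)
  have hN' : 1000*(s*s)+1000 ≤ N := by rw [show 1000*(s*s) = 1000*s*s by ring]; exact hN
  have hsN : s ≤ N := by omega
  have h1N : 1 ≤ N := by omega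
  have hs1 : 1 ≤ s := by omega
  zify [hsN, h1N, hs1, hs] at hmain2
  have hNz : (1000 : ℤ) * s * s + 1000 ≤ N := by exact_mod_cast hN
  have hsz : (2 : ℤ) ≤ s := by exact_mod_cast hs
  nlinarith

lemma aux_arith2 (s N k Wc : ℕ) (hs : 1 ≤ s) (hN : 1000*s*s+1000 ≤ N)
    (hW : Wc + 3*k = N) (hks : k + 1 ≤ s) (h : (150*s+1)*Wc ≤ 63*(k*N)) : False := by
  have hz1 : (Wc : ℤ) + 3*k = N := by exact_mod_cast hW
  have hz2 : ((150:ℤ)*s+1)*Wc ≤ 63*(k*N) := by exact_mod_cast h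
  have hz3 : (k : ℤ) + 1 ≤ s := by exact_mod_cast hks
  have hz4 : (1000 : ℤ)*s*s + 1000 ≤ N := by exact_mod_cast hN
  have hz5 : (1 : ℤ) ≤ s := by exact_mod_cast hs
  have hk0 : (0 : ℤ) ≤ k := by positivity
  nlinarith [mul_le_mul_of_nonneg_right hz3 (by nlinarith : (0:ℤ) ≤ N)]

/-- For every `s ≥ 1` there is `N₀` such that every 3-graph on `N ≥ N₀` vertices with
`δ₁(H) ≥ C(s−1,2) + (s−1)(N−s) + 1` contains a matching of size `s`. -/
theorem stmt19 (s : ℕ) (hs : 1 ≤ s) :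
    ∃ N₀ : ℕ, ∀ N : ℕ, N₀ ≤ N →
    ∀ (V : Type) [Fintype V] [DecidableEq V], Fintype.card V = N →
    ∀ H : Finset (Finset V), (∀ e ∈ H, e.card = 3) →
    (∀ v : V, (s - 1).choose 2 + (s - 1) * (N - s) + 1 ≤ (H.filter fun e => v ∈ e).card) →
    ∃ M : Finset (Finset V), M ⊆ H ∧
      (M : Set (Finset V)).Pairwise (fun e f => Disjoint e f) ∧
      M.card = s := by
  refine ⟨1000*s*s + 1000, fun N hN V _ _ hcard H h3 hdeg => ?_⟩
  by_contra hno
  push_neg at hno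
  -- every matching has size < s
  have hlt : ∀ M' : Finset (Finset V), M' ⊆ H →
      (∀ e ∈ M', ∀ f ∈ M', e ≠ f → Disjoint e f) → M'.card < s := by
    intro M' hM'H hM'pw
    by_contra hge
    push_neg at hge
    obtain ⟨T, hTM', hTcard⟩ := Finset.exists_subset_card_eq hge
    exact hno T (hTM'.trans hM'H)
      (fun e he f hf hne => hM'pw e (hTM' (Finset.mem_coe.mp he)) f (hTM' (Finset.mem_coe.mp hf)) hne)
      hTcard
  -- pick a maximum matching M
  have h𝓜ne : (∅ : Finset (Finset V)) ∈ H.powerset.filter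
      (fun M => ∀ e ∈ M, ∀ f ∈ M, e ≠ f → Disjoint e f) := by
    simp
  obtain ⟨M, hMmem, hMmax⟩ := Finset.exists_max_image
    (H.powerset.filter (fun M => ∀ e ∈ M, ∀ f ∈ M, e ≠ f → Disjoint e f))
    (fun M => M.card) ⟨∅, h𝓜ne⟩
  rw [Finset.mem_filter, Finset.mem_powerset] at hMmem
  obtain ⟨hMH, hMpw⟩ := hMmem
  set k := M.card with hk
  have hle : ∀ M' : Finset (Finset V), M' ⊆ H →
      (∀ e ∈ M', ∀ f ∈ M', e ≠ f → Disjoint e f) → M'.card ≤ k := by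
    intro M' h1 h2
    exact hMmax M' (by rw [Finset.mem_filter, Finset.mem_powerset]; exact ⟨h1, h2⟩)
  have hks : k < s := hlt M hMH hMpw
  -- vertex set of M and uncovered set W
  set VM := M.biUnion (fun e => e) with hVMdef
  have hVMcard : VM.card = 3 * k := by
    rw [hVMdef, Finset.card_biUnion hMpw]
    rw [Finset.sum_congr rfl (fun e he => h3 e (hMH he))]
    simp [hk, Nat.mul_comm]
  set W := VMᶜ with hWdef
  have hWVM : ∀ x : V, x ∈ W ↔ x ∉ VM := fun x => Finset.mem_compl
  have hMsubVM : ∀ f ∈ M, ∀ x ∈ f, x ∈ VM := by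
    intro f hf x hx
    exact Finset.mem_biUnion.mpr ⟨f, hf, hx⟩
  have hWcard : W.card + 3 * k = N := by
    have h1 := Finset.card_compl (s := VM) (α := V)
    have h2 := Finset.card_le_univ VM
    rw [hcard] at h1 h2
    rw [← hWdef] at h1
    omega
  -- the augmenting helper
  have helper : ∀ (R S : Finset (Finset V)), R ⊆ M → S ⊆ H →
      (∀ a ∈ S, ∀ b ∈ S, a ≠ b → Disjoint a b) →
      (∀ a ∈ S, ∀ x ∈ a, x ∈ W ∨ ∃ g ∈ R, x ∈ g) →
      (∀ a ∈ S, ∃ x ∈ a, x ∈ W) →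
      R.card < S.card → False := by
    intro R S hRM hSH hSpw hSvert hSW hcardRS
    have hdisj : Disjoint S (M \ R) := by
      rw [Finset.disjoint_left]
      intro a haS haM
      obtain ⟨x, hxa, hxW⟩ := hSW a haS
      have hxVM : x ∈ VM := hMsubVM a (Finset.mem_sdiff.mp haM).1 x hxa
      exact (hWVM x).mp hxW hxVM
    have key : ∀ a ∈ S, ∀ b ∈ M \ R, Disjoint a b := by
      intro a ha b hb
      rw [Finset.disjoint_left]
      intro x hxa hxb
      rcases hSvert a ha x hxa with hxW | ⟨g, hgR, hxg⟩
      · exact (hWVM x).mp hxW (hMsubVM b (Finset.mem_sdiff.mp hb).1 x hxb)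
      · obtain ⟨hbM, hbR⟩ := Finset.mem_sdiff.mp hb
        have hgb : g ≠ b := fun h => hbR (h ▸ hgR)
        exact (Finset.disjoint_left.mp (hMpw g (hRM hgR) b hbM hgb) hxg) hxb
    have hM'pw : ∀ a ∈ S ∪ (M \ R), ∀ b ∈ S ∪ (M \ R), a ≠ b → Disjoint a b := by
      intro a ha b hb hab
      rw [Finset.mem_union] at ha hb
      rcases ha with ha | ha <;> rcases hb with hb | hb
      · exact hSpw a ha b hb hab
      · exact key a ha b hb
      · exact (key b hb a ha).symm
      · exact hMpw a (Finset.mem_sdiff.mp ha).1 b (Finset.mem_sdiff.mp hb).1 hab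
    have hM'H : S ∪ (M \ R) ⊆ H :=
      Finset.union_subset hSH ((Finset.sdiff_subset).trans hMH)
    have hcard' : (S ∪ (M \ R)).card = S.card + (k - R.card) := by
      rw [Finset.card_union_of_disjoint hdisj, Finset.card_sdiff_of_subset hRM]
    have hRk : R.card ≤ k := Finset.card_le_card hRM
    have := hle _ hM'H hM'pw
    omega
  -- no edge avoids VM
  have lemA : ∀ e ∈ H, (e ∩ VM).Nonempty := by
    intro e he
    rcases Finset.eq_empty_or_nonempty (e ∩ VM) with h | h
    · exfalso
      refine helper ∅ {e} (Finset.empty_subset _) (by simpa using he) (by simp) ?_ ?_ (by simp)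
      · intro a ha x hx
        rw [Finset.mem_singleton] at ha
        rw [ha] at hx
        left
        rw [hWVM]
        intro hxVM
        exact Finset.notMem_empty x (h ▸ Finset.mem_inter.mpr ⟨hx, hxVM⟩)
      · intro a ha
        rw [Finset.mem_singleton] at ha
        rw [ha]
        have hne : e.Nonempty := Finset.card_pos.mp (by rw [h3 e he]; norm_num)
        obtain ⟨x, hx⟩ := hne
        refine ⟨x, hx, ?_⟩
        rw [hWVM]
        intro hxVM
        exact Finset.notMem_empty x (h ▸ Finset.mem_inter.mpr ⟨hx, hxVM⟩)
    · exact h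
  -- links into W
  set LW := fun u : V => H.filter (fun e => u ∈ e ∧ e.erase u ⊆ W) with hLWdef
  set B := VM.filter (fun u => 7 * N < (LW u).card) with hBdef
  have hBsubVM : B ⊆ VM := Finset.filter_subset _ _
  have hLWmem : ∀ u : V, ∀ e : Finset V, e ∈ LW u ↔ e ∈ H ∧ u ∈ e ∧ e.erase u ⊆ W := by
    intro u e
    simp [hLWdef, Finset.mem_filter]
  -- big vertices can avoid small sets
  have lemB : ∀ u ∈ B, ∀ A : Finset V, A.card ≤ 6 →
      ∃ e ∈ LW u, ∀ a ∈ e.erase u, a ∉ A := by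
    intro u huB A hA6
    by_contra hcon
    push_neg at hcon
    have hbig : 7 * N < (LW u).card := (Finset.mem_filter.mp huB).2
    have hcount : (LW u).card ≤
        ((Finset.univ.powersetCard 2).filter (fun p => (p ∩ A).Nonempty)).card := by
      apply aux_card_erase_le u
      · intro e he
        exact ((hLWmem u e).mp he).2.1
      · intro e he
        obtain ⟨heH, hue, hsub⟩ := (hLWmem u e).mp he
        rw [Finset.mem_filter, Finset.mem_powersetCard]
        refine ⟨⟨Finset.subset_univ _, ?_⟩, ?_⟩
        · rw [Finset.card_erase_of_mem hue, h3 e heH]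
        · obtain ⟨a, ha1, ha2⟩ := hcon e he
          exact ⟨a, Finset.mem_inter.mpr ⟨ha1, ha2⟩⟩
    have hmeet := aux_pairs_meet Finset.univ A (Finset.subset_univ A)
    rw [Finset.card_univ, hcard] at hmeet
    have h1 : A.card.choose 2 ≤ 15 := by
      calc A.card.choose 2 ≤ Nat.choose 6 2 := Nat.choose_le_choose 2 hA6
      _ = 15 := by decide
    have h2 : A.card * (N - A.card) ≤ 6 * N := Nat.mul_le_mul hA6 (Nat.sub_le N A.card)
    have hN15 : 15 ≤ N := by nlinarith
    omega
  -- each edge of M contains at most one big vertex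
  have lemC : ∀ f ∈ M, (f ∩ B).card ≤ 1 := by
    intro f hf
    by_contra hcon
    push_neg at hcon
    obtain ⟨u, hu, v, hv, huv⟩ := Finset.one_lt_card.mp hcon
    have huf : u ∈ f := (Finset.mem_inter.mp hu).1
    have huB : u ∈ B := (Finset.mem_inter.mp hu).2
    have hvf : v ∈ f := (Finset.mem_inter.mp hv).1
    have hvB : v ∈ B := (Finset.mem_inter.mp hv).2
    have huVM : u ∈ VM := hMsubVM f hf u huf
    have hvVM : v ∈ VM := hMsubVM f hf v hvf
    obtain ⟨e1, he1, havoid1⟩ := lemB u huB ∅ (by simp)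
    obtain ⟨e1H, hue1, he1W⟩ := (hLWmem u e1).mp he1
    obtain ⟨e2, he2, havoid2⟩ := lemB v hvB e1 (by rw [h3 e1 e1H]; norm_num)
    obtain ⟨e2H, hve2, he2W⟩ := (hLWmem v e2).mp he2
    have hne : e1 ≠ e2 := by
      intro h
      rw [← h] at he2W
      exact (hWVM u).mp (he2W (Finset.mem_erase.mpr ⟨huv, hue1⟩)) huVM
    have hd12 : Disjoint e1 e2 := by
      rw [Finset.disjoint_left]
      intro x hx1 hx2
      by_cases hxu : x = u
      · subst hxu
        by_cases hxv : x = v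
        · exact huv (hxv ▸ rfl)
        · exact (hWVM x).mp (he2W (Finset.mem_erase.mpr ⟨hxv, hx2⟩)) huVM
      · have hxe1 : x ∈ e1.erase u := Finset.mem_erase.mpr ⟨hxu, hx1⟩
        by_cases hxv : x = v
        · exact (hWVM x).mp (he1W hxe1) (hxv ▸ hvVM)
        · exact havoid2 x (Finset.mem_erase.mpr ⟨hxv, hx2⟩) hx1
    apply helper {f} {e1, e2} (by simpa using hf)
      (by intro a ha; rcases Finset.mem_insert.mp ha with h | h
          · exact h ▸ e1H
          · exact (Finset.mem_singleton.mp h) ▸ e2H)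
      (by intro a ha b hb hab
          rcases Finset.mem_insert.mp ha with h | h <;>
            rcases Finset.mem_insert.mp hb with h' | h'
          · exact absurd (h.trans h'.symm) hab
          · rw [Finset.mem_singleton] at h'
            rw [h, h']
            exact hd12
          · rw [Finset.mem_singleton] at h
            rw [h, h']
            exact hd12.symm
          · rw [Finset.mem_singleton] at h h'
            exact absurd (h.trans h'.symm) hab)
      ?_ ?_ (by rw [Finset.card_singleton, Finset.card_insert_of_notMem (by simpa using hne),
              Finset.card_singleton]; omega)
    · intro a ha x hx
      rcases Finset.mem_insert.mp ha with h | h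
      · subst h
        by_cases hxu : x = u
        · exact Or.inr ⟨f, Finset.mem_singleton_self f, hxu ▸ huf⟩
        · exact Or.inl (he1W (Finset.mem_erase.mpr ⟨hxu, hx⟩))
      · rw [Finset.mem_singleton] at h
        subst h
        by_cases hxv : x = v
        · exact Or.inr ⟨f, Finset.mem_singleton_self f, hxv ▸ hvf⟩
        · exact Or.inl (he2W (Finset.mem_erase.mpr ⟨hxv, hx⟩))
    · intro a ha
      rcases Finset.mem_insert.mp ha with h | h
      · subst h
        have hec : (a.erase u).card = 2 := by rw [Finset.card_erase_of_mem hue1, h3 a e1H]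
        obtain ⟨x, hx⟩ := Finset.card_pos.mp (by rw [hec]; norm_num : 0 < (a.erase u).card)
        exact ⟨x, Finset.mem_of_mem_erase hx, he1W hx⟩
      · rw [Finset.mem_singleton] at h
        subst h
        have hec : (a.erase v).card = 2 := by rw [Finset.card_erase_of_mem hve2, h3 a e2H]
        obtain ⟨x, hx⟩ := Finset.card_pos.mp (by rw [hec]; norm_num : 0 < (a.erase v).card)
        exact ⟨x, Finset.mem_of_mem_erase hx, he2W hx⟩
  -- number of big vertices is at most k
  set P := M.filter (fun f => (f ∩ B).Nonempty) with hPdef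
  have hPM : P ⊆ M := Finset.filter_subset _ _
  have hBsubBi : B ⊆ P.biUnion (fun f => f ∩ B) := by
    intro u hu
    have huVM : u ∈ VM := hBsubVM hu
    obtain ⟨f, hf, huf⟩ := Finset.mem_biUnion.mp huVM
    refine Finset.mem_biUnion.mpr ⟨f, ?_, Finset.mem_inter.mpr ⟨huf, hu⟩⟩
    exact Finset.mem_filter.mpr ⟨hf, ⟨u, Finset.mem_inter.mpr ⟨huf, hu⟩⟩⟩
  have hbP : B.card ≤ P.card := by
    calc B.card ≤ (P.biUnion (fun f => f ∩ B)).card := Finset.card_le_card hBsubBi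
      _ ≤ ∑ f ∈ P, (f ∩ B).card := Finset.card_biUnion_le
      _ ≤ ∑ f ∈ P, 1 := Finset.sum_le_sum (fun f hf => lemC f (hPM hf))
      _ = P.card := by simp
  have hbk : B.card ≤ k := hbP.trans (Finset.card_le_card hPM)
  -- bound on edges at w meeting B, for any uncovered w
  have hE1gen : ∀ w ∈ W, ((H.filter (fun e => w ∈ e)).filter
      (fun e => (e ∩ B).Nonempty)).card ≤ B.card.choose 2 + B.card * (N - 1 - B.card) := by
    intro w hwW
    have hwB : w ∉ B := fun h => (hWVM w).mp hwW (hBsubVM h)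
    have hX : (Finset.univ.erase w).card = N - 1 := by
      rw [Finset.card_erase_of_mem (Finset.mem_univ w), Finset.card_univ, hcard]
    have hBX : B ⊆ Finset.univ.erase w := fun b hb =>
      Finset.mem_erase.mpr ⟨fun h => hwB (h ▸ hb), Finset.mem_univ b⟩
    have hpm := aux_pairs_meet (Finset.univ.erase w) B hBX
    rw [hX] at hpm
    rw [← hpm]
    apply aux_card_erase_le w
    · intro e he
      exact (Finset.mem_filter.mp (Finset.mem_filter.mp he).1).2
    · intro e he
      obtain ⟨heDw, heB⟩ := Finset.mem_filter.mp he
      obtain ⟨heH, hwe⟩ := Finset.mem_filter.mp heDw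
      rw [Finset.mem_filter, Finset.mem_powersetCard]
      refine ⟨⟨?_, ?_⟩, ?_⟩
      · exact fun x hx => Finset.mem_erase.mpr ⟨(Finset.mem_erase.mp hx).1, Finset.mem_univ x⟩
      · rw [Finset.card_erase_of_mem hwe, h3 e heH]
      · obtain ⟨x, hx⟩ := heB
        obtain ⟨hxe, hxB⟩ := Finset.mem_inter.mp hx
        have hxw : x ≠ w := fun h => hwB (h ▸ hxB)
        exact ⟨x, Finset.mem_inter.mpr ⟨Finset.mem_erase.mpr ⟨hxw, hxe⟩, hxB⟩⟩
  -- double counting for links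
  have hdouble : ∀ u : V, ∑ w ∈ W, ((LW u).filter (fun e => w ∈ e)).card ≤ 3 * (LW u).card := by
    intro u
    have h1 : ∑ w ∈ W, ((LW u).filter (fun e => w ∈ e)).card
        = ∑ e ∈ LW u, (W.filter (fun w => w ∈ e)).card := by
      simp only [Finset.card_filter]
      exact Finset.sum_comm
    rw [h1]
    calc ∑ e ∈ LW u, (W.filter (fun w => w ∈ e)).card ≤ ∑ e ∈ LW u, 3 := by
          apply Finset.sum_le_sum
          intro e he
          have hsub : W.filter (fun w => w ∈ e) ⊆ e := fun w hw => (Finset.mem_filter.mp hw).2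
          exact (Finset.card_le_card hsub).trans_eq (h3 e ((hLWmem u e).mp he).1)
      _ = 3 * (LW u).card := by rw [Finset.sum_const, smul_eq_mul, mul_comm]
  -- choose an uncovered vertex with few small-link edges
  have hWlow : ∃ w ∈ W, ∑ u ∈ VM \ B, ((LW u).filter (fun e => w ∈ e)).card ≤ 150 * s := by
    by_contra hc
    push_neg at hc
    have htot : (150 * s + 1) * W.card
        ≤ ∑ w ∈ W, ∑ u ∈ VM \ B, ((LW u).filter (fun e => w ∈ e)).card := by
      calc (150 * s + 1) * W.card = ∑ _w ∈ W, (150 * s + 1) := by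
            rw [Finset.sum_const, smul_eq_mul, mul_comm]
        _ ≤ _ := Finset.sum_le_sum (fun w hw => hc w hw)
    rw [Finset.sum_comm] at htot
    have hbound : ∑ u ∈ VM \ B, ∑ w ∈ W, ((LW u).filter (fun e => w ∈ e)).card
        ≤ (3 * k) * (21 * N) := by
      calc ∑ u ∈ VM \ B, ∑ w ∈ W, ((LW u).filter (fun e => w ∈ e)).card
          ≤ ∑ u ∈ VM \ B, 3 * (LW u).card := Finset.sum_le_sum (fun u _ => hdouble u)
        _ ≤ ∑ _u ∈ VM \ B, 21 * N := by
            apply Finset.sum_le_sum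
            intro u hu
            obtain ⟨huVM, huB⟩ := Finset.mem_sdiff.mp hu
            have : ¬ (7 * N < (LW u).card) := fun h => huB (Finset.mem_filter.mpr ⟨huVM, h⟩)
            omega
        _ ≤ (3 * k) * (21 * N) := by
            rw [Finset.sum_const, smul_eq_mul]
            have : (VM \ B).card ≤ 3 * k := hVMcard ▸ Finset.card_le_card Finset.sdiff_subset
            exact Nat.mul_le_mul_right _ this
    have hfinal : (150 * s + 1) * W.card ≤ 63 * (k * N) := by
      calc (150 * s + 1) * W.card ≤ (3 * k) * (21 * N) := htot.trans hbound
        _ = 63 * (k * N) := by ring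
    exact aux_arith2 s N k W.card hs hN hWcard hks hfinal
  obtain ⟨w, hwW, hwsum⟩ := hWlow
  -- decompose the degree of w
  have hdegw : (s-1).choose 2 + (s-1)*(N-s) + 1 ≤ (H.filter (fun e => w ∈ e)).card := hdeg w
  have hsplit1 := Finset.card_filter_add_card_filter_not
    (s := H.filter (fun e => w ∈ e)) (p := fun e => (e ∩ B).Nonempty)
  have hsplit2 := Finset.card_filter_add_card_filter_not
    (s := (H.filter (fun e => w ∈ e)).filter (fun e => ¬ (e ∩ B).Nonempty))
    (p := fun e => e.erase w ⊆ VM)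
  have hE1 := hE1gen w hwW
  -- E2 : both other vertices covered
  have hE2 : (((H.filter (fun e => w ∈ e)).filter (fun e => ¬ (e ∩ B).Nonempty)).filter
      (fun e => e.erase w ⊆ VM)).card ≤ 9 * s * s := by
    have h1 : (((H.filter (fun e => w ∈ e)).filter (fun e => ¬ (e ∩ B).Nonempty)).filter
        (fun e => e.erase w ⊆ VM)).card ≤ (VM.powersetCard 2).card := by
      apply aux_card_erase_le w
      · intro e he
        exact (Finset.mem_filter.mp (Finset.mem_filter.mp (Finset.mem_filter.mp he).1).1).2
      · intro e he
        obtain ⟨he', hsub⟩ := Finset.mem_filter.mp he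
        have hwe : w ∈ e := (Finset.mem_filter.mp (Finset.mem_filter.mp he').1).2
        have heH : e ∈ H := (Finset.mem_filter.mp (Finset.mem_filter.mp he').1).1
        rw [Finset.mem_powersetCard]
        exact ⟨hsub, by rw [Finset.card_erase_of_mem hwe, h3 e heH]⟩
    rw [Finset.card_powersetCard, hVMcard] at h1
    have h2 : (3*k).choose 2 ≤ (3*s).choose 2 := Nat.choose_le_choose 2 (by omega)
    have h3' : (3*s).choose 2 ≤ 9 * s * s := by
      rw [Nat.choose_two_right]
      calc 3 * s * (3 * s - 1) / 2 ≤ 3 * s * (3 * s - 1) := Nat.div_le_self _ 2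
        _ ≤ 3 * s * (3 * s) := Nat.mul_le_mul_left _ (by omega)
        _ = 9 * s * s := by ring
    omega
  -- E3 : an uncovered partner, via small links
  have hE3 : (((H.filter (fun e => w ∈ e)).filter (fun e => ¬ (e ∩ B).Nonempty)).filter
      (fun e => ¬ e.erase w ⊆ VM)).card ≤ 150 * s := by
    refine le_trans (le_trans (Finset.card_le_card ?_) Finset.card_biUnion_le) hwsum
    intro e he
    obtain ⟨he', hnsub⟩ := Finset.mem_filter.mp he
    obtain ⟨he'', hnB⟩ := Finset.mem_filter.mp he'
    obtain ⟨heH, hwe⟩ := Finset.mem_filter.mp he''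
    obtain ⟨u, hu⟩ := lemA e heH
    obtain ⟨hue, huVM⟩ := Finset.mem_inter.mp hu
    obtain ⟨x, hxew, hxVM⟩ := Finset.not_subset.mp hnsub
    have huB : u ∉ B := fun h => hnB ⟨u, Finset.mem_inter.mpr ⟨hue, h⟩⟩
    have huw : u ≠ w := fun h => (hWVM w).mp hwW (h ▸ huVM)
    have hxu : x ≠ u := fun h => hxVM (h ▸ huVM)
    have hsubW : e.erase u ⊆ W := by
      intro y hy
      obtain ⟨hyu, hye⟩ := Finset.mem_erase.mp hy
      by_cases hyw : y = w
      · exact hyw ▸ hwW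
      · rw [hWVM]
        intro hyVM
        have hyx : y ≠ x := fun h => hxVM (h ▸ hyVM)
        have hset : ({u, y, x} : Finset V) ⊆ e.erase w := by
          intro z hz
          rcases Finset.mem_insert.mp hz with h | h
          · exact h ▸ Finset.mem_erase.mpr ⟨huw, hue⟩
          · rcases Finset.mem_insert.mp h with h' | h'
            · exact h' ▸ Finset.mem_erase.mpr ⟨hyw, hye⟩
            · exact (Finset.mem_singleton.mp h') ▸ hxew
        have hcard3 : ({u, y, x} : Finset V).card = 3 := by
          rw [Finset.card_insert_of_notMem (by
              intro h
              rcases Finset.mem_insert.mp h with h' | h'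
              · exact hyu h'.symm
              · exact hxu ((Finset.mem_singleton.mp h').symm)),
            Finset.card_insert_of_notMem (by
              intro h
              exact hyx (Finset.mem_singleton.mp h)), Finset.card_singleton]
        have := Finset.card_le_card hset
        rw [hcard3, Finset.card_erase_of_mem hwe, h3 e heH] at this
        omega
    refine Finset.mem_biUnion.mpr ⟨u, Finset.mem_sdiff.mpr ⟨huVM, huB⟩, ?_⟩
    exact Finset.mem_filter.mpr ⟨(hLWmem u e).mpr ⟨heH, hue, hsubW⟩, hwe⟩
  have hmain : (s-1).choose 2 + (s-1)*(N-s) + 1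
      ≤ (B.card.choose 2 + B.card * (N - 1 - B.card)) + 9*s*s + 150*s := by
    omega
  -- case analysis on the number of big vertices
  by_cases hcase : B.card + 2 ≤ s
  · -- few big vertices: degree too small
    have hb2 : B.card.choose 2 ≤ s * s := by
      rw [Nat.choose_two_right]
      calc B.card * (B.card - 1) / 2 ≤ B.card * B.card := le_trans (Nat.div_le_self _ 2)
            (Nat.mul_le_mul_left _ (by omega))
        _ ≤ s * s := Nat.mul_le_mul (by omega) (by omega)
    have hb3 : B.card * (N - 1 - B.card) ≤ (s-2) * (N-1) :=
      Nat.mul_le_mul (by omega) (by omega)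
    have hmain2 : (s-1) * (N-s) + 1 ≤ (s-2) * (N-1) + s*s + 9*s*s + 150*s := by omega
    exact aux_arith1 s N B.card (by omega) hN hcase hmain2
  · -- tight case: B.card = s - 1 = k, each edge of M has exactly one big vertex
    have hsN : s ≤ N := by
      have hss : s ≤ s*s := Nat.le_mul_of_pos_left s (by omega)
      have hN' : 1000*(s*s)+1000 ≤ N := by rw [show 1000*(s*s) = 1000*s*s by ring]; exact hN
      omega
    have hPeq : P = M := Finset.eq_of_subset_of_card_le hPM (by omega)
    have hMbig : ∀ f ∈ M, ∃ u, u ∈ f ∩ B := by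
      intro f hf
      have hfP : f ∈ P := hPeq ▸ hf
      exact (Finset.mem_filter.mp hfP).2
    -- every uncovered vertex has an edge avoiding all big vertices
    have havoidB : ∀ w' ∈ W, ∃ e ∈ H, w' ∈ e ∧ ∀ x ∈ e, x ∉ B := by
      intro w' hw'
      have h1 := hE1gen w' hw'
      have h2 := hdeg w'
      have hsp := Finset.card_filter_add_card_filter_not
        (s := H.filter (fun e => w' ∈ e)) (p := fun e => (e ∩ B).Nonempty)
      have heq : B.card.choose 2 + B.card * (N - 1 - B.card)
          = (s-1).choose 2 + (s-1)*(N-s) := by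
        have hb : B.card = s - 1 := by omega
        rw [hb]
        congr 2
        omega
      have hpos : 0 < ((H.filter (fun e => w' ∈ e)).filter
          (fun e => ¬ (e ∩ B).Nonempty)).card := by omega
      obtain ⟨e, he⟩ := Finset.card_pos.mp hpos
      obtain ⟨he', hnB⟩ := Finset.mem_filter.mp he
      obtain ⟨heH, hw'e⟩ := Finset.mem_filter.mp he'
      exact ⟨e, heH, hw'e, fun x hx hxB => hnB ⟨x, Finset.mem_inter.mpr ⟨hx, hxB⟩⟩⟩
    -- pick an uncovered vertex and an edge at it avoiding B
    have hWpos : 0 < W.card := by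
      have hss : s ≤ s*s := Nat.le_mul_of_pos_left s (by omega)
      have hN' : 1000*(s*s)+1000 ≤ N := by rw [show 1000*(s*s) = 1000*s*s by ring]; exact hN
      omega
    obtain ⟨w₀, hw₀⟩ := Finset.card_pos.mp hWpos
    obtain ⟨e₀, he₀H, hw₀e₀, he₀B⟩ := havoidB w₀ hw₀
    -- the edges of M meeting e₀
    set R := M.filter (fun f => ¬ Disjoint e₀ f) with hRdef
    have hRM0 : R ⊆ M := Finset.filter_subset _ _
    have hRcard : R.card ≤ 2 := by
      have h2 : ∀ f ∈ R, 1 ≤ (e₀ ∩ f).card := by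
        intro f hf
        have hnd := (Finset.mem_filter.mp hf).2
        rw [Finset.not_disjoint_iff] at hnd
        obtain ⟨x, hx1, hx2⟩ := hnd
        exact Finset.card_pos.mpr ⟨x, Finset.mem_inter.mpr ⟨hx1, hx2⟩⟩
      have h3'' : ∑ f ∈ R, (e₀ ∩ f).card = (R.biUnion (fun f => e₀ ∩ f)).card := by
        rw [Finset.card_biUnion]
        intro f hf g hg hfg
        exact (hMpw f (hRM0 hf) g (hRM0 hg) hfg).mono
          Finset.inter_subset_right Finset.inter_subset_right
      have h4 : R.biUnion (fun f => e₀ ∩ f) ⊆ e₀.erase w₀ := by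
        intro x hx
        obtain ⟨f, hf, hxf⟩ := Finset.mem_biUnion.mp hx
        obtain ⟨hx1, hx2⟩ := Finset.mem_inter.mp hxf
        refine Finset.mem_erase.mpr ⟨?_, hx1⟩
        intro h
        exact (hWVM w₀).mp hw₀ (hMsubVM f (hRM0 hf) w₀ (h ▸ hx2))
      have h5 : (e₀.erase w₀).card = 2 := by rw [Finset.card_erase_of_mem hw₀e₀, h3 e₀ he₀H]
      calc R.card = ∑ _f ∈ R, 1 := by simp
        _ ≤ ∑ f ∈ R, (e₀ ∩ f).card := Finset.sum_le_sum h2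
        _ = (R.biUnion (fun f => e₀ ∩ f)).card := h3''
        _ ≤ (e₀.erase w₀).card := Finset.card_le_card h4
        _ = 2 := h5
    have hRne : R.Nonempty := by
      obtain ⟨x, hx⟩ := lemA e₀ he₀H
      obtain ⟨hx1, hx2⟩ := Finset.mem_inter.mp hx
      obtain ⟨f, hf, hxf⟩ := Finset.mem_biUnion.mp hx2
      exact ⟨f, Finset.mem_filter.mpr ⟨hf, Finset.not_disjoint_iff.mpr ⟨x, hx1, hxf⟩⟩⟩
    have he₀vert : ∀ x ∈ e₀, x ∈ W ∨ ∃ g ∈ R, x ∈ g := by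
      intro x hx
      by_cases hxW : x ∈ W
      · exact Or.inl hxW
      · have hxVM : x ∈ VM := by
          by_contra h
          exact hxW ((hWVM x).mpr h)
        obtain ⟨f, hf, hxf⟩ := Finset.mem_biUnion.mp hxVM
        exact Or.inr ⟨f, Finset.mem_filter.mpr ⟨hf, Finset.not_disjoint_iff.mpr ⟨x, hx, hxf⟩⟩, hxf⟩
    have hR12 : R.card = 1 ∨ R.card = 2 := by
      have := Finset.card_pos.mpr hRne
      omega
    rcases hR12 with hR1 | hR2
    · -- R = {e1}
      obtain ⟨e1, hRe⟩ := Finset.card_eq_one.mp hR1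
      have he1R : e1 ∈ R := by rw [hRe]; simp
      have he1M : e1 ∈ M := hRM0 he1R
      obtain ⟨u1, hu1⟩ := hMbig e1 he1M
      obtain ⟨hu1e1, hu1B⟩ := Finset.mem_inter.mp hu1
      obtain ⟨f1, hf1, hav1⟩ := lemB u1 hu1B e₀ (by rw [h3 e₀ he₀H]; norm_num)
      obtain ⟨f1H, hu1f1, hf1W⟩ := (hLWmem u1 f1).mp hf1
      have hu1e₀ : u1 ∉ e₀ := fun h => he₀B u1 h hu1B
      have hd01 : Disjoint e₀ f1 := by
        rw [Finset.disjoint_right]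
        intro x hxf1 hxe₀
        by_cases hxu : x = u1
        · exact hu1e₀ (hxu ▸ hxe₀)
        · exact hav1 x (Finset.mem_erase.mpr ⟨hxu, hxf1⟩) hxe₀
      have hne01 : e₀ ≠ f1 := fun h => hu1e₀ (h ▸ hu1f1)
      apply helper R {e₀, f1} hRM0
      · intro a ha
        simp only [Finset.mem_insert, Finset.mem_singleton] at ha
        rcases ha with rfl | rfl
        · exact he₀H
        · exact f1H
      · intro a ha b hb hab
        simp only [Finset.mem_insert, Finset.mem_singleton] at ha hb
        rcases ha with rfl | rfl <;> rcases hb with rfl | rfl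
        · exact absurd rfl hab
        · exact hd01
        · exact hd01.symm
        · exact absurd rfl hab
      · intro a ha x hx
        simp only [Finset.mem_insert, Finset.mem_singleton] at ha
        rcases ha with rfl | rfl
        · exact he₀vert x hx
        · by_cases hxu : x = u1
          · exact Or.inr ⟨e1, he1R, hxu ▸ hu1e1⟩
          · exact Or.inl (hf1W (Finset.mem_erase.mpr ⟨hxu, hx⟩))
      · intro a ha
        simp only [Finset.mem_insert, Finset.mem_singleton] at ha
        rcases ha with rfl | rfl
        · exact ⟨w₀, hw₀e₀, hw₀⟩
        · have hec : (a.erase u1).card = 2 := by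
            rw [Finset.card_erase_of_mem hu1f1, h3 a f1H]
          obtain ⟨x, hx⟩ := Finset.card_pos.mp (by rw [hec]; norm_num : 0 < (a.erase u1).card)
          exact ⟨x, Finset.mem_of_mem_erase hx, hf1W hx⟩
      · rw [hR1, Finset.card_insert_of_notMem (by simpa using hne01), Finset.card_singleton]
        omega
    · -- R = {e1, e2}
      obtain ⟨e1, e2, hne12, hRe⟩ := Finset.card_eq_two.mp hR2
      have he1R : e1 ∈ R := by rw [hRe]; simp
      have he2R : e2 ∈ R := by rw [hRe]; simp
      have he1M : e1 ∈ M := hRM0 he1R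
      have he2M : e2 ∈ M := hRM0 he2R
      obtain ⟨u1, hu1⟩ := hMbig e1 he1M
      obtain ⟨hu1e1, hu1B⟩ := Finset.mem_inter.mp hu1
      obtain ⟨u2, hu2⟩ := hMbig e2 he2M
      obtain ⟨hu2e2, hu2B⟩ := Finset.mem_inter.mp hu2
      have hd12M : Disjoint e1 e2 := hMpw e1 he1M e2 he2M hne12
      have hu21 : u2 ≠ u1 := by
        intro h
        exact (Finset.disjoint_left.mp hd12M hu1e1) (h ▸ hu2e2)
      have hu1VM : u1 ∈ VM := hMsubVM e1 he1M u1 hu1e1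
      have hu2VM : u2 ∈ VM := hMsubVM e2 he2M u2 hu2e2
      obtain ⟨f1, hf1, hav1⟩ := lemB u1 hu1B e₀ (by rw [h3 e₀ he₀H]; norm_num)
      obtain ⟨f1H, hu1f1, hf1W⟩ := (hLWmem u1 f1).mp hf1
      obtain ⟨f2, hf2, hav2⟩ := lemB u2 hu2B (e₀ ∪ f1) (by
        refine le_trans (Finset.card_union_le _ _) ?_
        rw [h3 e₀ he₀H, h3 f1 f1H])
      obtain ⟨f2H, hu2f2, hf2W⟩ := (hLWmem u2 f2).mp hf2
      have hu1e₀ : u1 ∉ e₀ := fun h => he₀B u1 h hu1B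
      have hu2e₀ : u2 ∉ e₀ := fun h => he₀B u2 h hu2B
      have hu2f1 : u2 ∉ f1 := by
        intro h
        by_cases hx : u2 = u1
        · exact hu21 hx
        · exact (hWVM u2).mp (hf1W (Finset.mem_erase.mpr ⟨hx, h⟩)) hu2VM
      have hd01 : Disjoint e₀ f1 := by
        rw [Finset.disjoint_right]
        intro x hxf1 hxe₀
        by_cases hxu : x = u1
        · exact hu1e₀ (hxu ▸ hxe₀)
        · exact hav1 x (Finset.mem_erase.mpr ⟨hxu, hxf1⟩) hxe₀
      have hd02 : Disjoint e₀ f2 := by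
        rw [Finset.disjoint_right]
        intro x hxf2 hxe₀
        by_cases hxu : x = u2
        · exact hu2e₀ (hxu ▸ hxe₀)
        · exact hav2 x (Finset.mem_erase.mpr ⟨hxu, hxf2⟩) (Finset.mem_union_left _ hxe₀)
      have hd12 : Disjoint f1 f2 := by
        rw [Finset.disjoint_right]
        intro x hxf2 hxf1
        by_cases hxu : x = u2
        · exact hu2f1 (hxu ▸ hxf1)
        · exact hav2 x (Finset.mem_erase.mpr ⟨hxu, hxf2⟩) (Finset.mem_union_right _ hxf1)
      have hne01 : e₀ ≠ f1 := fun h => hu1e₀ (h ▸ hu1f1)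
      have hne02 : e₀ ≠ f2 := fun h => hu2e₀ (h ▸ hu2f2)
      have hnef12 : f1 ≠ f2 := fun h => hu2f1 (h ▸ hu2f2)
      apply helper R {e₀, f1, f2} hRM0
      · intro a ha
        simp only [Finset.mem_insert, Finset.mem_singleton] at ha
        rcases ha with rfl | rfl | rfl
        · exact he₀H
        · exact f1H
        · exact f2H
      · intro a ha b hb hab
        simp only [Finset.mem_insert, Finset.mem_singleton] at ha hb
        rcases ha with rfl | rfl | rfl <;> rcases hb with rfl | rfl | rfl <;>
          first
          | exact absurd rfl hab
          | exact hd01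
          | exact hd02
          | exact hd12
          | exact hd01.symm
          | exact hd02.symm
          | exact hd12.symm
      · intro a ha x hx
        simp only [Finset.mem_insert, Finset.mem_singleton] at ha
        rcases ha with rfl | rfl | rfl
        · exact he₀vert x hx
        · by_cases hxu : x = u1
          · exact Or.inr ⟨e1, he1R, hxu ▸ hu1e1⟩
          · exact Or.inl (hf1W (Finset.mem_erase.mpr ⟨hxu, hx⟩))
        · by_cases hxu : x = u2
          · exact Or.inr ⟨e2, he2R, hxu ▸ hu2e2⟩
          · exact Or.inl (hf2W (Finset.mem_erase.mpr ⟨hxu, hx⟩))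
      · intro a ha
        simp only [Finset.mem_insert, Finset.mem_singleton] at ha
        rcases ha with rfl | rfl | rfl
        · exact ⟨w₀, hw₀e₀, hw₀⟩
        · have hec : (a.erase u1).card = 2 := by
            rw [Finset.card_erase_of_mem hu1f1, h3 a f1H]
          obtain ⟨x, hx⟩ := Finset.card_pos.mp (by rw [hec]; norm_num : 0 < (a.erase u1).card)
          exact ⟨x, Finset.mem_of_mem_erase hx, hf1W hx⟩
        · have hec : (a.erase u2).card = 2 := by
            rw [Finset.card_erase_of_mem hu2f2, h3 a f2H]
          obtain ⟨x, hx⟩ := Finset.card_pos.mp (by rw [hec]; norm_num : 0 < (a.erase u2).card)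
          exact ⟨x, Finset.mem_of_mem_erase hx, hf2W hx⟩
      · have hc1 : f1 ∉ ({f2} : Finset (Finset V)) := by simpa using hnef12
        have hc2 : e₀ ∉ ({f1, f2} : Finset (Finset V)) := by simp [hne01, hne02]
        rw [hR2, Finset.card_insert_of_notMem hc2, Finset.card_insert_of_notMem hc1,
          Finset.card_singleton]
        omega
end
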